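/- arXiv:1812.11205 — 10 statements merged into one kernel-verified Lean document; each statement's English description precedes it below -/
import Mathlib

section
/- Let (c_n) and (β_n) be sequences with c_n > 0 and 0 < β_n < 1 for all n ≥ 1, and let (a_n) be a sequence of nonzero complex numbers satisfying for all n ≥ 1: |a_{2n}| ≥ (c_n+1)/(1−β_n) and |a_{2n+1}| ≤ min{c_n, c_{n+1}, β_n β_{n+1}(c_{n+1}+1)/(4(1−β_{n+1})), β_n β_{n+1}(c_n+1)/(4(1−β_n))}. Then the continued fraction K_{n=1}^∞ a_n/1 converges to a finite value, i.e., the sequence of approximants A_N/B_N converges in ℂ. -/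
open Filter Topology Finset

/-- Śleszyński–Pringsheim style growth induction. -/
lemma aux_growth (X t : ℕ → ℝ) (h0 : X 0 = 1) (h1 : 2 ≤ X 1)
    (ht0 : ∀ n, 0 ≤ t n) (ht1 : ∀ n, t n ≤ 1)
    (hrec : ∀ n, 2 * X (n+1) - t n * X n ≤ X (n+2)) :
    ∀ n, (∏ k ∈ range n, t k) ≤ X (n+1) - X n ∧
      1 + (∑ k ∈ range (n+1), ∏ j ∈ range k, t j) ≤ X (n+1) := by
  intro n
  induction n with
  | zero =>
    constructor
    · rw [h0]; simpa using (by linarith : (1:ℝ) ≤ X 1 - 1)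
    · norm_num
      linarith
  | succ n ih =>
    obtain ⟨iha, ihb⟩ := ih
    have hTnn : (0:ℝ) ≤ ∏ k ∈ range n, t k := Finset.prod_nonneg (fun k _ => ht0 k)
    have hXnn : (0:ℝ) ≤ X (n+1) := by
      have : (0:ℝ) ≤ ∑ k ∈ range (n+1), ∏ j ∈ range k, t j :=
        Finset.sum_nonneg (fun k _ => Finset.prod_nonneg (fun j _ => ht0 j))
      linarith
    have key : (∏ k ∈ range (n+1), t k) ≤ X (n+2) - X (n+1) := by
      have h2 := hrec n
      have h4 : t n * (∏ k ∈ range n, t k) ≤ t n * (X (n+1) - X n) :=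
        mul_le_mul_of_nonneg_left iha (ht0 n)
      have h3 : 0 ≤ (1 - t n) * X (n+1) := mul_nonneg (by linarith [ht1 n]) hXnn
      rw [Finset.prod_range_succ]
      nlinarith [ht0 n, ht1 n]
    refine ⟨key, ?_⟩
    rw [Finset.sum_range_succ]
    linarith

lemma aux_tele_summable (U : ℕ → ℝ) (h1 : ∀ n, 1 ≤ U n) (hm : Monotone U) :
    Summable (fun n => 1/U n - 1/U (n+1)) := by
  apply summable_of_sum_range_le (c := 1)
  · intro n
    have h1n : (0:ℝ) < U n := lt_of_lt_of_le one_pos (h1 n)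
    have h2n : (0:ℝ) < U (n+1) := lt_of_lt_of_le one_pos (h1 (n+1))
    have := one_div_le_one_div_of_le h1n (hm (Nat.le_succ n))
    linarith
  · intro n
    rw [Finset.sum_range_sub' (fun i => 1 / U i) n]
    have h1n : (0:ℝ) < U n := lt_of_lt_of_le one_pos (h1 n)
    have : (0:ℝ) ≤ 1 / U n := by positivity
    have h0 : 1 / U 0 ≤ 1 := by
      rw [div_le_one (lt_of_lt_of_le one_pos (h1 0))]; exact h1 0
    linarith

lemma aux_ratio_tendsto (T : ℕ → ℝ) (hT0 : ∀ n, 0 ≤ T n) (hTa : Antitone T) :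
    Tendsto (fun n => T n / (1 + ∑ k ∈ range n, T k)) atTop (𝓝 0) := by
  have hU1 : ∀ n, (1:ℝ) ≤ 1 + ∑ k ∈ range n, T k := fun n => by
    have : (0:ℝ) ≤ ∑ k ∈ range n, T k := Finset.sum_nonneg fun k _ => hT0 k
    linarith
  have hbdd : BddBelow (Set.range T) := ⟨0, fun x ⟨n, hn⟩ => hn ▸ hT0 n⟩
  have htend := tendsto_atTop_ciInf hTa hbdd
  have hl0 : 0 ≤ ⨅ i, T i := le_ciInf hT0
  rcases eq_or_lt_of_le hl0 with hcase | hcase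
  · apply squeeze_zero (fun n => div_nonneg (hT0 n) (by linarith [hU1 n])) (fun n => ?_) (hcase ▸ htend)
    exact div_le_self (hT0 n) (hU1 n)
  · set l := ⨅ i, T i with hl
    have hTl : ∀ n, l ≤ T n := fun n => ciInf_le hbdd n
    have hsum : ∀ n : ℕ, (n:ℝ) * l ≤ ∑ k ∈ range n, T k := by
      intro n
      calc (n:ℝ) * l = ∑ _k ∈ range n, l := by simp [mul_comm]
        _ ≤ ∑ k ∈ range n, T k := Finset.sum_le_sum fun k _ => hTl k
    have hbound : ∀ n, T n / (1 + ∑ k ∈ range n, T k) ≤ T 0 / (1 + (n:ℝ) * l) := by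
      intro n
      apply div_le_div₀ (hT0 0) (hTa (Nat.zero_le n)) ?_ ?_
      · positivity
      · linarith [hsum n]
    have htend2 : Tendsto (fun n : ℕ => T 0 / (1 + (n:ℝ) * l)) atTop (𝓝 0) := by
      have h1 : Tendsto (fun n : ℕ => 1 + (n:ℝ) * l) atTop atTop :=
        tendsto_atTop_add_const_left _ 1 (tendsto_natCast_atTop_atTop.atTop_mul_const hcase)
      simpa [div_eq_mul_inv] using h1.inv_tendsto_atTop.const_mul (T 0)
    apply squeeze_zero (fun n => div_nonneg (hT0 n) (by linarith [hU1 n])) hbound htend2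

noncomputable def rr (a : ℕ → ℂ) (β : ℕ → ℝ) (n : ℕ) : ℝ :=
  2 / (β n * ‖a (2*n)‖)

noncomputable def PP (a : ℕ → ℂ) (β : ℕ → ℝ) (n : ℕ) : ℝ :=
  ∏ k ∈ Icc 1 n, rr a β k

noncomputable def qqE (a : ℕ → ℂ) (β : ℕ → ℝ) (n : ℕ) : ℝ :=
  rr a β (n+2) * rr a β (n+1) * ‖a (2*n+3)‖ * ‖a (2*n+2)‖

noncomputable def qqF (a : ℕ → ℂ) (β : ℕ → ℝ) (n : ℕ) : ℝ :=
  rr a β (n+2) * rr a β (n+1) * ‖a (2*n+4)‖ * ‖a (2*n+3)‖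

noncomputable def TE (a : ℕ → ℂ) (β : ℕ → ℝ) (n : ℕ) : ℝ := ∏ k ∈ range n, qqE a β k
noncomputable def TF (a : ℕ → ℂ) (β : ℕ → ℝ) (n : ℕ) : ℝ := ∏ k ∈ range n, qqF a β k
noncomputable def UE (a : ℕ → ℂ) (β : ℕ → ℝ) (n : ℕ) : ℝ := 1 + ∑ k ∈ range n, TE a β k
noncomputable def UF (a : ℕ → ℂ) (β : ℕ → ℝ) (n : ℕ) : ℝ := 1 + ∑ k ∈ range n, TF a β k

set_option maxHeartbeats 1000000 in
/-- Main convergence theorem, condition (1).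
Indexing: `A (N+1)` is the `N`-th canonical numerator (so `A 0 = A_{-1} = 1`). -/
theorem main_theorem_cond1 (a : ℕ → ℂ) (c β : ℕ → ℝ)
    (ha : ∀ n : ℕ, 1 ≤ n → a n ≠ 0)
    (hc : ∀ n : ℕ, 1 ≤ n → 0 < c n)
    (hβ : ∀ n : ℕ, 1 ≤ n → 0 < β n ∧ β n < 1)
    (heven : ∀ n : ℕ, 1 ≤ n → (c n + 1) / (1 - β n) ≤ ‖a (2 * n)‖)
    (hodd : ∀ n : ℕ, 1 ≤ n →
      ‖a (2 * n + 1)‖ ≤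
        min (min (c n) (c (n + 1)))
          (min (β n * β (n + 1) * (c (n + 1) + 1) / (4 * (1 - β (n + 1))))
               (β n * β (n + 1) * (c n + 1) / (4 * (1 - β n)))))
    (A B : ℕ → ℂ)
    (hA0 : A 0 = 1) (hA1 : A 1 = 0) (hB0 : B 0 = 0) (hB1 : B 1 = 1)
    (hArec : ∀ N : ℕ, 1 ≤ N → A (N + 1) = A N + a N * A (N - 1))
    (hBrec : ∀ N : ℕ, 1 ≤ N → B (N + 1) = B N + a N * B (N - 1)) :
    ∃ L : ℂ, Tendsto (fun N : ℕ => A (N + 1) / B (N + 1)) atTop (𝓝 L) := by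
  -- basic positivity facts
  have hβp : ∀ n, 1 ≤ n → 0 < β n := fun n hn => (hβ n hn).1
  have hβ1 : ∀ n, 1 ≤ n → β n < 1 := fun n hn => (hβ n hn).2
  have hβm : ∀ n, 1 ≤ n → 0 < 1 - β n := fun n hn => by linarith [hβ1 n hn]
  have hapos : ∀ n, 1 ≤ n → 0 < ‖a n‖ :=
    fun n hn => norm_pos_iff.mpr (ha n hn)
  have haE : ∀ n, 1 ≤ n → 0 < ‖a (2*n)‖ :=
    fun n hn => hapos (2*n) (by omega)
  have hkey : ∀ n, 1 ≤ n → c n + 1 ≤ (1 - β n) * ‖a (2*n)‖ := by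
    intro n hn
    have h := heven n hn
    rw [div_le_iff₀ (hβm n hn)] at h
    linarith [h]
  have hrpos : ∀ n, 1 ≤ n → 0 < rr a β n := by
    intro n hn
    unfold rr
    exact div_pos two_pos (mul_pos (hβp n hn) (haE n hn))
  have hr2 : ∀ n, 1 ≤ n → rr a β n * (β n * ‖a (2*n)‖) = 2 := by
    intro n hn
    unfold rr
    exact div_mul_cancel₀ 2 (ne_of_gt (mul_pos (hβp n hn) (haE n hn)))
  -- recurrences with flexible indices
  have hB2 : ∀ i j : ℕ, j = i + 2 → B j = B (i+1) + a (i+1) * B i := by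
    intro i j hj; subst hj
    have := hBrec (i+1) (by omega)
    simpa using this
  have hA2 : ∀ i j : ℕ, j = i + 2 → A j = A (i+1) + a (i+1) * A i := by
    intro i j hj; subst hj
    have := hArec (i+1) (by omega)
    simpa using this
  -- small values
  have hBv2 : B 2 = 1 := by rw [hB2 0 2 rfl, hB0, hB1]; ring
  have hBv3 : B 3 = 1 + a 2 := by rw [hB2 1 3 rfl, hBv2, hB1]; ring
  have hBv4 : B 4 = 1 + a 2 + a 3 := by rw [hB2 2 4 rfl, hBv3, hBv2]; ring
  have hAv2 : A 2 = a 1 := by rw [hA2 0 2 rfl, hA0, hA1]; ring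
  have hAv3 : A 3 = a 1 := by rw [hA2 1 3 rfl, hAv2, hA1]; ring
  -- contraction identities
  have hcontr : ∀ (X : ℕ → ℂ), (∀ i j : ℕ, j = i + 2 → X j = X (i+1) + a (i+1) * X i) →
      ∀ k : ℕ, X (k+4) = (1 + a (k+3) + a (k+2)) * X (k+2) - a (k+2) * a (k+1) * X k := by
    intro X hX k
    have e1 := hX (k+2) (k+4) (by ring)
    have e2 := hX (k+1) (k+3) (by ring)
    have e3 := hX k (k+2) rfl
    simp only [show k+2+1 = k+3 from by omega, show k+1+1 = k+2 from by omega] at e1 e2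
    linear_combination e1 + e2 - a (k+2) * e3
  -- components of hodd
  have hodd1 : ∀ n, 1 ≤ n → ‖a (2*n+1)‖ ≤ c n :=
    fun n hn => (hodd n hn).trans ((min_le_left _ _).trans (min_le_left _ _))
  have hodd2 : ∀ n, 1 ≤ n → ‖a (2*n+1)‖ ≤ c (n+1) :=
    fun n hn => (hodd n hn).trans ((min_le_left _ _).trans (min_le_right _ _))
  have hodd3 : ∀ n, 1 ≤ n → ‖a (2*n+1)‖ ≤
      β n * β (n+1) * (c (n+1) + 1) / (4 * (1 - β (n+1))) :=
    fun n hn => (hodd n hn).trans ((min_le_right _ _).trans (min_le_left _ _))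
  have hodd4 : ∀ n, 1 ≤ n → ‖a (2*n+1)‖ ≤
      β n * β (n+1) * (c n + 1) / (4 * (1 - β n)) :=
    fun n hn => (hodd n hn).trans ((min_le_right _ _).trans (min_le_right _ _))
  -- q bounds
  have hqEnn : ∀ n, 0 ≤ qqE a β n := by
    intro n
    unfold qqE
    have := hrpos (n+2) (by omega)
    have := hrpos (n+1) (by omega)
    positivity
  have hqFnn : ∀ n, 0 ≤ qqF a β n := by
    intro n
    unfold qqF
    have := hrpos (n+2) (by omega)
    have := hrpos (n+1) (by omega)
    positivity
  have hqE1 : ∀ n, qqE a β n ≤ 1 := by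
    intro n
    have h3 := hodd3 (n+1) (by omega)
    simp only [show 2*(n+1)+1 = 2*n+3 from by omega, show n+1+1 = n+2 from by omega] at h3
    have hk := hkey (n+2) (by omega)
    simp only [show 2*(n+2) = 2*n+4 from by omega] at hk
    have hb1 := hβp (n+1) (by omega)
    have hb2 := hβp (n+2) (by omega)
    have hm2 := hβm (n+2) (by omega)
    have hy := hapos (2*n+2) (by omega)
    have hz := hapos (2*n+4) (by omega)
    have hx := norm_nonneg (a (2*n+3))
    rw [le_div_iff₀ (by positivity)] at h3
    have h4 : 4 * ‖a (2*n+3)‖ ≤ β (n+1) * β (n+2) * ‖a (2*n+4)‖ := by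
      nlinarith [mul_le_mul_of_nonneg_left hk (le_of_lt (mul_pos hb1 hb2))]
    have hqeq : qqE a β n = 4 * ‖a (2*n+3)‖ /
        (β (n+1) * β (n+2) * ‖a (2*n+4)‖) := by
      unfold qqE rr
      simp only [show 2*(n+2) = 2*n+4 from by omega, show 2*(n+1) = 2*n+2 from by omega]
      field_simp
      ring
    rw [hqeq, div_le_one (by positivity)]
    exact h4
  have hqF1 : ∀ n, qqF a β n ≤ 1 := by
    intro n
    have h3 := hodd4 (n+1) (by omega)
    simp only [show 2*(n+1)+1 = 2*n+3 from by omega] at h3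
    have hk := hkey (n+1) (by omega)
    simp only [show 2*(n+1) = 2*n+2 from by omega] at hk
    have hb1 := hβp (n+1) (by omega)
    have hb2 := hβp (n+2) (by omega)
    have hm1 := hβm (n+1) (by omega)
    have hy := hapos (2*n+2) (by omega)
    have hz := hapos (2*n+4) (by omega)
    have hx := norm_nonneg (a (2*n+3))
    rw [le_div_iff₀ (by positivity)] at h3
    have h4 : 4 * ‖a (2*n+3)‖ ≤ β (n+1) * β (n+2) * ‖a (2*n+2)‖ := by
      nlinarith [mul_le_mul_of_nonneg_left hk (le_of_lt (mul_pos hb1 hb2))]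
    have hqeq : qqF a β n = 4 * ‖a (2*n+3)‖ /
        (β (n+1) * β (n+2) * ‖a (2*n+2)‖) := by
      unfold qqF rr
      simp only [show 2*(n+2) = 2*n+4 from by omega, show 2*(n+1) = 2*n+2 from by omega]
      field_simp
      ring
    rw [hqeq, div_le_one (by positivity)]
    exact h4
  -- coefficient lower bound
  have hcoef : ∀ m : ℕ, 1 ≤ m → ∀ x : ℂ, ‖x‖ ≤ c m →
      2 ≤ ‖1 + a (2*m) + x‖ * rr a β m := by
    intro m hm x hx
    have htri : ‖a (2*m)‖ ≤ ‖1 + a (2*m) + x‖ + (1 + ‖x‖) := by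
      calc ‖a (2*m)‖ = ‖(1 + a (2*m) + x) + (-1 - x)‖ := by ring_nf
        _ ≤ ‖1 + a (2*m) + x‖ + ‖-1 - x‖ := norm_add_le _ _
        _ ≤ ‖1 + a (2*m) + x‖ + (1 + ‖x‖) := by
            have : ‖-1 - x‖ = ‖1 + x‖ := by
              rw [show (-1 : ℂ) - x = -(1 + x) from by ring, norm_neg]
            rw [this]
            have h1x : ‖1 + x‖ ≤ 1 + ‖x‖ := by
              simpa using norm_add_le 1 x
            linarith
    have hbb : β m * ‖a (2*m)‖ ≤ ‖1 + a (2*m) + x‖ := by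
      have := hkey m hm
      linarith
    have h2 := hr2 m hm
    have hrp := hrpos m hm
    nlinarith [norm_nonneg (1 + a (2*m) + x)]
  -- PP facts
  have hP0 : PP a β 0 = 1 := by unfold PP; simp
  have hPs : ∀ n, PP a β (n+1) = PP a β n * rr a β (n+1) := by
    intro n
    unfold PP
    exact Finset.prod_Icc_succ_top (by omega) _
  have hPpos : ∀ n, 0 < PP a β n := by
    intro n
    unfold PP
    exact Finset.prod_pos (fun k hk => hrpos k (Finset.mem_Icc.mp hk).1)
  -- the two size sequences
  set XE : ℕ → ℝ := fun n => ‖B (2*n+1)‖ * PP a β n with hXEdef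
  set XF : ℕ → ℝ := fun n => ‖B (2*n+2)‖ * PP a β n with hXFdef
  have hXE0 : XE 0 = 1 := by simp [hXEdef, hB1, hP0]
  have hXF0 : XF 0 = 1 := by simp [hXFdef, hBv2, hP0]
  have hXE1 : 2 ≤ XE 1 := by
    have h := hcoef 1 (le_refl 1) 0 (by simpa using (hc 1 (le_refl 1)).le)
    simp only [hXEdef]
    have : (2:ℕ)*1+1 = 3 := by omega
    rw [this, hBv3]
    have hP1 : PP a β 1 = rr a β 1 := by rw [show (1:ℕ) = 0 + 1 from rfl, hPs 0, hP0]; ring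
    rw [hP1]
    simpa using h
  have hXF1 : 2 ≤ XF 1 := by
    have hx : ‖a 3‖ ≤ c 1 := by simpa using hodd1 1 (le_refl 1)
    have h := hcoef 1 (le_refl 1) (a 3) hx
    simp only [hXFdef]
    have : (2:ℕ)*1+2 = 4 := by omega
    rw [this, hBv4]
    have hP1 : PP a β 1 = rr a β 1 := by rw [show (1:ℕ) = 0 + 1 from rfl, hPs 0, hP0]; ring
    rw [hP1]
    simpa using h
  have hErec : ∀ n, 2 * XE (n+1) - qqE a β n * XE n ≤ XE (n+2) := by
    intro n
    simp only [hXEdef]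
    simp only [show 2*(n+2)+1 = 2*n+5 from by omega, show 2*(n+1)+1 = 2*n+3 from by omega]
    have hcB := hcontr B hB2 (2*n+1)
    simp only [show 2*n+1+4 = 2*n+5 from by omega, show 2*n+1+3 = 2*n+4 from by omega,
      show 2*n+1+2 = 2*n+3 from by omega, show 2*n+1+1 = 2*n+2 from by omega] at hcB
    have t1 : ‖1 + a (2*n+4) + a (2*n+3)‖ * ‖B (2*n+3)‖
        - ‖a (2*n+3)‖ * ‖a (2*n+2)‖ * ‖B (2*n+1)‖
        ≤ ‖B (2*n+5)‖ := by
      rw [hcB]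
      have := norm_sub_norm_le ((1 + a (2*n+4) + a (2*n+3)) * B (2*n+3))
        (a (2*n+3) * a (2*n+2) * B (2*n+1))
      simpa [norm_mul] using this
    have hx : ‖a (2*n+3)‖ ≤ c (n+2) := by
      have := hodd2 (n+1) (by omega)
      simpa [show 2*(n+1)+1 = 2*n+3 from by omega, show n+1+1 = n+2 from by omega] using this
    have hco := hcoef (n+2) (by omega) (a (2*n+3)) hx
    simp only [show 2*(n+2) = 2*n+4 from by omega] at hco
    have hp1 := hPpos n
    have hp2 := hPpos (n+1)
    have hp3 := hPpos (n+2)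
    have e1 := hPs n
    have e2 := hPs (n+1)
    simp only [show n+1+1 = n+2 from rfl] at e2
    have hra := hrpos (n+1) (by omega)
    have hrb := hrpos (n+2) (by omega)
    have hb1 := norm_nonneg (B (2*n+1))
    have hb3 := norm_nonneg (B (2*n+3))
    have hxn := norm_nonneg (a (2*n+3))
    have hyn := norm_nonneg (a (2*n+2))
    have key : 2 * (‖B (2*n+3)‖ * PP a β (n+1))
        - qqE a β n * (‖B (2*n+1)‖ * PP a β n)
        ≤ (‖1 + a (2*n+4) + a (2*n+3)‖ * ‖B (2*n+3)‖
          - ‖a (2*n+3)‖ * ‖a (2*n+2)‖ * ‖B (2*n+1)‖)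
          * PP a β (n+2) := by
      unfold qqE
      rw [e2, e1]
      nlinarith [mul_nonneg (mul_nonneg (mul_nonneg hb3 hp1.le) hra.le)
        (sub_nonneg.mpr hco)]
    calc 2 * (‖B (2*n+3)‖ * PP a β (n+1))
        - qqE a β n * (‖B (2*n+1)‖ * PP a β n) ≤ _ := key
      _ ≤ ‖B (2*n+5)‖ * PP a β (n+2) := mul_le_mul_of_nonneg_right t1 hp3.le
  have hFrec : ∀ n, 2 * XF (n+1) - qqF a β n * XF n ≤ XF (n+2) := by
    intro n
    simp only [hXFdef]
    simp only [show 2*(n+2)+2 = 2*n+6 from by omega, show 2*(n+1)+2 = 2*n+4 from by omega]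
    have hcB := hcontr B hB2 (2*n+2)
    simp only [show 2*n+2+4 = 2*n+6 from by omega, show 2*n+2+3 = 2*n+5 from by omega,
      show 2*n+2+2 = 2*n+4 from by omega, show 2*n+2+1 = 2*n+3 from by omega] at hcB
    have t1 : ‖1 + a (2*n+5) + a (2*n+4)‖ * ‖B (2*n+4)‖
        - ‖a (2*n+4)‖ * ‖a (2*n+3)‖ * ‖B (2*n+2)‖
        ≤ ‖B (2*n+6)‖ := by
      rw [hcB]
      have := norm_sub_norm_le ((1 + a (2*n+5) + a (2*n+4)) * B (2*n+4))
        (a (2*n+4) * a (2*n+3) * B (2*n+2))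
      simpa [norm_mul] using this
    have hx : ‖a (2*n+5)‖ ≤ c (n+2) := by
      have := hodd1 (n+2) (by omega)
      simpa [show 2*(n+2)+1 = 2*n+5 from by omega] using this
    have hco := hcoef (n+2) (by omega) (a (2*n+5)) hx
    simp only [show 2*(n+2) = 2*n+4 from by omega] at hco
    rw [show (1 + a (2*n+4) + a (2*n+5)) = (1 + a (2*n+5) + a (2*n+4)) from by ring] at hco
    have hp1 := hPpos n
    have hp2 := hPpos (n+1)
    have hp3 := hPpos (n+2)
    have e1 := hPs n
    have e2 := hPs (n+1)
    simp only [show n+1+1 = n+2 from rfl] at e2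
    have hra := hrpos (n+1) (by omega)
    have hrb := hrpos (n+2) (by omega)
    have hb1 := norm_nonneg (B (2*n+2))
    have hb3 := norm_nonneg (B (2*n+4))
    have hxn := norm_nonneg (a (2*n+4))
    have hyn := norm_nonneg (a (2*n+3))
    have key : 2 * (‖B (2*n+4)‖ * PP a β (n+1))
        - qqF a β n * (‖B (2*n+2)‖ * PP a β n)
        ≤ (‖1 + a (2*n+5) + a (2*n+4)‖ * ‖B (2*n+4)‖
          - ‖a (2*n+4)‖ * ‖a (2*n+3)‖ * ‖B (2*n+2)‖)
          * PP a β (n+2) := by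
      unfold qqF
      rw [e2, e1]
      nlinarith [mul_nonneg (mul_nonneg (mul_nonneg hb3 hp1.le) hra.le)
        (sub_nonneg.mpr hco)]
    calc 2 * (‖B (2*n+4)‖ * PP a β (n+1))
        - qqF a β n * (‖B (2*n+2)‖ * PP a β n) ≤ _ := key
      _ ≤ ‖B (2*n+6)‖ * PP a β (n+2) := mul_le_mul_of_nonneg_right t1 hp3.le
  -- growth conclusions
  have growthE := aux_growth XE (qqE a β) hXE0 hXE1 hqEnn hqE1 hErec
  have growthF := aux_growth XF (qqF a β) hXF0 hXF1 hqFnn hqF1 hFrec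
  have hTEnn : ∀ n, 0 ≤ TE a β n := fun n => Finset.prod_nonneg (fun k _ => hqEnn k)
  have hTFnn : ∀ n, 0 ≤ TF a β n := fun n => Finset.prod_nonneg (fun k _ => hqFnn k)
  have hUEle : ∀ n, UE a β n ≤ XE n := by
    intro n
    cases n with
    | zero => rw [hXE0]; unfold UE; simp
    | succ n => have := (growthE n).2; unfold UE TE; simpa using this
  have hUFle : ∀ n, UF a β n ≤ XF n := by
    intro n
    cases n with
    | zero => rw [hXF0]; unfold UF; simp
    | succ n => have := (growthF n).2; unfold UF TF; simpa using this
  have hUE1 : ∀ n, 1 ≤ UE a β n := by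
    intro n; unfold UE
    have : (0:ℝ) ≤ ∑ k ∈ range n, TE a β k := Finset.sum_nonneg (fun k _ => hTEnn k)
    linarith
  have hUF1 : ∀ n, 1 ≤ UF a β n := by
    intro n; unfold UF
    have : (0:ℝ) ≤ ∑ k ∈ range n, TF a β k := Finset.sum_nonneg (fun k _ => hTFnn k)
    linarith
  have hUEsucc : ∀ n, UE a β (n+1) = UE a β n + TE a β n := by
    intro n; unfold UE; rw [Finset.sum_range_succ]; ring
  have hUEmono : Monotone (UE a β) :=
    monotone_nat_of_le_succ (fun n => by rw [hUEsucc n]; linarith [hTEnn n])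
  have hXEpos : ∀ n, 0 < XE n := fun n => lt_of_lt_of_le one_pos ((hUE1 n).trans (hUEle n))
  have hXFpos : ∀ n, 0 < XF n := fun n => lt_of_lt_of_le one_pos ((hUF1 n).trans (hUFle n))
  have hBodd : ∀ n, B (2*n+1) ≠ 0 := by
    intro n hBn
    have hp := hXEpos n
    simp only [hXEdef, hBn] at hp
    simpa using hp
  have hBeven : ∀ n, B (2*n+2) ≠ 0 := by
    intro n hBn
    have hp := hXFpos n
    simp only [hXFdef, hBn] at hp
    simpa using hp
  -- determinant identities
  have hDelta : ∀ n, A (2*n+5) * B (2*n+3) - A (2*n+3) * B (2*n+5)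
      = a (2*n+3) * a (2*n+2) * (A (2*n+3) * B (2*n+1) - A (2*n+1) * B (2*n+3)) := by
    intro n
    have cA := hcontr A hA2 (2*n+1)
    have cB := hcontr B hB2 (2*n+1)
    simp only [show 2*n+1+4 = 2*n+5 from by omega, show 2*n+1+3 = 2*n+4 from by omega,
      show 2*n+1+2 = 2*n+3 from by omega, show 2*n+1+1 = 2*n+2 from by omega] at cA cB
    linear_combination B (2*n+3) * cA - A (2*n+3) * cB
  have hTEsucc : ∀ n, TE a β (n+1) = TE a β n * qqE a β n := by
    intro n; unfold TE; rw [Finset.prod_range_succ]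
  have hTFsucc : ∀ n, TF a β (n+1) = TF a β n * qqF a β n := by
    intro n; unfold TF; rw [Finset.prod_range_succ]
  have hDabs : ∀ n, ‖A (2*n+3) * B (2*n+1) - A (2*n+1) * B (2*n+3)‖
      * (PP a β (n+1) * PP a β n) = ‖a 1‖ * rr a β 1 * TE a β n := by
    intro n
    induction n with
    | zero =>
      norm_num
      rw [show A 3 * B 1 - A 1 * B 3 = a 1 from by rw [hAv3, hA1, hB1]; ring]
      rw [show PP a β 1 = rr a β 1 from by rw [show (1:ℕ) = 0+1 from rfl, hPs 0, hP0]; ring,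
        hP0]
      unfold TE
      simp
    | succ n ih =>
      show ‖A (2*n+5) * B (2*n+3) - A (2*n+3) * B (2*n+5)‖
        * (PP a β (n+2) * PP a β (n+1)) = ‖a 1‖ * rr a β 1 * TE a β (n+1)
      have e1 := hPs n
      have e2 : PP a β (n+2) = PP a β (n+1) * rr a β (n+2) := hPs (n+1)
      rw [hDelta n, norm_mul, norm_mul, hTEsucc n, e2]
      unfold qqE
      linear_combination (‖a (2*n+3)‖ * ‖a (2*n+2)‖
          * rr a β (n+2) * rr a β (n+1)) * ih
        + (‖a (2*n+3)‖ * ‖a (2*n+2)‖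
          * ‖A (2*n+3) * B (2*n+1) - A (2*n+1) * B (2*n+3)‖
          * rr a β (n+2) * PP a β (n+1)) * e1
  have hDfull : ∀ m, A (m+2) * B (m+1) - A (m+1) * B (m+2)
      = -a (m+1) * (A (m+1) * B m - A m * B (m+1)) := by
    intro m
    have eA := hA2 m (m+2) rfl
    have eB := hB2 m (m+2) rfl
    linear_combination B (m+1) * eA - A (m+1) * eB
  have hDstep : ∀ n, A (2*n+4) * B (2*n+3) - A (2*n+3) * B (2*n+4)
      = a (2*n+3) * a (2*n+2) * (A (2*n+2) * B (2*n+1) - A (2*n+1) * B (2*n+2)) := by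
    intro n
    have e1 := hDfull (2*n+2)
    have e2 := hDfull (2*n+1)
    simp only [show 2*n+2+2 = 2*n+4 from by omega, show 2*n+2+1 = 2*n+3 from by omega,
      show 2*n+1+2 = 2*n+3 from by omega, show 2*n+1+1 = 2*n+2 from by omega] at e1 e2
    linear_combination e1 - a (2*n+3) * e2
  have hscal : ∀ n, β (n+2) * qqF a β n
      = β (n+1) * (rr a β (n+1) * rr a β (n+1)) * (‖a (2*n+3)‖ * ‖a (2*n+2)‖) := by
    intro n
    unfold qqF rr
    simp only [show 2*(n+2) = 2*n+4 from by omega, show 2*(n+1) = 2*n+2 from by omega]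
    have h1 := (hβp (n+1) (by omega)).ne'
    have h2 := (hβp (n+2) (by omega)).ne'
    have h3 := (hapos (2*n+2) (by omega)).ne'
    have h4 := (hapos (2*n+4) (by omega)).ne'
    field_simp
  have hDodd : ∀ n, ‖A (2*n+2) * B (2*n+1) - A (2*n+1) * B (2*n+2)‖
      * (PP a β n * PP a β n) * β 1 = ‖a 1‖ * β (n+1) * TF a β n := by
    intro n
    induction n with
    | zero =>
      norm_num
      rw [show A 2 * B 1 - A 1 * B 2 = a 1 from by rw [hAv2, hA1, hB1, hBv2]; ring, hP0]
      unfold TF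
      simp [mul_comm]
    | succ n ih =>
      show ‖A (2*n+4) * B (2*n+3) - A (2*n+3) * B (2*n+4)‖
        * (PP a β (n+1) * PP a β (n+1)) * β 1 = ‖a 1‖ * β (n+2) * TF a β (n+1)
      have e1 := hPs n
      rw [hDstep n, norm_mul, norm_mul, hTFsucc n]
      linear_combination (‖a (2*n+3)‖ * ‖a (2*n+2)‖
          * rr a β (n+1) * rr a β (n+1)) * ih
        + (‖a (2*n+3)‖ * ‖a (2*n+2)‖
          * ‖A (2*n+2) * B (2*n+1) - A (2*n+1) * B (2*n+2)‖ * β 1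
          * (PP a β (n+1) + PP a β n * rr a β (n+1))) * e1
        - (‖a 1‖ * TF a β n) * hscal n
  -- even and odd approximants
  set g : ℕ → ℂ := fun n => A (2*n+1) / B (2*n+1) with hgdef
  set h : ℕ → ℂ := fun n => A (2*n+2) / B (2*n+2) with hhdef
  have hgdist : ∀ n, dist (g n) (g (n+1)) ≤
      (‖a 1‖ * rr a β 1) * (1/UE a β n - 1/UE a β (n+1)) := by
    intro n
    have hb1 := hBodd n
    have hb3 : B (2*n+3) ≠ 0 := hBodd (n+1)
    have hdiff : g n - g (n+1)
        = (A (2*n+1) * B (2*n+3) - B (2*n+1) * A (2*n+3)) / (B (2*n+1) * B (2*n+3)) := by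
      show A (2*n+1)/B (2*n+1) - A (2*n+3)/B (2*n+3) = _
      exact div_sub_div _ _ hb1 hb3
    have habs : dist (g n) (g (n+1))
        = ‖A (2*n+3) * B (2*n+1) - A (2*n+1) * B (2*n+3)‖
          / (‖B (2*n+1)‖ * ‖B (2*n+3)‖) := by
      rw [Complex.dist_eq, hdiff, norm_div, norm_mul]
      congr 1
      rw [show A (2*n+1) * B (2*n+3) - B (2*n+1) * A (2*n+3)
        = -(A (2*n+3) * B (2*n+1) - A (2*n+1) * B (2*n+3)) from by ring, norm_neg]
    have hNval : ‖A (2*n+3) * B (2*n+1) - A (2*n+1) * B (2*n+3)‖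
        = ‖a 1‖ * rr a β 1 * TE a β n / (PP a β (n+1) * PP a β n) := by
      rw [eq_div_iff (ne_of_gt (mul_pos (hPpos (n+1)) (hPpos n)))]
      exact hDabs n
    rw [habs, hNval, div_div]
    have hden : (PP a β (n+1) * PP a β n) * (‖B (2*n+1)‖ * ‖B (2*n+3)‖)
        = XE n * XE (n+1) := by
      show _ = (‖B (2*n+1)‖ * PP a β n) * (‖B (2*(n+1)+1)‖ * PP a β (n+1))
      rw [show 2*(n+1)+1 = 2*n+3 from by omega]
      ring
    rw [hden]
    have hTEeq : TE a β n = UE a β (n+1) - UE a β n := by rw [hUEsucc n]; ring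
    have hfrac : 1/UE a β n - 1/UE a β (n+1)
        = (UE a β (n+1) - UE a β n) / (UE a β n * UE a β (n+1)) := by
      have u1 : (0:ℝ) < UE a β n := lt_of_lt_of_le one_pos (hUE1 n)
      have u2 : (0:ℝ) < UE a β (n+1) := lt_of_lt_of_le one_pos (hUE1 (n+1))
      field_simp
    rw [hTEeq, hfrac, mul_div_assoc]
    apply mul_le_mul_of_nonneg_left _ (mul_nonneg (norm_nonneg _) (hrpos 1 (le_refl 1)).le)
    apply div_le_div₀ (by linarith [hUEsucc n, hTEnn n, hUE1 n, hUE1 (n+1)]) (le_refl _)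
      (mul_pos (lt_of_lt_of_le one_pos (hUE1 n)) (lt_of_lt_of_le one_pos (hUE1 (n+1))))
    exact mul_le_mul (hUEle n) (hUEle (n+1)) (by linarith [hUE1 (n+1)]) (hXEpos n).le
  have hsummable : Summable (fun n => dist (g n) (g (n+1))) := by
    apply Summable.of_nonneg_of_le (fun n => dist_nonneg) hgdist
    exact ((aux_tele_summable (UE a β) hUE1 hUEmono).mul_left _)
  obtain ⟨L, hgL⟩ := cauchySeq_tendsto_of_complete (cauchySeq_of_summable_dist hsummable)
  have hβ1pos := hβp 1 (le_refl 1)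
  have hcross : ∀ n, ‖h n - g n‖
      ≤ (‖a 1‖ / β 1) * (TF a β n / UF a β n) := by
    intro n
    have hb1 := hBodd n
    have hb2 := hBeven n
    have hdiff : h n - g n
        = (A (2*n+2) * B (2*n+1) - B (2*n+2) * A (2*n+1)) / (B (2*n+2) * B (2*n+1)) := by
      show A (2*n+2)/B (2*n+2) - A (2*n+1)/B (2*n+1) = _
      exact div_sub_div _ _ hb2 hb1
    have habs : ‖h n - g n‖
        = ‖A (2*n+2) * B (2*n+1) - A (2*n+1) * B (2*n+2)‖
          / (‖B (2*n+2)‖ * ‖B (2*n+1)‖) := by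
      rw [hdiff, norm_div, norm_mul]
      congr 2
      ring
    have hNval : ‖A (2*n+2) * B (2*n+1) - A (2*n+1) * B (2*n+2)‖
        = ‖a 1‖ * β (n+1) * TF a β n / (PP a β n * PP a β n * β 1) := by
      rw [eq_div_iff (ne_of_gt (mul_pos (mul_pos (hPpos n) (hPpos n)) hβ1pos))]
      linear_combination hDodd n
    rw [habs, hNval, div_div]
    have hden : (PP a β n * PP a β n * β 1) * (‖B (2*n+2)‖ * ‖B (2*n+1)‖)
        = β 1 * (XF n * XE n) := by
      show _ = β 1 * ((‖B (2*n+2)‖ * PP a β n) * (‖B (2*n+1)‖ * PP a β n))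
      ring
    rw [hden]
    have hr1 : (‖a 1‖ / β 1) * (TF a β n / UF a β n)
        = ‖a 1‖ * TF a β n / (β 1 * UF a β n) := by
      field_simp
    rw [hr1]
    have hUFpos : (0:ℝ) < UF a β n := lt_of_lt_of_le one_pos (hUF1 n)
    have hUFpos2 : (0:ℝ) < UF a β n := lt_of_lt_of_le one_pos (hUF1 n)
    rw [div_le_div_iff₀ (mul_pos hβ1pos (mul_pos (hXFpos n) (hXEpos n))) (mul_pos hβ1pos hUFpos2)]
    have hb : β (n+1) ≤ 1 := (hβ1 (n+1) (by omega)).le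
    have h1 : 1 ≤ XE n := (hUE1 n).trans (hUEle n)
    have h2 : UF a β n ≤ XF n := hUFle n
    have ha1 := norm_nonneg (a 1)
    have hTFn := hTFnn n
    nlinarith [mul_pos hUFpos (hβp 1 (le_refl 1)), mul_nonneg (mul_nonneg ha1 hTFn) (hβp 1 (le_refl 1)).le,
      mul_le_mul_of_nonneg_left h2 (mul_nonneg (mul_nonneg ha1 hTFn) (hβp 1 (le_refl 1)).le),
      mul_le_mul_of_nonneg_left hb (mul_nonneg (mul_nonneg (mul_nonneg ha1 hTFn) (hβp 1 (le_refl 1)).le) hUFpos.le),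
      mul_le_mul_of_nonneg_left h1 (mul_nonneg (mul_nonneg (mul_nonneg ha1 hTFn) (hβp 1 (le_refl 1)).le) (le_trans hUFpos.le h2))]
  have hTFanti : Antitone (TF a β) := by
    apply antitone_nat_of_succ_le
    intro n
    rw [hTFsucc n]
    exact mul_le_of_le_one_right (hTFnn n) (hqF1 n)
  have hcross0 : Tendsto (fun n => h n - g n) atTop (𝓝 0) := by
    have hbnd : ∀ n, ‖h n - g n‖ ≤ (‖a 1‖ / β 1) * (TF a β n / UF a β n) := by
      intro n
      exact hcross n
    have hlim : Tendsto (fun n => (‖a 1‖ / β 1) * (TF a β n / UF a β n))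
        atTop (𝓝 0) := by
      have := (aux_ratio_tendsto (TF a β) hTFnn hTFanti).const_mul (‖a 1‖ / β 1)
      simpa [UF] using this
    exact squeeze_zero_norm hbnd hlim
  have hhL : Tendsto h atTop (𝓝 L) := by
    have hsum := hgL.add hcross0
    have heq : (fun n => g n + (h n - g n)) = h := by funext n; ring
    rw [heq] at hsum
    simpa using hsum
  refine ⟨L, ?_⟩
  rw [Metric.tendsto_atTop] at hgL hhL ⊢
  intro ε hε
  obtain ⟨N1, hN1⟩ := hgL ε hε
  obtain ⟨N2, hN2⟩ := hhL ε hε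
  refine ⟨2*N1 + 2*N2 + 2, fun N hN => ?_⟩
  rcases Nat.even_or_odd N with ⟨m, hm⟩ | ⟨m, hm⟩
  · have hNm : N + 1 = 2*m + 1 := by omega
    rw [hNm]
    exact hN1 m (by omega)
  · have hNm : N + 1 = 2*m + 2 := by omega
    rw [hNm]
    exact hN2 m (by omega)
end

section
/- Let (d_n) be an increasing sequence of positive reals with d_n > 25 for all n ≥ 1, and let (a_n) be a sequence of nonzero complex numbers with |a_{2n}| ≥ d_n and |a_{2n+1}| ≤ (4/25)·d_n for all n ≥ 1. Then the continued fraction K_{n=1}^∞ a_n/1 converges to a finite complex value. -/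
open Filter Topology Finset

/-- Corollary: unbounded partial numerators. -/
theorem corollary_unbounded (a : ℕ → ℂ) (d : ℕ → ℝ)
    (ha : ∀ n : ℕ, 1 ≤ n → a n ≠ 0)
    (hd_mono : ∀ m n : ℕ, 1 ≤ m → m < n → d m < d n)
    (hd : ∀ n : ℕ, 1 ≤ n → 25 < d n)
    (heven : ∀ n : ℕ, 1 ≤ n → d n ≤ ‖a (2 * n)‖)
    (hodd : ∀ n : ℕ, 1 ≤ n → ‖a (2 * n + 1)‖ ≤ (4 / 25) * d n)
    (A B : ℕ → ℂ)
    (hA0 : A 0 = 1) (hA1 : A 1 = 0) (hB0 : B 0 = 0) (hB1 : B 1 = 1)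
    (hArec : ∀ N : ℕ, 1 ≤ N → A (N + 1) = A N + a N * A (N - 1))
    (hBrec : ∀ N : ℕ, 1 ≤ N → B (N + 1) = B N + a N * B (N - 1)) :
    ∃ L : ℂ, Tendsto (fun N : ℕ => A (N + 1) / B (N + 1)) atTop (𝓝 L) := by
  -- restate hypotheses in terms of norms
  have heven' : ∀ n : ℕ, 1 ≤ n → d n ≤ ‖a (2 * n)‖ := by
    intro n hn; exact heven n hn
  have hodd' : ∀ n : ℕ, 1 ≤ n → ‖a (2 * n + 1)‖ ≤ (4 / 25) * d n := by
    intro n hn; exact hodd n hn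
  have hB2 : B 2 = 1 := by
    have h := hBrec 1 le_rfl
    simpa [hB0, hB1] using h
  -- the even inductive step
  have evenstep : ∀ n : ℕ, B (2 * n + 1) ≠ 0 →
      (59 / 75) * ‖B (2 * n + 1)‖ ≤ ‖B (2 * n + 2)‖ →
      ‖B (2 * n + 2)‖ ≤ (91 / 75) * ‖B (2 * n + 1)‖ →
      (‖a (2 * n + 2)‖ * ‖B (2 * n + 1)‖ ≤ (1875 / 1784) * ‖B (2 * n + 3)‖ ∧
       ‖a (2 * n + 3)‖ * ‖B (2 * n + 2)‖ ≤ (16 / 75) * ‖B (2 * n + 3)‖ ∧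
       B (2 * n + 3) ≠ 0) := by
    intro n h1 hc1 hc2
    have ht : (25 : ℝ) < ‖a (2 * n + 2)‖ := by
      have h25 := hd (n + 1) (by omega)
      have he := heven' (n + 1) (by omega)
      rw [show 2 * (n + 1) = 2 * n + 2 from by ring] at he
      linarith
    have hb1 : (0 : ℝ) < ‖B (2 * n + 1)‖ := norm_pos_iff.mpr h1
    have hb2 : (0 : ℝ) ≤ ‖B (2 * n + 2)‖ := norm_nonneg _
    have hrec : B (2 * n + 3) = B (2 * n + 2) + a (2 * n + 2) * B (2 * n + 1) := by
      have h := hBrec (2 * n + 2) (by omega)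
      rw [show 2 * n + 2 - 1 = 2 * n + 1 from by omega] at h
      rw [show 2 * n + 2 + 1 = 2 * n + 3 from by ring] at h
      exact h
    have hlow : ‖a (2 * n + 2)‖ * ‖B (2 * n + 1)‖ - ‖B (2 * n + 2)‖ ≤ ‖B (2 * n + 3)‖ := by
      have h' : ‖a (2 * n + 2) * B (2 * n + 1)‖ = ‖B (2 * n + 3) - B (2 * n + 2)‖ := by
        rw [hrec]; congr 1; ring
      have h'' : ‖B (2 * n + 3) - B (2 * n + 2)‖ ≤ ‖B (2 * n + 3)‖ + ‖B (2 * n + 2)‖ :=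
        norm_sub_le _ _
      rw [norm_mul] at h'
      linarith
    have h25b : 25 * ‖B (2 * n + 1)‖ ≤ ‖a (2 * n + 2)‖ * ‖B (2 * n + 1)‖ :=
      mul_le_mul_of_nonneg_right ht.le hb1.le
    -- clause (e): (3/4) * (t * b2) ≤ b3
    have he3 : (3 / 4) * (‖a (2 * n + 2)‖ * ‖B (2 * n + 2)‖) ≤ ‖B (2 * n + 3)‖ := by
      have ht0 : (0 : ℝ) ≤ ‖a (2 * n + 2)‖ := by linarith
      have h5 : ‖a (2 * n + 2)‖ * ‖B (2 * n + 2)‖ ≤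
          ‖a (2 * n + 2)‖ * ((91 / 75) * ‖B (2 * n + 1)‖) :=
        mul_le_mul_of_nonneg_left hc2 ht0
      nlinarith [hlow, h25b, hc2]
    -- clause (f)
    have hf : ‖a (2 * n + 2)‖ * ‖B (2 * n + 1)‖ ≤ (1875 / 1784) * ‖B (2 * n + 3)‖ := by
      nlinarith [hlow, h25b, hc2]
    -- clause (g)
    have ha3 : ‖a (2 * n + 3)‖ ≤ (4 / 25) * ‖a (2 * n + 2)‖ := by
      have ho := hodd' (n + 1) (by omega)
      rw [show 2 * (n + 1) + 1 = 2 * n + 3 from by ring] at ho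
      have he := heven' (n + 1) (by omega)
      rw [show 2 * (n + 1) = 2 * n + 2 from by ring] at he
      linarith
    have hg : ‖a (2 * n + 3)‖ * ‖B (2 * n + 2)‖ ≤ (16 / 75) * ‖B (2 * n + 3)‖ := by
      have h6 : ‖a (2 * n + 3)‖ * ‖B (2 * n + 2)‖ ≤
          ((4 / 25) * ‖a (2 * n + 2)‖) * ‖B (2 * n + 2)‖ :=
        mul_le_mul_of_nonneg_right ha3 hb2
      nlinarith [he3]
    have hb3 : (0 : ℝ) < ‖B (2 * n + 3)‖ := by nlinarith [hf, h25b]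
    exact ⟨hf, hg, norm_pos_iff.mp hb3⟩
  -- the main induction
  have key : ∀ n : ℕ, B (2 * n + 1) ≠ 0 ∧ B (2 * n + 2) ≠ 0 ∧
      (59 / 75) * ‖B (2 * n + 1)‖ ≤ ‖B (2 * n + 2)‖ ∧
      ‖B (2 * n + 2)‖ ≤ (91 / 75) * ‖B (2 * n + 1)‖ ∧
      ‖a (2 * n + 2)‖ * ‖B (2 * n + 1)‖ ≤ (1875 / 1784) * ‖B (2 * n + 3)‖ ∧
      ‖a (2 * n + 3)‖ * ‖B (2 * n + 2)‖ ≤ (16 / 75) * ‖B (2 * n + 3)‖ ∧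
      B (2 * n + 3) ≠ 0 := by
    intro n
    induction n with
    | zero =>
      have h1 : B (2 * 0 + 1) ≠ 0 := by
        norm_num [hB1]
      have hn1 : ‖B (2 * 0 + 1)‖ = 1 := by norm_num [hB1]
      have hn2 : ‖B (2 * 0 + 2)‖ = 1 := by norm_num [show (2 * 0 + 2 : ℕ) = 2 from rfl, hB2]
      have hc1 : (59 / 75) * ‖B (2 * 0 + 1)‖ ≤ ‖B (2 * 0 + 2)‖ := by
        rw [hn1, hn2]; norm_num
      have hc2 : ‖B (2 * 0 + 2)‖ ≤ (91 / 75) * ‖B (2 * 0 + 1)‖ := by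
        rw [hn1, hn2]; norm_num
      have h2 : B (2 * 0 + 2) ≠ 0 := by
        rw [show (2 * 0 + 2 : ℕ) = 2 from rfl, hB2]; norm_num
      obtain ⟨hf, hg, h3⟩ := evenstep 0 h1 hc1 hc2
      exact ⟨h1, h2, hc1, hc2, hf, hg, h3⟩
    | succ n ih =>
      obtain ⟨h1, h2, hc1, hc2, hf, hg, h3⟩ := ih
      have e1 : 2 * (n + 1) + 1 = 2 * n + 3 := by ring
      have e2 : 2 * (n + 1) + 2 = 2 * n + 4 := by ring
      have e3 : 2 * (n + 1) + 3 = 2 * n + 5 := by ring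
      rw [e1, e2, e3]
      have hb3 : (0 : ℝ) < ‖B (2 * n + 3)‖ := norm_pos_iff.mpr h3
      -- recurrence for B (2n+4)
      have hrec : B (2 * n + 4) = B (2 * n + 3) + a (2 * n + 3) * B (2 * n + 2) := by
        have h := hBrec (2 * n + 3) (by omega)
        rw [show 2 * n + 3 - 1 = 2 * n + 2 from by omega,
          show 2 * n + 3 + 1 = 2 * n + 4 from by ring] at h
        exact h
      have hdiffnorm : ‖B (2 * n + 4) - B (2 * n + 3)‖ ≤ (16 / 75) * ‖B (2 * n + 3)‖ := by
        rw [hrec]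
        rw [show B (2 * n + 3) + a (2 * n + 3) * B (2 * n + 2) - B (2 * n + 3)
            = a (2 * n + 3) * B (2 * n + 2) from by ring, norm_mul]
        exact hg
      have htri1 : ‖B (2 * n + 3)‖ - ‖B (2 * n + 4)‖ ≤ ‖B (2 * n + 4) - B (2 * n + 3)‖ := by
        have := norm_sub_norm_le (B (2 * n + 3)) (B (2 * n + 4))
        rw [norm_sub_rev] at this
        exact this
      have htri2 : ‖B (2 * n + 4)‖ - ‖B (2 * n + 3)‖ ≤ ‖B (2 * n + 4) - B (2 * n + 3)‖ :=
        norm_sub_norm_le _ _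
      have hc1' : (59 / 75) * ‖B (2 * n + 3)‖ ≤ ‖B (2 * n + 4)‖ := by linarith
      have hc2' : ‖B (2 * n + 4)‖ ≤ (91 / 75) * ‖B (2 * n + 3)‖ := by linarith
      have h2' : B (2 * n + 4) ≠ 0 := by
        have : (0 : ℝ) < ‖B (2 * n + 4)‖ := by linarith
        exact norm_pos_iff.mp this
      have hstep := evenstep (n + 1)
      rw [e1, e2, e3] at hstep
      obtain ⟨hf', hg', h3'⟩ := hstep h3 hc1' hc2'
      exact ⟨h3, h2', hc1', hc2', hf', hg', h3'⟩
  -- all denominators are nonzero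
  have hBne : ∀ N : ℕ, 1 ≤ N → B N ≠ 0 := by
    intro N hN
    obtain ⟨k, hk | hk⟩ : ∃ k, N = 2 * k + 1 ∨ N = 2 * k + 2 := ⟨(N - 1) / 2, by omega⟩
    · rw [hk]; exact (key k).1
    · rw [hk]; exact (key k).2.1
  -- distance between successive approximants
  set T : ℕ → ℝ := fun N => dist (A (N + 1) / B (N + 1)) (A (N + 2) / B (N + 2)) with hTdef
  have hTeq : ∀ N : ℕ, T N =
      ‖A (N + 2) * B (N + 1) - A (N + 1) * B (N + 2)‖ / (‖B (N + 2)‖ * ‖B (N + 1)‖) := by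
    intro N
    have h1 : B (N + 1) ≠ 0 := hBne _ (by omega)
    have h2 : B (N + 2) ≠ 0 := hBne _ (by omega)
    rw [hTdef]
    simp only
    rw [dist_eq_norm, div_sub_div _ _ h1 h2, norm_div, norm_mul]
    rw [show A (N + 1) * B (N + 2) - B (N + 1) * A (N + 2)
        = -(A (N + 2) * B (N + 1) - A (N + 1) * B (N + 2)) from by ring, norm_neg]
    rw [mul_comm ‖B (N + 1)‖ ‖B (N + 2)‖]
  -- determinant recurrence
  have hDrec : ∀ N : ℕ, A (N + 3) * B (N + 2) - A (N + 2) * B (N + 3)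
      = -(a (N + 2)) * (A (N + 2) * B (N + 1) - A (N + 1) * B (N + 2)) := by
    intro N
    have hA := hArec (N + 2) (by omega)
    have hB := hBrec (N + 2) (by omega)
    rw [show N + 2 - 1 = N + 1 from by omega, show N + 2 + 1 = N + 3 from by ring] at hA hB
    rw [hA, hB]; ring
  -- the contraction step
  have hTstep : ∀ (N : ℕ) (c : ℝ),
      ‖a (N + 2)‖ * ‖B (N + 1)‖ ≤ c * ‖B (N + 3)‖ → T (N + 1) ≤ c * T N := by
    intro N c hbound
    rw [hTeq (N + 1), hTeq N]
    simp only [show N + 1 + 2 = N + 3 from rfl, show N + 1 + 1 = N + 2 from rfl]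
    rw [hDrec N, norm_mul, norm_neg]
    have hb1 : (0 : ℝ) < ‖B (N + 1)‖ := norm_pos_iff.mpr (hBne _ (by omega))
    have hb2 : (0 : ℝ) < ‖B (N + 2)‖ := norm_pos_iff.mpr (hBne _ (by omega))
    have hb3 : (0 : ℝ) < ‖B (N + 3)‖ := norm_pos_iff.mpr (hBne _ (by omega))
    rw [← mul_div_assoc, div_le_div_iff₀ (by positivity) (by positivity)]
    have hm : (0 : ℝ) ≤ ‖A (N + 2) * B (N + 1) - A (N + 1) * B (N + 2)‖ * ‖B (N + 2)‖ :=
      mul_nonneg (norm_nonneg _) (norm_nonneg _)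
    nlinarith [mul_le_mul_of_nonneg_right hbound hm]
  have hTnonneg : ∀ N, 0 ≤ T N := fun N => dist_nonneg
  -- pair contraction
  have hoddT : ∀ m : ℕ, T (2 * m + 1) ≤ (1875 / 1784) * T (2 * m) := by
    intro m
    exact hTstep (2 * m) (1875 / 1784) (key m).2.2.2.2.1
  have hevenT : ∀ m : ℕ, T (2 * m + 2) ≤ (16 / 59) * T (2 * m + 1) := by
    intro m
    have h1 := (key m).2.2.2.2.2.1
    have h2 := (key (m + 1)).2.2.1
    rw [show 2 * (m + 1) + 1 = 2 * m + 3 from by ring,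
      show 2 * (m + 1) + 2 = 2 * m + 4 from by ring] at h2
    have hb : ‖a (2 * m + 3)‖ * ‖B (2 * m + 2)‖ ≤ (16 / 59) * ‖B (2 * m + 4)‖ := by
      linarith
    have := hTstep (2 * m + 1) (16 / 59)
    rw [show 2 * m + 1 + 2 = 2 * m + 3 from by ring, show 2 * m + 1 + 1 = 2 * m + 2 from by ring,
      show 2 * m + 1 + 3 = 2 * m + 4 from by ring] at this
    exact this hb
  have hpair : ∀ m : ℕ, T (2 * m + 2) ≤ (1 / 3) * T (2 * m) := by
    intro m
    have h1 := hoddT m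
    have h2 := hevenT m
    have h3 := hTnonneg (2 * m)
    have h4 := hTnonneg (2 * m + 1)
    nlinarith
  have hgeom : ∀ m : ℕ, T (2 * m) ≤ T 0 * (1 / 3 : ℝ) ^ m := by
    intro m
    induction m with
    | zero => simp
    | succ m ih =>
      have h1 := hpair m
      rw [show 2 * (m + 1) = 2 * m + 2 from by ring]
      have h2 : (1 / 3 : ℝ) * T (2 * m) ≤ (1 / 3) * (T 0 * (1 / 3) ^ m) := by linarith
      calc T (2 * m + 2) ≤ (1 / 3) * T (2 * m) := h1
        _ ≤ (1 / 3) * (T 0 * (1 / 3) ^ m) := h2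
        _ = T 0 * (1 / 3) ^ (m + 1) := by ring
  have hgeomodd : ∀ m : ℕ, T (2 * m + 1) ≤ 2 * (T 0 * (1 / 3 : ℝ) ^ m) := by
    intro m
    have h1 := hoddT m
    have h2 := hgeom m
    have h3 : (0 : ℝ) ≤ T 0 * (1 / 3 : ℝ) ^ m :=
      mul_nonneg (hTnonneg 0) (by positivity)
    nlinarith
  -- geometric bound with ratio 1/√3
  set r : ℝ := (Real.sqrt 3)⁻¹ with hrdef
  have hs3 : (1 : ℝ) < Real.sqrt 3 := by
    rw [show (1 : ℝ) = Real.sqrt 1 from Real.sqrt_one.symm]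
    exact Real.sqrt_lt_sqrt (by norm_num) (by norm_num)
  have hs3pos : (0 : ℝ) < Real.sqrt 3 := by linarith
  have hr0 : (0 : ℝ) ≤ r := by rw [hrdef]; positivity
  have hr1 : r < 1 := by
    rw [hrdef]
    rw [inv_lt_one_iff₀]
    right; exact hs3
  have hr2 : r ^ 2 = 1 / 3 := by
    rw [hrdef, inv_pow, Real.sq_sqrt (by norm_num : (3:ℝ) ≥ 0)]
    norm_num
  have hsr : Real.sqrt 3 * r = 1 := mul_inv_cancel₀ (ne_of_gt hs3pos)
  have hbound : ∀ N : ℕ, T N ≤ (2 * Real.sqrt 3 * T 0) * r ^ N := by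
    intro N
    rcases Nat.even_or_odd N with ⟨m, hm⟩ | ⟨m, hm⟩
    · rw [hm, show m + m = 2 * m from by ring]
      have h1 := hgeom m
      rw [pow_mul, hr2]
      have h3 : (0 : ℝ) ≤ T 0 * (1 / 3 : ℝ) ^ m := mul_nonneg (hTnonneg 0) (by positivity)
      nlinarith [hs3, hTnonneg 0]
    · rw [hm]
      have h1 := hgeomodd m
      rw [pow_succ, pow_mul, hr2]
      have he : 2 * Real.sqrt 3 * T 0 * ((1 / 3 : ℝ) ^ m * r)
          = (2 * (T 0 * (1 / 3 : ℝ) ^ m)) * (Real.sqrt 3 * r) := by ring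
      rw [he, hsr, mul_one]
      exact h1
  have hsum : Summable (fun N : ℕ => (2 * Real.sqrt 3 * T 0) * r ^ N) :=
    (summable_geometric_of_lt_one hr0 hr1).mul_left _
  have hcauchy : CauchySeq (fun N : ℕ => A (N + 1) / B (N + 1)) := by
    apply cauchySeq_of_dist_le_of_summable (fun N => (2 * Real.sqrt 3 * T 0) * r ^ N) _ hsum
    intro n
    exact hbound n
  exact cauchySeq_tendsto_of_complete hcauchy
end

section
/- Let c > 0 and let (a_n) be a sequence of nonzero complex numbers such that |a_{2n}| ≥ 1 + 3c + 2√c·√(2c+1) and |a_{2n+1}| ≤ c for all n ≥ 1. Then the continued fraction K_{n=1}^∞ a_n/1 converges to a finite complex value. -/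
open Filter Topology Finset

private lemma cf_aux (c s t u : ℝ) (hc : 0 < c) (hs : 0 < s) (ht : 0 < t) (hu : 0 < u)
    (hsq : s ^ 2 = c) (htq : t ^ 2 = 2 * c + 1) (huq : u ^ 2 = 3 * c + 2 * s * t) :
    ∃ M m mp q : ℝ, 0 < M ∧ 0 < m ∧ m < 1 ∧ 1 < mp ∧ 0 < q ∧ q < 1 ∧
      m * M = M - c ∧ mp * M = M + c ∧ 1 + 3 * c + 2 * s * t = mp * (M + 1) ∧
      q * (m * M) ^ 2 = c * (1 + 3 * c + 2 * s * t) := by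
  have hS : 0 < s + t + u := by positivity
  have htu : 0 < t + u := by positivity
  refine ⟨s * (s + t + u), (t + u) / (s + t + u), (2 * s + t + u) / (s + t + u),
    (1 + u ^ 2) / (t + u) ^ 2, by positivity, by positivity, ?_, ?_, by positivity, ?_,
    ?_, ?_, ?_, ?_⟩
  · rw [div_lt_one hS]; linarith
  · rw [lt_div_iff₀ hS]; linarith
  · rw [div_lt_one (by positivity)]
    nlinarith [htq, mul_pos ht hu]
  · field_simp
    linear_combination (-1) * hsq
  · field_simp
    linear_combination hsq
  · field_simp
    linear_combination (-(2*s)-3*t-3*u) * hsq + s * htq - s * huq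
  · field_simp
    linear_combination (1+u^2) * hsq + c * huq

set_option maxHeartbeats 1600000 in
/-- Corollary with constant bounds depending on `c`. -/
theorem corollary_constant (a : ℕ → ℂ) (c : ℝ) (hc : 0 < c)
    (ha : ∀ n : ℕ, 1 ≤ n → a n ≠ 0)
    (heven : ∀ n : ℕ, 1 ≤ n →
      1 + 3 * c + 2 * Real.sqrt c * Real.sqrt (2 * c + 1) ≤ ‖a (2 * n)‖)
    (hodd : ∀ n : ℕ, 1 ≤ n → ‖a (2 * n + 1)‖ ≤ c)
    (A B : ℕ → ℂ)
    (hA0 : A 0 = 1) (hA1 : A 1 = 0) (hB0 : B 0 = 0) (hB1 : B 1 = 1)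
    (hArec : ∀ N : ℕ, 1 ≤ N → A (N + 1) = A N + a N * A (N - 1))
    (hBrec : ∀ N : ℕ, 1 ≤ N → B (N + 1) = B N + a N * B (N - 1)) :
    ∃ L : ℂ, Tendsto (fun N : ℕ => A (N + 1) / B (N + 1)) atTop (𝓝 L) := by
  obtain ⟨M, m, mp, q, hM, hm0, hm1, hmp1, hq0, hq1, hmM, hmpM, hfix, hqid⟩ :=
    cf_aux c (Real.sqrt c) (Real.sqrt (2 * c + 1))
      (Real.sqrt (3 * c + 2 * Real.sqrt c * Real.sqrt (2 * c + 1))) hc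
      (Real.sqrt_pos.2 hc) (Real.sqrt_pos.2 (by linarith))
      (Real.sqrt_pos.2 (by positivity)) (Real.sq_sqrt hc.le)
      (Real.sq_sqrt (by linarith)) (Real.sq_sqrt (by positivity))
  have hmp0 : 0 < mp := lt_trans one_pos hmp1
  set Ac : ℝ := 1 + 3 * c + 2 * Real.sqrt c * Real.sqrt (2 * c + 1) with hAc_def
  have hAmp : Ac - mp = mp * M := by rw [hfix]; ring
  have hmpA : mp < Ac := by nlinarith [mul_pos hmp0 hM]
  -- scalar step inequalities
  have R7 : ∀ x : ℝ, Ac ≤ x → c * x * mp ^ 2 ≤ q * m ^ 2 * (x - mp) ^ 2 := by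
    intro x hx
    have h1 : 0 ≤ (x - Ac) * (Ac * x - mp ^ 2) := by
      apply mul_nonneg (by linarith)
      nlinarith [hmpA, hmp1]
    have hM2 : (0:ℝ) < M ^ 2 := by positivity
    have key : c * x * mp ^ 2 * M ^ 2 ≤ q * m ^ 2 * (x - mp) ^ 2 * M ^ 2 := by
      have e1 : q * m ^ 2 * (x - mp) ^ 2 * M ^ 2 = (q * (m * M) ^ 2) * (x - mp) ^ 2 := by
        ring
      have e2 : c * x * mp ^ 2 * M ^ 2 = c * x * (mp * M) ^ 2 := by ring
      rw [e1, e2, hqid, ← hAmp]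
      nlinarith [h1, hc]
    exact le_of_mul_le_mul_right key hM2
  have R8 : ∀ x : ℝ, Ac ≤ x → c * mp * x ≤ q * m ^ 2 * M * (x - mp) := by
    intro x hx
    have key : c * mp * x * M ≤ q * m ^ 2 * M * (x - mp) * M := by
      have e1 : q * m ^ 2 * M * (x - mp) * M = (q * (m * M) ^ 2) * (x - mp) := by ring
      rw [e1, hqid]
      have h2 : mp * M * x ≤ Ac * (x - mp) := by nlinarith [hfix, hmp0, hmpA]
      nlinarith [h2, hc]
    exact le_of_mul_le_mul_right key hM
  -- shifted recurrences
  have hB2 : ∀ j : ℕ, B (j + 2) = B (j + 1) + a (j + 1) * B j := by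
    intro j
    have h := hBrec (j + 1) (by omega)
    simpa using h
  have hA2 : ∀ j : ℕ, A (j + 2) = A (j + 1) + a (j + 1) * A j := by
    intro j
    have h := hArec (j + 1) (by omega)
    simpa using h
  set P : ℕ → ℝ := fun k => ‖B k‖ with hP_def
  have hPnonneg : ∀ k, 0 ≤ P k := fun k => norm_nonneg _
  have hP1 : P 1 = 1 := by simp [hP_def, hB1]
  have hPB2 : P 2 = 1 := by
    have h2 : B 2 = 1 := by rw [hB2 0, hB0, hB1]; ring
    simp [hP_def, h2]
  have sub_le : ∀ x y : ℂ, ‖x - y‖ ≤ ‖x‖ + ‖y‖ := by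
    intro x y
    simpa [sub_eq_add_neg, map_neg] using norm_add_le x (-y)
  -- triangle inequalities
  have tri_low : ∀ j : ℕ, P (j + 1) - ‖a (j + 1)‖ * P j ≤ P (j + 2) := by
    intro j
    have h : P (j + 1) ≤ P (j + 2) + ‖a (j + 1)‖ * P j := by
      calc P (j + 1) = ‖B (j + 2) - a (j + 1) * B j‖ := by
            rw [hB2 j]; ring_nf; rfl
        _ ≤ ‖B (j + 2)‖ + ‖a (j + 1) * B j‖ := sub_le _ _
        _ = P (j + 2) + ‖a (j + 1)‖ * P j := by rw [norm_mul]
    linarith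
  have tri_low' : ∀ j : ℕ, ‖a (j + 1)‖ * P j - P (j + 1) ≤ P (j + 2) := by
    intro j
    have h : ‖a (j + 1)‖ * P j ≤ P (j + 2) + P (j + 1) := by
      calc ‖a (j + 1)‖ * P j = ‖B (j + 2) - B (j + 1)‖ := by
            rw [hB2 j, ← norm_mul]; ring_nf
        _ ≤ ‖B (j + 2)‖ + ‖B (j + 1)‖ := sub_le _ _
    linarith
  have tri_up : ∀ j : ℕ, P (j + 2) ≤ P (j + 1) + ‖a (j + 1)‖ * P j := by
    intro j
    rw [hP_def]
    simp only
    rw [hB2 j]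
    calc ‖B (j + 1) + a (j + 1) * B j‖
        ≤ ‖B (j + 1)‖ + ‖a (j + 1) * B j‖ :=
          norm_add_le _ _
      _ = ‖B (j + 1)‖ + ‖a (j + 1)‖ * ‖B j‖ := by
          rw [norm_mul]
  -- even index bounds on |a|
  have habs_even : ∀ n : ℕ, 1 ≤ n → Ac ≤ ‖a (2 * n)‖ := fun n hn => heven n hn
  -- even step
  have evenStep : ∀ n : ℕ, m * P (2 * n + 1) ≤ P (2 * n + 2) →
      P (2 * n + 2) ≤ mp * P (2 * n + 1) → 0 < P (2 * n + 1) →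
      (‖a (2 * n + 2)‖ - mp) * P (2 * n + 2) ≤ mp * P (2 * n + 3) ∧
      M * P (2 * n + 2) ≤ P (2 * n + 3) ∧ 0 < P (2 * n + 2) := by
    intro n hlow hup hpos
    have hx : Ac ≤ ‖a (2 * n + 2)‖ := by
      have h := habs_even (n + 1) (by omega)
      have e : 2 * (n + 1) = 2 * n + 2 := by ring
      rwa [e] at h
    have hpos2 : 0 < P (2 * n + 2) := lt_of_lt_of_le (by positivity) hlow
    have htl := tri_low' (2 * n + 1)
    have ee1 : 2 * n + 1 + 1 = 2 * n + 2 := by ring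
    have ee2 : 2 * n + 1 + 2 = 2 * n + 3 := by ring
    rw [ee1, ee2] at htl
    have hxpos : (0:ℝ) ≤ ‖a (2 * n + 2)‖ := norm_nonneg _
    have h1 : (‖a (2 * n + 2)‖ - mp) * P (2 * n + 2) ≤ mp * P (2 * n + 3) := by
      nlinarith [mul_le_mul_of_nonneg_left hup hxpos, htl, hmp0, hpos2,
        hPnonneg (2 * n + 3), hmp1]
    refine ⟨h1, ?_, hpos2⟩
    have h2 : mp * (M * P (2 * n + 2)) ≤ mp * P (2 * n + 3) := by
      have h3 : mp * M ≤ ‖a (2 * n + 2)‖ - mp := by rw [← hAmp]; linarith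
      calc mp * (M * P (2 * n + 2)) = (mp * M) * P (2 * n + 2) := by ring
        _ ≤ (‖a (2 * n + 2)‖ - mp) * P (2 * n + 2) :=
            mul_le_mul_of_nonneg_right h3 hpos2.le
        _ ≤ mp * P (2 * n + 3) := h1
    exact le_of_mul_le_mul_left h2 hmp0
  -- odd step
  have oddStep : ∀ n : ℕ, M * P (2 * n + 2) ≤ P (2 * n + 3) → 0 < P (2 * n + 2) →
      m * P (2 * n + 3) ≤ P (2 * n + 4) ∧ P (2 * n + 4) ≤ mp * P (2 * n + 3) ∧
      0 < P (2 * n + 3) := by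
    intro n hlow hpos
    have hy : ‖a (2 * n + 3)‖ ≤ c := by
      have h := hodd (n + 1) (by omega)
      have e : 2 * (n + 1) + 1 = 2 * n + 3 := by ring
      rwa [e] at h
    have hy0 : (0:ℝ) ≤ ‖a (2 * n + 3)‖ := norm_nonneg _
    have hpos3 : 0 < P (2 * n + 3) := lt_of_lt_of_le (by positivity) hlow
    have htl := tri_low (2 * n + 2)
    have htu := tri_up (2 * n + 2)
    have ee1 : 2 * n + 2 + 1 = 2 * n + 3 := by ring
    have ee2 : 2 * n + 2 + 2 = 2 * n + 4 := by ring
    rw [ee1, ee2] at htl htu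
    have hcP : c * (M * P (2 * n + 2)) ≤ c * P (2 * n + 3) :=
      mul_le_mul_of_nonneg_left hlow hc.le
    have haP : ‖a (2 * n + 3)‖ * P (2 * n + 2) ≤ c * P (2 * n + 2) :=
      mul_le_mul_of_nonneg_right hy (hPnonneg _)
    have t1 : M * (P (2 * n + 3) - ‖a (2 * n + 3)‖ * P (2 * n + 2)) ≤
        M * P (2 * n + 4) := mul_le_mul_of_nonneg_left htl hM.le
    have t1' : M * P (2 * n + 4) ≤
        M * (P (2 * n + 3) + ‖a (2 * n + 3)‖ * P (2 * n + 2)) :=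
      mul_le_mul_of_nonneg_left htu hM.le
    have t2 : M * (‖a (2 * n + 3)‖ * P (2 * n + 2)) ≤ M * (c * P (2 * n + 2)) :=
      mul_le_mul_of_nonneg_left haP hM.le
    refine ⟨?_, ?_, hpos3⟩
    · have key : M * (m * P (2 * n + 3)) ≤ M * P (2 * n + 4) := by
        have e : M * (m * P (2 * n + 3)) = (M - c) * P (2 * n + 3) := by
          rw [← hmM]; ring
        rw [e]
        nlinarith [t1, t2, hcP]
      exact le_of_mul_le_mul_left key hM
    · have key : M * P (2 * n + 4) ≤ M * (mp * P (2 * n + 3)) := by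
        have e : M * (mp * P (2 * n + 3)) = (M + c) * P (2 * n + 3) := by
          rw [← hmpM]; ring
        rw [e]
        nlinarith [t1', t2, hcP]
      exact le_of_mul_le_mul_left key hM
  -- the full invariant
  have G : ∀ n : ℕ,
      (m * P (2 * n + 1) ≤ P (2 * n + 2) ∧ P (2 * n + 2) ≤ mp * P (2 * n + 1) ∧
        0 < P (2 * n + 1)) ∧
      ((‖a (2 * n + 2)‖ - mp) * P (2 * n + 2) ≤ mp * P (2 * n + 3) ∧
        M * P (2 * n + 2) ≤ P (2 * n + 3) ∧ 0 < P (2 * n + 2)) := by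
    intro n
    induction n with
    | zero =>
      have hodd0 : m * P (2 * 0 + 1) ≤ P (2 * 0 + 2) ∧ P (2 * 0 + 2) ≤ mp * P (2 * 0 + 1) ∧
          0 < P (2 * 0 + 1) := by
        norm_num [hP1, hPB2]
        exact ⟨hm1.le, hmp1.le⟩
      exact ⟨hodd0, evenStep 0 hodd0.1 hodd0.2.1 hodd0.2.2⟩
    | succ n ih =>
      obtain ⟨-, he⟩ := ih
      have ho : m * P (2 * (n + 1) + 1) ≤ P (2 * (n + 1) + 2) ∧
          P (2 * (n + 1) + 2) ≤ mp * P (2 * (n + 1) + 1) ∧ 0 < P (2 * (n + 1) + 1) := by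
        have h := oddStep n he.2.1 he.2.2
        have e1 : 2 * (n + 1) + 1 = 2 * n + 3 := by ring
        have e2 : 2 * (n + 1) + 2 = 2 * n + 4 := by ring
        rw [e1, e2]
        exact ⟨h.1, h.2.1, h.2.2⟩
      exact ⟨ho, evenStep (n + 1) ho.1 ho.2.1 ho.2.2⟩
  have hPpos : ∀ k : ℕ, 1 ≤ k → 0 < P k := by
    intro k hk
    rcases Nat.even_or_odd k with ⟨j, hj⟩ | ⟨j, hj⟩
    · obtain ⟨j', hj'⟩ : ∃ j', k = 2 * j' + 2 := ⟨j - 1, by omega⟩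
      rw [hj']; exact (G j').2.2.2
    · have e : k = 2 * j + 1 := by omega
      rw [e]; exact (G j).1.2.2
  -- scalar chains
  have chainEven : ∀ y x p2 p3 p4 p5 : ℝ, 0 ≤ y → y ≤ c → Ac ≤ x → 0 ≤ p2 → 0 ≤ p3 →
      0 ≤ p4 → 0 ≤ p5 → M * p2 ≤ p3 → m * p3 ≤ p4 → (x - mp) * p4 ≤ mp * p5 →
      y * x * (p2 * p3) ≤ q * (p4 * p5) := by
    intro y x p2 p3 p4 p5 hy0 hy hx hp2 hp3 hp4 hp5 h23 h34 h45
    have hx0 : (0:ℝ) ≤ x := le_trans (by positivity) hx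
    have hxmp : (0:ℝ) ≤ x - mp := by linarith
    have hMmp : (0:ℝ) < M * mp := by positivity
    have key : y * x * (p2 * p3) * (M * mp) ≤ q * (p4 * p5) * (M * mp) := by
      calc y * x * (p2 * p3) * (M * mp) = (y * (M * p2)) * (x * p3 * mp) := by ring
        _ ≤ (c * p3) * (x * p3 * mp) := by
            apply mul_le_mul_of_nonneg_right
            · exact mul_le_mul hy h23 (by positivity) hc.le
            · positivity
        _ = (c * mp * x) * p3 ^ 2 := by ring
        _ ≤ (q * m ^ 2 * M * (x - mp)) * p3 ^ 2 :=
            mul_le_mul_of_nonneg_right (R8 x hx) (by positivity)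
        _ = (q * M) * (((x - mp) * (m * p3)) * (m * p3)) := by ring
        _ ≤ (q * M) * (((x - mp) * p4) * p4) := by
            apply mul_le_mul_of_nonneg_left _ (by positivity)
            exact mul_le_mul (mul_le_mul_of_nonneg_left h34 hxmp) h34 (by positivity)
              (by positivity)
        _ ≤ (q * M) * ((mp * p5) * p4) := by
            apply mul_le_mul_of_nonneg_left _ (by positivity)
            exact mul_le_mul_of_nonneg_right h45 hp4
        _ = q * (p4 * p5) * (M * mp) := by ring
    exact le_of_mul_le_mul_right key hMmp
  have chainOdd : ∀ y x p1 p2 p3 p4 : ℝ, 0 ≤ y → y ≤ c → Ac ≤ x → 0 ≤ p1 → 0 ≤ p2 →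
      0 ≤ p3 → 0 ≤ p4 → m * p1 ≤ p2 → (x - mp) * p2 ≤ mp * p3 → m * p3 ≤ p4 →
      x * y * (p1 * p2) ≤ q * (p3 * p4) := by
    intro y x p1 p2 p3 p4 hy0 hy hx hp1 hp2 hp3 hp4 h12 h23 h34
    have hx0 : (0:ℝ) ≤ x := le_trans (by positivity) hx
    have hxmp : (0:ℝ) ≤ x - mp := by linarith
    have hmmp : (0:ℝ) < m * mp ^ 2 := by positivity
    have key : x * y * (p1 * p2) * (m * mp ^ 2) ≤ q * (p3 * p4) * (m * mp ^ 2) := by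
      calc x * y * (p1 * p2) * (m * mp ^ 2) = (y * (m * p1)) * (x * p2 * mp ^ 2) := by ring
        _ ≤ (c * p2) * (x * p2 * mp ^ 2) := by
            apply mul_le_mul_of_nonneg_right
            · exact mul_le_mul hy h12 (by positivity) hc.le
            · positivity
        _ = (c * x * mp ^ 2) * p2 ^ 2 := by ring
        _ ≤ (q * m ^ 2 * (x - mp) ^ 2) * p2 ^ 2 :=
            mul_le_mul_of_nonneg_right (R7 x hx) (by positivity)
        _ = (q * m ^ 2) * (((x - mp) * p2) * ((x - mp) * p2)) := by ring
        _ ≤ (q * m ^ 2) * ((mp * p3) * (mp * p3)) := by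
            apply mul_le_mul_of_nonneg_left _ (by positivity)
            exact mul_le_mul h23 h23 (by positivity) (by positivity)
        _ = (q * mp ^ 2) * ((m * p3) * (m * p3)) := by ring
        _ ≤ (q * mp ^ 2) * (p4 * (m * p3)) := by
            apply mul_le_mul_of_nonneg_left _ (by positivity)
            exact mul_le_mul_of_nonneg_right h34 (by positivity)
        _ = q * (p3 * p4) * (m * mp ^ 2) := by ring
    exact le_of_mul_le_mul_right key hmmp
  -- contraction claim
  have claim : ∀ N : ℕ, 1 ≤ N →
      ‖a (N + 1)‖ * ‖a (N + 2)‖ * (P N * P (N + 1)) ≤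
        q * (P (N + 2) * P (N + 3)) := by
    intro N hN
    rcases Nat.even_or_odd N with ⟨j, hj⟩ | ⟨j, hj⟩
    · -- N = 2n + 2
      obtain ⟨n, hn⟩ : ∃ n, N = 2 * n + 2 := ⟨j - 1, by omega⟩
      subst hn
      obtain ⟨-, hev⟩ := G n
      obtain ⟨hod', hev'⟩ := G (n + 1)
      have e1 : 2 * (n + 1) + 1 = 2 * n + 3 := by ring
      have e2 : 2 * (n + 1) + 2 = 2 * n + 4 := by ring
      have e3 : 2 * (n + 1) + 3 = 2 * n + 5 := by ring
      rw [e1, e2] at hod'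
      rw [e2, e3] at hev'
      have hx : Ac ≤ ‖a (2 * n + 4)‖ := by
        have h := habs_even (n + 2) (by omega)
        have e : 2 * (n + 2) = 2 * n + 4 := by ring
        rwa [e] at h
      have hy : ‖a (2 * n + 3)‖ ≤ c := by
        have h := hodd (n + 1) (by omega)
        have e : 2 * (n + 1) + 1 = 2 * n + 3 := by ring
        rwa [e] at h
      have goal := chainEven (‖a (2 * n + 3)‖) (‖a (2 * n + 4)‖)
        (P (2 * n + 2)) (P (2 * n + 3)) (P (2 * n + 4)) (P (2 * n + 5))
        (norm_nonneg _) hy hx (hPnonneg _) (hPnonneg _) (hPnonneg _) (hPnonneg _)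
        hev.2.1 hod'.1 hev'.1
      have e4 : 2 * n + 2 + 1 = 2 * n + 3 := by ring
      have e5 : 2 * n + 2 + 2 = 2 * n + 4 := by ring
      have e6 : 2 * n + 2 + 3 = 2 * n + 5 := by ring
      rw [e4, e5, e6]
      exact goal
    · -- N = 2n + 1
      obtain ⟨n, hn⟩ : ∃ n, N = 2 * n + 1 := ⟨j, by omega⟩
      subst hn
      obtain ⟨hod, hev⟩ := G n
      obtain ⟨hod', -⟩ := G (n + 1)
      have e1 : 2 * (n + 1) + 1 = 2 * n + 3 := by ring
      have e2 : 2 * (n + 1) + 2 = 2 * n + 4 := by ring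
      rw [e1, e2] at hod'
      have hx : Ac ≤ ‖a (2 * n + 2)‖ := by
        have h := habs_even (n + 1) (by omega)
        have e : 2 * (n + 1) = 2 * n + 2 := by ring
        rwa [e] at h
      have hy : ‖a (2 * n + 3)‖ ≤ c := by
        have h := hodd (n + 1) (by omega)
        have e : 2 * (n + 1) + 1 = 2 * n + 3 := by ring
        rwa [e] at h
      have goal := chainOdd (‖a (2 * n + 3)‖) (‖a (2 * n + 2)‖)
        (P (2 * n + 1)) (P (2 * n + 2)) (P (2 * n + 3)) (P (2 * n + 4))
        (norm_nonneg _) hy hx (hPnonneg _) (hPnonneg _) (hPnonneg _) (hPnonneg _)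
        hod.1 hev.1 hod'.1
      have e4 : 2 * n + 1 + 1 = 2 * n + 2 := by ring
      have e5 : 2 * n + 1 + 2 = 2 * n + 3 := by ring
      have e6 : 2 * n + 1 + 3 = 2 * n + 4 := by ring
      rw [e4, e5, e6]
      calc ‖a (2 * n + 2)‖ * ‖a (2 * n + 3)‖ *
            (P (2 * n + 1) * P (2 * n + 2)) =
          ‖a (2 * n + 3)‖ * ‖a (2 * n + 2)‖ *
            (P (2 * n + 1) * P (2 * n + 2)) := by ring
        _ ≤ q * (P (2 * n + 3) * P (2 * n + 4)) := by
            have e : ‖a (2 * n + 3)‖ * ‖a (2 * n + 2)‖ *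
                (P (2 * n + 1) * P (2 * n + 2)) =
                ‖a (2 * n + 2)‖ * ‖a (2 * n + 3)‖ *
                (P (2 * n + 1) * P (2 * n + 2)) := by ring
            rw [e]
            exact goal
  -- determinant
  set D : ℕ → ℂ := fun k => A (k + 1) * B k - A k * B (k + 1) with hD_def
  have hDrec : ∀ j : ℕ, D (j + 1) = -(a (j + 1)) * D j := by
    intro j
    simp only [hD_def]
    rw [hA2 j, hB2 j]
    ring
  have hDabs : ∀ j : ℕ, ‖D (j + 1)‖ = ‖a (j + 1)‖ *
      ‖D j‖ := by
    intro j
    rw [hDrec j, norm_mul, norm_neg]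
  set g : ℕ → ℝ := fun k => ‖D k‖ / (P k * P (k + 1)) with hg_def
  have hgnonneg : ∀ k, 0 ≤ g k := by
    intro k
    apply div_nonneg (norm_nonneg _)
    exact mul_nonneg (hPnonneg _) (hPnonneg _)
  -- g contraction
  have gstep : ∀ N : ℕ, 1 ≤ N → g (N + 2) ≤ q * g N := by
    intro N hN
    have hden1 : 0 < P N * P (N + 1) :=
      mul_pos (hPpos N hN) (hPpos (N + 1) (by omega))
    have hden2 : 0 < P (N + 2) * P (N + 3) :=
      mul_pos (hPpos (N + 2) (by omega)) (hPpos (N + 3) (by omega))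
    have hD2 : ‖D (N + 2)‖ =
        ‖a (N + 2)‖ * (‖a (N + 1)‖ * ‖D N‖) := by
      rw [hDabs (N + 1), hDabs N]
    have hcl := claim N hN
    have hmul := mul_le_mul_of_nonneg_left hcl (norm_nonneg (D N))
    have key : ‖D (N + 2)‖ * (P N * P (N + 1)) ≤
        ‖D N‖ * (q * (P (N + 2) * P (N + 3))) := by
      calc ‖D (N + 2)‖ * (P N * P (N + 1)) =
          ‖D N‖ * (‖a (N + 1)‖ * ‖a (N + 2)‖ *
            (P N * P (N + 1))) := by rw [hD2]; ring
        _ ≤ ‖D N‖ * (q * (P (N + 2) * P (N + 3))) := hmul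
    show ‖D (N + 2)‖ / (P (N + 2) * P (N + 2 + 1)) ≤
      q * (‖D N‖ / (P N * P (N + 1)))
    have e : N + 2 + 1 = N + 3 := by ring
    rw [e, ← mul_div_assoc, div_le_div_iff₀ hden2 hden1]
    calc ‖D (N + 2)‖ * (P N * P (N + 1)) ≤
        ‖D N‖ * (q * (P (N + 2) * P (N + 3))) := key
      _ = q * ‖D N‖ * (P (N + 2) * P (N + 3)) := by ring
  -- geometric bound
  set r : ℝ := Real.sqrt q with hr_def
  have hr0 : 0 < r := Real.sqrt_pos.2 hq0
  have hr2 : r ^ 2 = q := Real.sq_sqrt hq0.le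
  have hr1 : r < 1 := by nlinarith [hr0, hr2]
  set K : ℝ := max (g 1 / r) (g 2 / r ^ 2) with hK_def
  have hK1 : g 1 ≤ K * r := by
    have h := le_max_left (g 1 / r) (g 2 / r ^ 2)
    calc g 1 = g 1 / r * r := by field_simp
      _ ≤ K * r := mul_le_mul_of_nonneg_right h hr0.le
  have hK2 : g 2 ≤ K * r ^ 2 := by
    have h := le_max_right (g 1 / r) (g 2 / r ^ 2)
    calc g 2 = g 2 / r ^ 2 * r ^ 2 := by
          field_simp
      _ ≤ K * r ^ 2 := mul_le_mul_of_nonneg_right h (by positivity)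
  have geo : ∀ n : ℕ, g (n + 1) ≤ K * r ^ (n + 1) ∧ g (n + 2) ≤ K * r ^ (n + 2) := by
    intro n
    induction n with
    | zero => exact ⟨by simpa using hK1, by simpa using hK2⟩
    | succ n ih =>
      refine ⟨ih.2, ?_⟩
      have h := gstep (n + 1) (by omega)
      calc g (n + 1 + 2) ≤ q * g (n + 1) := h
        _ ≤ q * (K * r ^ (n + 1)) := mul_le_mul_of_nonneg_left ih.1 hq0.le
        _ = K * r ^ (n + 1 + 2) := by rw [← hr2]; ring
  -- from g to distances
  have hBne : ∀ k : ℕ, 1 ≤ k → B k ≠ 0 := by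
    intro k hk
    have h := hPpos k hk
    rw [hP_def] at h
    simp only at h
    exact norm_ne_zero_iff.1 (ne_of_gt h)
  have hdist : ∀ N : ℕ, dist (A (N + 1) / B (N + 1)) (A (N + 1 + 1) / B (N + 1 + 1)) ≤
      (K * r) * r ^ N := by
    intro N
    have hb1 : B (N + 1) ≠ 0 := hBne (N + 1) (by omega)
    have hb2 : B (N + 2) ≠ 0 := hBne (N + 2) (by omega)
    have hdiff : A (N + 1) / B (N + 1) - A (N + 1 + 1) / B (N + 1 + 1) =
        -(D (N + 1) / (B (N + 1) * B (N + 2))) := by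
      simp only [hD_def]
      field_simp
      ring
    rw [Complex.dist_eq, hdiff, norm_neg, norm_div, norm_mul]
    have hgN : ‖D (N + 1)‖ / (‖B (N + 1)‖ * ‖B (N + 2)‖)
        = g (N + 1) := rfl
    rw [hgN]
    calc g (N + 1) ≤ K * r ^ (N + 1) := (geo N).1
      _ = (K * r) * r ^ N := by ring
  have hcauchy : CauchySeq (fun N : ℕ => A (N + 1) / B (N + 1)) :=
    cauchySeq_of_le_geometric r (K * r) hr1 hdist
  exact cauchySeq_tendsto_of_complete hcauchy
end

section
/- Let (a_n) be a sequence of nonzero complex numbers with |a_{2n}| ≥ 36/23 and |a_{2n+1}| ≤ 1/23 for all n ≥ 1. Then the continued fraction K_{n=1}^∞ a_n/1 converges to a finite complex value. -/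
open Filter Topology Finset

/-- Example: |a_{2n}| ≥ 36/23, |a_{2n+1}| ≤ 1/23 gives convergence. -/
theorem example_36_23 (a : ℕ → ℂ)
    (ha : ∀ n : ℕ, 1 ≤ n → a n ≠ 0)
    (heven : ∀ n : ℕ, 1 ≤ n → (36 / 23 : ℝ) ≤ ‖a (2 * n)‖)
    (hodd : ∀ n : ℕ, 1 ≤ n → ‖a (2 * n + 1)‖ ≤ (1 / 23 : ℝ))
    (A B : ℕ → ℂ)
    (hA0 : A 0 = 1) (hA1 : A 1 = 0) (hB0 : B 0 = 0) (hB1 : B 1 = 1)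
    (hArec : ∀ N : ℕ, 1 ≤ N → A (N + 1) = A N + a N * A (N - 1))
    (hBrec : ∀ N : ℕ, 1 ≤ N → B (N + 1) = B N + a N * B (N - 1)) :
    ∃ L : ℂ, Tendsto (fun N : ℕ => A (N + 1) / B (N + 1)) atTop (𝓝 L) := by
  have heven' : ∀ n : ℕ, 1 ≤ n → (36 / 23 : ℝ) ≤ ‖a (2 * n)‖ := fun n hn => by
    exact heven n hn
  have hodd' : ∀ n : ℕ, 1 ≤ n → ‖a (2 * n + 1)‖ ≤ (1 / 23 : ℝ) := fun n hn => by
    exact hodd n hn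
  set P : ℕ → ℝ := fun n => ∏ j ∈ Icc 1 n, ‖a (2 * j)‖ with hP
  have hPsucc : ∀ n : ℕ, P (n + 1) = P n * ‖a (2 * (n + 1))‖ := by
    intro n
    simp only [hP]
    rw [Finset.prod_Icc_succ_top (by omega)]
  have hPge : ∀ n : ℕ, ((36:ℝ)/23) ^ n ≤ P n := by
    intro n
    induction n with
    | zero => simp [hP]
    | succ m ih =>
      rw [hPsucc, pow_succ]
      have h1 := heven' (m+1) (by omega)
      have h2 : (0:ℝ) ≤ ((36:ℝ)/23)^m := by positivity
      nlinarith
  have hPpos : ∀ n : ℕ, 0 < P n := fun n =>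
    lt_of_lt_of_le (by positivity) (hPge n)
  -- key induction on the denominators
  have key : ∀ n : ℕ, B (2*n+1) ≠ 0 ∧
      ‖B (2*n+2) - B (2*n+1)‖ ≤ 1/4 * ‖B (2*n+1)‖ ∧
      ((29:ℝ)/144) ^ n * P n ≤ ‖B (2*n+1)‖ := by
    intro n
    induction n with
    | zero =>
      have h2 : B 2 = 1 := by
        have := hBrec 1 le_rfl
        simp [hB0, hB1] at this
        simpa using this
      norm_num [h2, hB1, hP]
    | succ m ih =>
      obtain ⟨hEn, hdist, hlow⟩ := ih
      have hEnpos : 0 < ‖B (2*m+1)‖ := norm_pos_iff.mpr hEn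
      have hOn_ub : ‖B (2*m+2)‖ ≤ 5/4 * ‖B (2*m+1)‖ := by
        have h := norm_add_le (B (2*m+2) - B (2*m+1)) (B (2*m+1))
        rw [sub_add_cancel] at h
        linarith
      have ha2 : (36:ℝ)/23 ≤ ‖a (2*m+2)‖ := by
        have h := heven' (m+1) (by omega)
        have e : 2*(m+1) = 2*m+2 := by ring
        rwa [e] at h
      have ha3 : ‖a (2*m+3)‖ ≤ 1/23 := by
        have h := hodd' (m+1) (by omega)
        have e : 2*(m+1)+1 = 2*m+3 := by ring
        rwa [e] at h
      have hE1eq : B (2*m+3) = B (2*m+2) + a (2*m+2) * B (2*m+1) := by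
        have h := hBrec (2*m+2) (by omega)
        have e1 : 2*m+2+1 = 2*m+3 := by omega
        have e2 : 2*m+2-1 = 2*m+1 := by omega
        rw [e1, e2] at h
        exact h
      have hO1eq : B (2*m+4) = B (2*m+3) + a (2*m+3) * B (2*m+2) := by
        have h := hBrec (2*m+3) (by omega)
        have e1 : 2*m+3+1 = 2*m+4 := by omega
        have e2 : 2*m+3-1 = 2*m+2 := by omega
        rw [e1, e2] at h
        exact h
      have hlb1 : (29:ℝ)/144 * (‖a (2*m+2)‖ * ‖B (2*m+1)‖) ≤ ‖B (2*m+3)‖ := by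
        rw [hE1eq, add_comm (B (2*m+2))]
        have h := norm_sub_norm_le (a (2*m+2) * B (2*m+1)) (-B (2*m+2))
        rw [sub_neg_eq_add, norm_neg, norm_mul] at h
        have h2 := mul_le_mul_of_nonneg_right ha2 hEnpos.le
        linarith
      have ha2pos : (0:ℝ) < ‖a (2*m+2)‖ := lt_of_lt_of_le (by norm_num) ha2
      have hE1pos : 0 < ‖B (2*m+3)‖ := by
        have : (0:ℝ) < 29/144 * (‖a (2*m+2)‖ * ‖B (2*m+1)‖) := by positivity
        linarith
      have hE1ne : B (2*m+3) ≠ 0 := norm_pos_iff.mp hE1pos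
      have e3 : 2*(m+1)+1 = 2*m+3 := by omega
      have e4 : 2*(m+1)+2 = 2*m+4 := by omega
      rw [e3, e4]
      refine ⟨hE1ne, ?_, ?_⟩
      · -- |B(2m+4) - B(2m+3)| ≤ 1/4 |B(2m+3)|
        rw [hO1eq, add_sub_cancel_left, norm_mul]
        have h2 := mul_le_mul_of_nonneg_right ha2 hEnpos.le
        have h3 := mul_le_mul ha3 hOn_ub (norm_nonneg _) (by norm_num)
        linarith
      · rw [hPsucc]
        have e5 : 2*(m+1) = 2*m+2 := by ring
        rw [e5, pow_succ]
        calc ((29:ℝ)/144)^m * (29/144) * (P m * ‖a (2*m+2)‖)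
            = (29/144) * ‖a (2*m+2)‖ * (((29:ℝ)/144)^m * P m) := by ring
          _ ≤ (29/144) * ‖a (2*m+2)‖ * ‖B (2*m+1)‖ := by
              have hc : (0:ℝ) ≤ (29/144) * ‖a (2*m+2)‖ := by positivity
              exact mul_le_mul_of_nonneg_left hlow hc
          _ = (29:ℝ)/144 * (‖a (2*m+2)‖ * ‖B (2*m+1)‖) := by ring
          _ ≤ ‖B (2*m+3)‖ := hlb1
  have keyO : ∀ n : ℕ, 3/4 * ‖B (2*n+1)‖ ≤ ‖B (2*n+2)‖ := by
    intro n
    obtain ⟨h1, h2, h3⟩ := key n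
    have h := norm_add_le (B (2*n+1) - B (2*n+2)) (B (2*n+2))
    rw [sub_add_cancel, norm_sub_rev] at h
    linarith
  have hEpos : ∀ n, 0 < ‖B (2*n+1)‖ := fun n => norm_pos_iff.mpr (key n).1
  have hOpos : ∀ n, 0 < ‖B (2*n+2)‖ := fun n =>
    lt_of_lt_of_le (by linarith [hEpos n]) (keyO n)
  have hBne : ∀ k, 1 ≤ k → B k ≠ 0 := by
    intro k hk
    rcases Nat.even_or_odd k with he | ho
    · obtain ⟨r, hr⟩ := he
      have e : k = 2*(r-1)+2 := by omega
      rw [e]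
      exact norm_pos_iff.mp (hOpos (r-1))
    · obtain ⟨r, hr⟩ := ho
      rw [hr]
      exact (key r).1
  -- determinant formula
  have det : ∀ N : ℕ, ‖A (N+1) * B N - A N * B (N+1)‖ = ∏ k ∈ Icc 1 N, ‖a k‖ := by
    intro N
    induction N with
    | zero =>
      rw [hA0, hA1, hB0, hB1]
      norm_num
    | succ M ihM =>
      have hid : A (M+1+1) * B (M+1) - A (M+1) * B (M+1+1)
          = -(a (M+1) * (A (M+1) * B M - A M * B (M+1))) := by
        have hA := hArec (M+1) (by omega)
        have hB := hBrec (M+1) (by omega)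
        have e2 : M+1-1 = M := by omega
        rw [e2] at hA hB
        rw [hA, hB]; ring
      rw [hid, norm_neg, norm_mul, ihM, Finset.prod_Icc_succ_top (by omega)]
      ring
  -- product bounds
  have podd : ∀ n : ℕ, (∏ k ∈ Icc 1 (2*n+1), ‖a k‖) ≤ ‖a 1‖ * ((1:ℝ)/23)^n * P n := by
    intro n
    induction n with
    | zero => simp [hP]
    | succ m ihm =>
      have e1 : 2*(m+1)+1 = (2*m+1+1)+1 := by omega
      rw [e1, Finset.prod_Icc_succ_top (by omega), Finset.prod_Icc_succ_top (by omega)]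
      have hps : P (m+1) = P m * ‖a (2*m+1+1)‖ := by
        rw [hPsucc m, show (2*(m+1):ℕ) = 2*m+1+1 from by omega]
      have ha3 : ‖a (2*m+1+1+1)‖ ≤ 1/23 := by
        have h := hodd' (m+1) (by omega)
        have e : 2*(m+1)+1 = 2*m+1+1+1 := by omega
        rwa [e] at h
      calc (∏ k ∈ Icc 1 (2*m+1), ‖a k‖) * ‖a (2*m+1+1)‖ * ‖a (2*m+1+1+1)‖
          ≤ ((‖a 1‖ * ((1:ℝ)/23)^m * P m) * ‖a (2*m+1+1)‖) * ((1:ℝ)/23) := by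
            have h1 : (∏ k ∈ Icc 1 (2*m+1), ‖a k‖) * ‖a (2*m+1+1)‖
                ≤ (‖a 1‖ * ((1:ℝ)/23)^m * P m) * ‖a (2*m+1+1)‖ :=
              mul_le_mul_of_nonneg_right ihm (norm_nonneg _)
            have h2 : (0:ℝ) ≤ (∏ k ∈ Icc 1 (2*m+1), ‖a k‖) * ‖a (2*m+1+1)‖ := by
              apply mul_nonneg _ (norm_nonneg _)
              exact Finset.prod_nonneg fun i _ => norm_nonneg _
            have h4 : (0:ℝ) ≤ (‖a 1‖ * ((1:ℝ)/23)^m * P m) * ‖a (2*m+1+1)‖ :=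
              mul_nonneg (mul_nonneg (mul_nonneg (norm_nonneg _) (by positivity)) (hPpos m).le) (norm_nonneg _)
            exact mul_le_mul h1 ha3 (norm_nonneg _) h4
        _ = ‖a 1‖ * ((1:ℝ)/23)^(m+1) * P (m+1) := by
            rw [hps, pow_succ]; ring
  have peven : ∀ m : ℕ, (∏ k ∈ Icc 1 (2*m+1+1), ‖a k‖) ≤ ‖a 1‖ * ((1:ℝ)/23)^m * P (m+1) := by
    intro m
    rw [Finset.prod_Icc_succ_top (by omega)]
    have hps : P (m+1) = P m * ‖a (2*m+1+1)‖ := by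
      rw [hPsucc m, show (2*(m+1):ℕ) = 2*m+1+1 from by omega]
    calc (∏ k ∈ Icc 1 (2*m+1), ‖a k‖) * ‖a (2*m+1+1)‖
        ≤ (‖a 1‖ * ((1:ℝ)/23)^m * P m) * ‖a (2*m+1+1)‖ :=
          mul_le_mul_of_nonneg_right (podd m) (norm_nonneg _)
      _ = ‖a 1‖ * ((1:ℝ)/23)^m * P (m+1) := by rw [hps]; ring
  -- step distance formula
  set f : ℕ → ℂ := fun N => A (N+1) / B (N+1) with hf
  have hstep : ∀ N : ℕ, dist (f N) (f (N+1))
      = (∏ k ∈ Icc 1 (N+1), ‖a k‖) / (‖B (N+1)‖ * ‖B (N+2)‖) := by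
    intro N
    have hB1ne : B (N+1) ≠ 0 := hBne (N+1) (by omega)
    have hB2ne : B (N+1+1) ≠ 0 := hBne (N+1+1) (by omega)
    rw [dist_eq_norm]
    have hval : f N - f (N+1)
        = (A (N+1) * B (N+1+1) - A (N+1+1) * B (N+1)) / (B (N+1) * B (N+1+1)) := by
      simp only [hf]
      field_simp
    rw [hval, norm_div, norm_mul, norm_sub_rev]
    have hd := det (N+1)
    rw [hd]
  -- the base identity
  have hbase : ((24:ℝ)/29)^2 * ((29:ℝ)/144)^2 * ((36:ℝ)/23) = 1/23 := by norm_num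
  have hpow2 : ∀ (x:ℝ) (m:ℕ), (x^2)^m = x^m * x^m := by
    intro x m
    rw [← pow_mul, two_mul, pow_add]
  have hkey2 : ∀ m : ℕ, ((1:ℝ)/23)^m * P m
      ≤ (((24:ℝ)/29)^2)^m * ((((29:ℝ)/144)^m * P m) * (((29:ℝ)/144)^m * P m)) := by
    intro m
    have h36 := hPge m
    have hp := (hPpos m).le
    calc ((1:ℝ)/23)^m * P m
        = (((24:ℝ)/29)^2 * ((29:ℝ)/144)^2 * ((36:ℝ)/23))^m * P m := by rw [← hbase]
      _ = (((24:ℝ)/29)^2)^m * ((((29:ℝ)/144)^m * ((36:ℝ)/23)^m) * (((29:ℝ)/144)^m * P m)) := by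
          rw [mul_pow, mul_pow, hpow2 ((29:ℝ)/144) m]
          ring
      _ ≤ (((24:ℝ)/29)^2)^m * ((((29:ℝ)/144)^m * P m) * (((29:ℝ)/144)^m * P m)) := by
          have hinner : ((29:ℝ)/144)^m * ((36:ℝ)/23)^m ≤ ((29:ℝ)/144)^m * P m :=
            mul_le_mul_of_nonneg_left h36 (by positivity)
          have houter : (((29:ℝ)/144)^m * ((36:ℝ)/23)^m) * (((29:ℝ)/144)^m * P m)
              ≤ (((29:ℝ)/144)^m * P m) * (((29:ℝ)/144)^m * P m) :=
            mul_le_mul_of_nonneg_right hinner (mul_nonneg (by positivity) (hPpos m).le)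
          exact mul_le_mul_of_nonneg_left houter (by positivity)
  have hqpow : ∀ m : ℕ, ((24:ℝ)/29)^(2*m) = (((24:ℝ)/29)^2)^m := fun m => pow_mul _ 2 m
  -- the geometric bound
  have hbound : ∀ N : ℕ, dist (f N) (f (N+1)) ≤ (8 * ‖a 1‖) * ((24:ℝ)/29)^N := by
    intro N
    rw [hstep N]
    obtain ⟨m, hm | hm⟩ := Nat.even_or_odd' N
    · -- N = 2m
      subst hm
      rw [div_le_iff₀ (mul_pos (hEpos m) (hOpos m)), hqpow m]
      have hX1 := (key m).2.2
      have h34 : (3/4:ℝ) * (((29:ℝ)/144)^m * P m) ≤ ‖B (2*m+2)‖ := by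
        have := keyO m
        linarith [hX1]
      have hprod : (3/4:ℝ) * ((((29:ℝ)/144)^m * P m) * (((29:ℝ)/144)^m * P m))
          ≤ ‖B (2*m+1)‖ * ‖B (2*m+2)‖ := by
        have h := mul_le_mul hX1 h34 (mul_nonneg (by norm_num) (mul_nonneg (by positivity) (hPpos m).le)) (norm_nonneg _)
        nlinarith [h]
      have hc : (0:ℝ) ≤ ‖a 1‖ * (((24:ℝ)/29)^2)^m := by positivity
      have hA1 := mul_le_mul_of_nonneg_left (hkey2 m) (norm_nonneg (a 1))
      have hnum := podd m
      have h2 := mul_le_mul_of_nonneg_left hprod hc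
      have hBpos : (0:ℝ) ≤ ‖B (2*m+1)‖ * ‖B (2*m+2)‖ :=
        (mul_pos (hEpos m) (hOpos m)).le
      nlinarith [hnum, hA1, h2, mul_nonneg hc hBpos]
    · -- N = 2m+1
      subst hm
      have e1 : 2*m+1+1 = 2*m+2 := by omega
      have e2 : 2*m+1+2 = 2*m+3 := by omega
      rw [e2]
      have hX3 : ((29:ℝ)/144)^(m+1) * P (m+1) ≤ ‖B (2*m+3)‖ := by
        have h := (key (m+1)).2.2
        have e : 2*(m+1)+1 = 2*m+3 := by omega
        rwa [e] at h
      have hE1pos : (0:ℝ) < ‖B (2*m+3)‖ :=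
        lt_of_lt_of_le (mul_pos (by positivity) (hPpos (m+1))) hX3
      rw [e1, div_le_iff₀ (mul_pos (hOpos m) hE1pos)]
      have hnum := peven m
      have hX1 := (key m).2.2
      have h34 : (3/4:ℝ) * (((29:ℝ)/144)^m * P m) ≤ ‖B (2*m+2)‖ := by
        have := keyO m
        linarith [hX1]
      have ha2 : (36:ℝ)/23 ≤ ‖a (2*m+2)‖ := by
        have h := heven' (m+1) (by omega)
        have e : 2*(m+1) = 2*m+2 := by ring
        rwa [e] at h
      have ht' : ((29:ℝ)/144)^(m+1) * P (m+1)
          = (29/144) * ‖a (2*m+2)‖ * (((29:ℝ)/144)^m * P m) := by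
        rw [hPsucc m]
        have e : 2*(m+1) = 2*m+2 := by ring
        rw [e, pow_succ]
        ring
      rw [ht'] at hX3
      have hps : P (m+1) = P m * ‖a (2*m+2)‖ := by
        rw [hPsucc m, show (2*(m+1):ℕ) = 2*m+2 from by omega]
      rw [hps] at hnum
      have e6 : (2*m+1+1 : ℕ) = 2*m+2 := by omega
      rw [e6] at hnum
      have hprod2 : ((3/4:ℝ) * (((29:ℝ)/144)^m * P m))
          * ((29/144) * ‖a (2*m+2)‖ * (((29:ℝ)/144)^m * P m))
          ≤ ‖B (2*m+2)‖ * ‖B (2*m+3)‖ := by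
        exact mul_le_mul h34 hX3 (mul_nonneg (mul_nonneg (by norm_num) (norm_nonneg _)) (mul_nonneg (by positivity) (hPpos m).le)) (norm_nonneg _)
      have hc : (0:ℝ) ≤ ‖a 1‖ * (((24:ℝ)/29)^2)^m := by positivity
      have hkk := mul_le_mul_of_nonneg_left (hkey2 m)
        (mul_nonneg (norm_nonneg (a 1)) (norm_nonneg (a (2*m+2))))
      have h2 := mul_le_mul_of_nonneg_left hprod2 hc
      rw [pow_succ, hqpow m]
      have hBpos : (0:ℝ) ≤ ‖B (2*m+2)‖ * ‖B (2*m+3)‖ :=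
        (mul_pos (hOpos m) hE1pos).le
      nlinarith [hnum, hkk, h2, mul_nonneg hc hBpos]
  have hC : CauchySeq f :=
    cauchySeq_of_le_geometric ((24:ℝ)/29) (8 * ‖a 1‖) (by norm_num) hbound
  obtain ⟨L, hL⟩ := cauchySeq_tendsto_of_complete hC
  exact ⟨L, hL⟩
end

section
/- For c > 0, set β = 2(√c·√(2c+1) − c)/(c+1). Then 0 < β < 1, and (c+1)/(1−β) ≤ 1 + 3c + 2√c·√(2c+1), and c ≤ β²(c+1)/(4(1−β)). (These are the verifications needed to apply the main convergence theorem with constant sequences c_n = c, β_n = β.) -/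
/-- Verification of the hypotheses of the main theorem for constant sequences. -/
theorem beta_verification (c : ℝ) (hc : 0 < c) :
    let β := 2 * (Real.sqrt c * Real.sqrt (2 * c + 1) - c) / (c + 1)
    0 < β ∧ β < 1 ∧
      (c + 1) / (1 - β) ≤ 1 + 3 * c + 2 * Real.sqrt c * Real.sqrt (2 * c + 1) ∧
      c ≤ β ^ 2 * (c + 1) / (4 * (1 - β)) := by
  intro β
  set s := Real.sqrt c * Real.sqrt (2 * c + 1) with hs
  have hs0 : 0 ≤ s := mul_nonneg (Real.sqrt_nonneg _) (Real.sqrt_nonneg _)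
  have hs2 : s ^ 2 = c * (2 * c + 1) := by
    rw [hs, mul_pow, Real.sq_sqrt hc.le, Real.sq_sqrt (by linarith)]
  have hc1 : (0:ℝ) < c + 1 := by linarith
  have hcs : c < s := by nlinarith [hs2, hs0]
  have h2s : 2 * s < 3 * c + 1 := by nlinarith [hs2, hs0]
  have hβpos : 0 < β := div_pos (by linarith) hc1
  have hβlt : β < 1 := by
    rw [div_lt_one hc1]; linarith
  have h1β : 1 - β = (3 * c + 1 - 2 * s) / (c + 1) := by
    simp only [β, hs]; field_simp; ring
  have h1βpos : 0 < 1 - β := by rw [h1β]; exact div_pos (by linarith) hc1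
  have hrw : 2 * Real.sqrt c * Real.sqrt (2 * c + 1) = 2 * s := by rw [hs]; ring
  refine ⟨hβpos, hβlt, ?_, ?_⟩
  · rw [div_le_iff₀ h1βpos, h1β, hrw, ← mul_div_assoc, le_div_iff₀ hc1]
    nlinarith [hs2]
  · have heq : β ^ 2 * (c + 1) / (4 * (1 - β)) = c := by
      have hb : β = 2 * (s - c) / (c + 1) := rfl
      rw [hb, h1β]
      have h3 : 3 * c + 1 - 2 * s ≠ 0 := by linarith
      clear_value β s
      field_simp
      rw [div_eq_iff (by linarith)]
      linear_combination 4 * hs2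
    rw [heq]
end

section
/- Let (a_n) be a sequence of complex numbers satisfying the hypotheses of the main theorem (there exist sequences c_n > 0 and 0 < β_n < 1 with |a_{2n}| ≥ (c_n+1)/(1−β_n) and |a_{2n+1}| ≤ min{c_n, c_{n+1}, β_n β_{n+1}(c_{n+1}+1)/(4(1−β_{n+1})), β_n β_{n+1}(c_n+1)/(4(1−β_n))} for all n ≥ 1). Then the canonical denominators B_n of K_{n=1}^∞ a_n/1 satisfy |B_{2n+1}/B_{2n}| ≤ 3 for all n ≥ 1. -/
set_option maxHeartbeats 1600000 in
/-- Under the hypotheses of the main theorem, |B_{2n+1}/B_{2n}| ≤ 3.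
Indexing: `B (N+1)` is the `N`-th canonical denominator (so `B 0 = B_{-1} = 0`). -/
theorem denominator_ratio_bound (a : ℕ → ℂ) (c β : ℕ → ℝ)
    (ha : ∀ n : ℕ, 1 ≤ n → a n ≠ 0)
    (hc : ∀ n : ℕ, 1 ≤ n → 0 < c n)
    (hβ : ∀ n : ℕ, 1 ≤ n → 0 < β n ∧ β n < 1)
    (heven : ∀ n : ℕ, 1 ≤ n → (c n + 1) / (1 - β n) ≤ ‖a (2 * n)‖)
    (hodd : ∀ n : ℕ, 1 ≤ n →
      ‖a (2 * n + 1)‖ ≤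
        min (min (c n) (c (n + 1)))
          (min (β n * β (n + 1) * (c (n + 1) + 1) / (4 * (1 - β (n + 1))))
               (β n * β (n + 1) * (c n + 1) / (4 * (1 - β n)))))
    (B : ℕ → ℂ)
    (hB0 : B 0 = 0) (hB1 : B 1 = 1)
    (hBrec : ∀ N : ℕ, 1 ≤ N → B (N + 1) = B N + a N * B (N - 1)) :
    ∀ n : ℕ, 1 ≤ n → ‖B (2 * n + 2) / B (2 * n + 1)‖ ≤ 3 := by
  -- Step lemma: from the ratio invariant, bound the next odd-indexed denominator.
  have step : ∀ n : ℕ, 1 ≤ n →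
      ‖B (2*n)‖ ≤ 2*(1 - β n)/(β n * (c n + 1)) * ‖B (2*n+1)‖ →
      ‖B (2*n+2)‖ ≤ (1 + β (n+1)/2) * ‖B (2*n+1)‖ := by
    intro n hn hu
    obtain ⟨hβ0, hβ1⟩ := hβ n hn
    obtain ⟨hβ0', hβ1'⟩ := hβ (n+1) (by omega)
    have hc0 := hc n hn
    have h1β : (0:ℝ) < 1 - β n := by linarith
    have hA1 : ‖a (2*n+1)‖ ≤ β n * β (n+1) * (c n + 1) / (4 * (1 - β n)) :=
      le_trans (hodd n hn) (le_trans (min_le_right _ _) (min_le_right _ _))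
    have hrec := hBrec (2*n+1) (by omega)
    have h2n : 2*n+1-1 = 2*n := by omega
    rw [h2n] at hrec
    have htri : ‖B (2*n+2)‖ ≤
        ‖B (2*n+1)‖ + ‖a (2*n+1)‖ * ‖B (2*n)‖ := by
      rw [hrec, ← norm_mul]
      exact norm_add_le _ _
    have hA1u : ‖a (2*n+1)‖ * ‖B (2*n)‖ ≤
        (β (n+1)/2) * ‖B (2*n+1)‖ := by
      have hnn : (0:ℝ) ≤ β n * β (n+1) * (c n + 1) / (4 * (1 - β n)) := by
        apply div_nonneg
        · exact mul_nonneg (mul_nonneg hβ0.le hβ0'.le) (by linarith)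
        · linarith
      have h1 : ‖a (2*n+1)‖ * ‖B (2*n)‖ ≤
          (β n * β (n+1) * (c n + 1) / (4 * (1 - β n))) *
          (2*(1 - β n)/(β n * (c n + 1)) * ‖B (2*n+1)‖) :=
        mul_le_mul hA1 hu (norm_nonneg _) hnn
      refine h1.trans (le_of_eq ?_)
      have hβne : β n ≠ 0 := ne_of_gt hβ0
      have hcne : c n + 1 ≠ 0 := by positivity
      have h1βne : (1:ℝ) - β n ≠ 0 := ne_of_gt h1β
      field_simp
      ring
    linarith
  -- Main invariant by induction.
  have key : ∀ n : ℕ, 1 ≤ n → 0 < ‖B (2*n+1)‖ ∧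
      ‖B (2*n)‖ ≤ 2*(1 - β n)/(β n * (c n + 1)) * ‖B (2*n+1)‖ := by
    intro n hn
    induction n, hn using Nat.le_induction with
    | base =>
      obtain ⟨hβ0, hβ1⟩ := hβ 1 le_rfl
      have hc0 := hc 1 le_rfl
      have h1β : (0:ℝ) < 1 - β 1 := by linarith
      have hB2 : B 2 = 1 := by
        have h := hBrec 1 le_rfl
        norm_num [hB0, hB1] at h
        exact h
      have hB3 : B 3 = 1 + a 2 := by
        have h := hBrec 2 (by omega)
        norm_num [hB1, hB2] at h
        exact h
      have ha2 : (c 1 + 1) / (1 - β 1) ≤ ‖a 2‖ := by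
        have := heven 1 le_rfl
        norm_num at this
        exact this
      have hrev : ‖a 2‖ - 1 ≤ ‖B 3‖ := by
        have t := norm_add_le (1 + a 2) (-1)
        have e : (1 + a 2) + (-1) = a 2 := by ring
        rw [e] at t
        simp only [norm_neg, norm_one] at t
        rw [hB3]
        linarith
      have hx : (1:ℝ) < (c 1 + 1) / (1 - β 1) := by
        rw [lt_div_iff₀ h1β]
        linarith
      have hB3pos : 0 < ‖B 3‖ := by
        have : (c 1 + 1) / (1 - β 1) - 1 ≤ ‖B 3‖ := by linarith
        linarith
      have hxval : (c 1 + 1) / (1 - β 1) - 1 = (c 1 + β 1) / (1 - β 1) := by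
        field_simp
        ring
      constructor
      · show (0:ℝ) < ‖B (2*1+1)‖
        simpa using hB3pos
      · show ‖B (2*1)‖ ≤ 2*(1 - β 1)/(β 1 * (c 1 + 1)) * ‖B (2*1+1)‖
        norm_num [hB2]
        have hR : (0:ℝ) < 2*(1 - β 1)/(β 1 * (c 1 + 1)) := by
          apply div_pos (by linarith) (by positivity)
        have h1 : 1 ≤ 2*(1 - β 1)/(β 1 * (c 1 + 1)) * ((c 1 + 1) / (1 - β 1) - 1) := by
          rw [hxval, div_mul_div_comm, le_div_iff₀ (by positivity)]
          have hpos : (0:ℝ) < (1 - β 1) * (c 1 * (2 - β 1) + β 1) :=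
            mul_pos h1β (by nlinarith)
          nlinarith [hpos]
        have h2 : 2*(1 - β 1)/(β 1 * (c 1 + 1)) * ((c 1 + 1) / (1 - β 1) - 1) ≤
            2*(1 - β 1)/(β 1 * (c 1 + 1)) * ‖B 3‖ := by
          apply mul_le_mul_of_nonneg_left _ hR.le
          linarith
        linarith
    | succ n hn ih =>
      obtain ⟨hv, hu⟩ := ih
      obtain ⟨hβ0', hβ1'⟩ := hβ (n+1) (by omega)
      have hc0' := hc (n+1) (by omega)
      have h1β' : (0:ℝ) < 1 - β (n+1) := by linarith
      have hw := step n hn hu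
      have hrec := hBrec (2*n+2) (by omega)
      have h2n : 2*n+2-1 = 2*n+1 := by omega
      rw [h2n] at hrec
      have hA2 : (c (n+1) + 1) / (1 - β (n+1)) ≤ ‖a (2*n+2)‖ := by
        have h := heven (n+1) (by omega)
        have e : 2*(n+1) = 2*n+2 := by ring
        rwa [e] at h
      have hrev : ‖a (2*n+2)‖ * ‖B (2*n+1)‖ ≤
          ‖B (2*n+3)‖ + ‖B (2*n+2)‖ := by
        have t := norm_add_le (B (2*n+3)) (-B (2*n+2))
        have e : B (2*n+3) + -B (2*n+2) = a (2*n+2) * B (2*n+1) := by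
          rw [hrec]; ring
        rw [e, norm_mul] at t
        simpa [norm_neg] using t
      -- lower bound for |B (2n+3)|
      have hz : ((c (n+1) + 1) / (1 - β (n+1)) - 1 - β (n+1)/2) * ‖B (2*n+1)‖ ≤
          ‖B (2*n+3)‖ := by
        have h1 : (c (n+1) + 1) / (1 - β (n+1)) * ‖B (2*n+1)‖ ≤
            ‖a (2*n+2)‖ * ‖B (2*n+1)‖ :=
          mul_le_mul_of_nonneg_right hA2 (norm_nonneg _)
        nlinarith
      have hxgt : 1 + β (n+1)/2 < (c (n+1) + 1) / (1 - β (n+1)) := by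
        rw [lt_div_iff₀ h1β']
        nlinarith
      have hzpos : 0 < ‖B (2*n+3)‖ := by
        have : (0:ℝ) < ((c (n+1) + 1) / (1 - β (n+1)) - 1 - β (n+1)/2) *
            ‖B (2*n+1)‖ := by
          apply mul_pos _ hv
          linarith
        linarith
      have e1 : 2*(n+1)+1 = 2*n+3 := by ring
      have e2 : 2*(n+1) = 2*n+2 := by ring
      rw [e1, e2]
      refine ⟨hzpos, ?_⟩
      -- scalar inequality: (1+β/2) ≤ R_{n+1} * (x - 1 - β/2)
      have hsc : 1 + β (n+1)/2 ≤ 2*(1 - β (n+1))/(β (n+1) * (c (n+1) + 1)) *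
          ((c (n+1) + 1) / (1 - β (n+1)) - 1 - β (n+1)/2) := by
        have he : 2*(1 - β (n+1))/(β (n+1) * (c (n+1) + 1)) *
            ((c (n+1) + 1) / (1 - β (n+1)) - 1 - β (n+1)/2) =
            (2*(c (n+1) + 1) - (1 - β (n+1))*(2 + β (n+1))) / (β (n+1) * (c (n+1) + 1)) := by
          have hβne : β (n+1) ≠ 0 := ne_of_gt hβ0'
          have hcne : c (n+1) + 1 ≠ 0 := by positivity
          have h1βne : (1:ℝ) - β (n+1) ≠ 0 := ne_of_gt h1β'
          field_simp
          ring
        rw [he, le_div_iff₀ (by positivity)]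
        have hsq : β (n+1)^2 < 1 := by nlinarith
        have hpos : (0:ℝ) < c (n+1) * (2 - β (n+1) - β (n+1)^2/2) :=
          mul_pos hc0' (by nlinarith)
        nlinarith [hpos]
      have hR : (0:ℝ) < 2*(1 - β (n+1))/(β (n+1) * (c (n+1) + 1)) := by
        apply div_pos (by linarith) (by positivity)
      calc ‖B (2*n+2)‖ ≤ (1 + β (n+1)/2) * ‖B (2*n+1)‖ := hw
        _ ≤ (2*(1 - β (n+1))/(β (n+1) * (c (n+1) + 1)) *
            ((c (n+1) + 1) / (1 - β (n+1)) - 1 - β (n+1)/2)) * ‖B (2*n+1)‖ :=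
          mul_le_mul_of_nonneg_right hsc (norm_nonneg _)
        _ = 2*(1 - β (n+1))/(β (n+1) * (c (n+1) + 1)) *
            (((c (n+1) + 1) / (1 - β (n+1)) - 1 - β (n+1)/2) * ‖B (2*n+1)‖) := by
          ring
        _ ≤ 2*(1 - β (n+1))/(β (n+1) * (c (n+1) + 1)) * ‖B (2*n+3)‖ :=
          mul_le_mul_of_nonneg_left hz hR.le
  -- Conclusion.
  intro n hn
  obtain ⟨hv, hu⟩ := key n hn
  have hw := step n hn hu
  obtain ⟨hβ0', hβ1'⟩ := hβ (n+1) (by omega)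
  rw [norm_div, div_le_iff₀ hv]
  nlinarith
end

section
/- Let (a_n) be complex numbers with |a_n| ≤ 1/4 for all n ≥ 1. Then the continued fraction K_{n=1}^∞ a_n/1 converges; every approximant f_n lies in the open disc |w| < 1/2, and the value f of the continued fraction satisfies |f| ≤ 1/2. (Worpitzky's theorem.) -/
open Filter Topology

/-- Worpitzky's theorem.
Indexing: `A (N+1)` is the `N`-th canonical numerator (so `A 0 = A_{-1} = 1`);
the `n`-th approximant is `f n = A (n+1) / B (n+1)`. -/
theorem worpitzky (a : ℕ → ℂ)
    (ha : ∀ n : ℕ, 1 ≤ n → ‖a n‖ ≤ 1 / 4)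
    (A B : ℕ → ℂ)
    (hA0 : A 0 = 1) (hA1 : A 1 = 0) (hB0 : B 0 = 0) (hB1 : B 1 = 1)
    (hArec : ∀ N : ℕ, 1 ≤ N → A (N + 1) = A N + a N * A (N - 1))
    (hBrec : ∀ N : ℕ, 1 ≤ N → B (N + 1) = B N + a N * B (N - 1)) :
    ∃ f : ℂ, Tendsto (fun N : ℕ => A (N + 1) / B (N + 1)) atTop (𝓝 f) ∧
      (∀ n : ℕ, 1 ≤ n → ‖A (n + 1) / B (n + 1)‖ < 1 / 2) ∧
      ‖f‖ ≤ 1 / 2 := by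
  set g : ℕ → ℝ := fun N => ‖B (N + 1)‖ with hgdef
  have hg0 : g 0 = 1 := by simp [hgdef, hB1]
  have hgnn : ∀ N, 0 ≤ g N := fun N => norm_nonneg _
  -- ratio lower bound (cleared denominators)
  have hrat : ∀ N : ℕ, ((N : ℝ) + 2) * g N ≤ (2 * ((N : ℝ) + 1)) * g (N + 1) := by
    intro N
    induction N with
    | zero =>
      have h2 : B 2 = B 1 + a 1 * B 0 := hBrec 1 le_rfl
      have : g 1 = 1 := by simp [hgdef, h2, hB0, hB1]
      rw [this, hg0]; norm_num
    | succ N ih =>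
      have hrec : B (N + 3) = B (N + 2) + a (N + 2) * B (N + 1) := by
        have := hBrec (N + 2) (by omega)
        simpa using this
      have habs : ‖a (N + 2)‖ ≤ 1 / 4 := ha (N + 2) (by omega)
      have key : g (N + 1) - (1 / 4) * g N ≤ g (N + 2) := by
        have htri : ‖B (N + 2)‖ ≤
            ‖B (N + 2) + a (N + 2) * B (N + 1)‖
              + ‖a (N + 2) * B (N + 1)‖ := by
          have := norm_add_le (B (N + 2) + a (N + 2) * B (N + 1))
            (-(a (N + 2) * B (N + 1)))
          simpa using this
        have hmul : ‖a (N + 2) * B (N + 1)‖ ≤ (1 / 4) * g N := by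
          rw [norm_mul]
          exact mul_le_mul_of_nonneg_right habs (hgnn N)
        have hg2 : g (N + 2) = ‖B (N + 2) + a (N + 2) * B (N + 1)‖ := by
          simp [hgdef, hrec]
        rw [hg2]
        have : g (N + 1) = ‖B (N + 2)‖ := rfl
        rw [this]
        linarith
      have e1 : (2 * ((N : ℝ) + 2)) * (g (N + 1) - (1 / 4) * g N)
          ≤ (2 * ((N : ℝ) + 2)) * g (N + 2) :=
        mul_le_mul_of_nonneg_left key (by positivity)
      push_cast
      push_cast at ih
      nlinarith [e1, ih]
  -- global lower bound
  have glow : ∀ N : ℕ, ((N : ℝ) + 1) / 2 ^ N ≤ g N := by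
    intro N
    induction N with
    | zero => simp [hg0]
    | succ N ih =>
      have h1 := hrat N
      have h2 : ((N : ℝ) + 2) * (((N : ℝ) + 1) / 2 ^ N) ≤ ((N : ℝ) + 2) * g N :=
        mul_le_mul_of_nonneg_left ih (by positivity)
      have h3 : ((N : ℝ) + 2) * (((N : ℝ) + 1) / 2 ^ N)
          ≤ (2 * ((N : ℝ) + 1)) * g (N + 1) := le_trans h2 h1
      have h2N : (0:ℝ) < 2 ^ N := by positivity
      have h4 : ((N : ℝ) + 2) * ((N : ℝ) + 1)
          ≤ (2 * ((N : ℝ) + 1)) * g (N + 1) * 2 ^ N := by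
        have h5 := mul_le_mul_of_nonneg_right h3 h2N.le
        calc ((N : ℝ) + 2) * ((N : ℝ) + 1)
            = ((N : ℝ) + 2) * (((N : ℝ) + 1) / 2 ^ N) * 2 ^ N := by
              field_simp
          _ ≤ _ := h5
      have hcast : ((N + 1 : ℕ) : ℝ) = (N : ℝ) + 1 := by push_cast; ring
      rw [hcast, div_le_iff₀ (by positivity : (0:ℝ) < (2:ℝ) ^ (N + 1)),
        pow_succ]
      nlinarith [h4, show (0:ℝ) < (N:ℝ) + 1 by positivity, hgnn (N + 1)]
  have gpos : ∀ N, 0 < g N := fun N =>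
    lt_of_lt_of_le (by positivity) (glow N)
  have hBne : ∀ N : ℕ, B (N + 1) ≠ 0 := by
    intro N h
    have := gpos N
    rw [hgdef] at this
    simp [h] at this
  -- determinant bound
  have hD : ∀ N : ℕ, ‖A (N + 1) * B N - A N * B (N + 1)‖ ≤ (1 / 4) ^ N := by
    intro N
    induction N with
    | zero => simp [hA0, hA1, hB0, hB1]
    | succ N ih =>
      have hA : A (N + 2) = A (N + 1) + a (N + 1) * A N := by
        have := hArec (N + 1) (by omega); simpa using this
      have hB : B (N + 2) = B (N + 1) + a (N + 1) * B N := by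
        have := hBrec (N + 1) (by omega); simpa using this
      have hEq : A (N + 2) * B (N + 1) - A (N + 1) * B (N + 2)
          = -(a (N + 1)) * (A (N + 1) * B N - A N * B (N + 1)) := by
        rw [hA, hB]; ring
      rw [hEq, norm_mul, norm_neg]
      calc ‖a (N + 1)‖ * ‖A (N + 1) * B N - A N * B (N + 1)‖
          ≤ (1 / 4) * (1 / 4) ^ N := by
            apply mul_le_mul (ha (N + 1) (by omega)) ih (norm_nonneg _)
            norm_num
        _ = (1 / 4) ^ (N + 1) := by ring
  set f : ℕ → ℂ := fun N => A (N + 1) / B (N + 1) with hfdef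
  have hf0 : f 0 = 0 := by simp [hfdef, hA1]
  -- diff bound
  have hdiff : ∀ N : ℕ, ‖f (N + 1) - f N‖
      ≤ 1 / (2 * ((N : ℝ) + 1) * ((N : ℝ) + 2)) := by
    intro N
    have hsub : f (N + 1) - f N
        = (A (N + 2) * B (N + 1) - A (N + 1) * B (N + 2)) / (B (N + 2) * B (N + 1)) := by
      rw [hfdef]
      rw [div_sub_div _ _ (hBne (N + 1)) (hBne N)]
      ring_nf
    rw [hsub, norm_div, norm_mul]
    have e2 : ‖B (N + 2)‖ * ‖B (N + 1)‖ = g (N + 1) * g N := rfl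
    rw [e2]
    have hnum := hD (N + 1)
    have hden : ((N : ℝ) + 1) * ((N : ℝ) + 2) / 2 ^ (2 * N + 1)
        ≤ g (N + 1) * g N := by
      have h1 : ((N : ℝ) + 2) / 2 ^ (N + 1) ≤ g (N + 1) := by
        have h := glow (N + 1)
        have e : (((N + 1 : ℕ) : ℝ) + 1) = (N : ℝ) + 2 := by push_cast; ring
        rwa [e] at h
      have h2 : ((N : ℝ) + 1) / 2 ^ N ≤ g N := glow N
      have := mul_le_mul h1 h2 (by positivity) (hgnn (N + 1))
      calc ((N : ℝ) + 1) * ((N : ℝ) + 2) / 2 ^ (2 * N + 1)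
          = (((N : ℝ) + 2) / 2 ^ (N + 1)) * (((N : ℝ) + 1) / 2 ^ N) := by
            rw [div_mul_div_comm, ← pow_add]; ring_nf
        _ ≤ _ := this
    have hdenpos : (0 : ℝ) < ((N : ℝ) + 1) * ((N : ℝ) + 2) / 2 ^ (2 * N + 1) := by
      positivity
    calc ‖A (N + 2) * B (N + 1) - A (N + 1) * B (N + 2)‖
          / (g (N + 1) * g N)
        ≤ (1 / 4) ^ (N + 1) / (((N : ℝ) + 1) * ((N : ℝ) + 2) / 2 ^ (2 * N + 1)) := by
          apply div_le_div₀ (by positivity) hnum hdenpos hden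
      _ = 1 / (2 * ((N : ℝ) + 1) * ((N : ℝ) + 2)) := by
          rw [div_eq_div_iff (by positivity) (by positivity)]
          have h4 : ((1 : ℝ) / 4) ^ (N + 1) = 1 / 2 ^ (2 * N + 2) := by
            rw [div_pow, one_pow, show (4:ℝ) = 2 ^ 2 by norm_num, ← pow_mul]
            ring_nf
          rw [h4]
          have : (2:ℝ) ^ (2 * N + 2) = 2 ^ (2 * N + 1) * 2 := by ring
          field_simp [this]
          ring
  -- bound on approximants
  have hfb : ∀ N : ℕ, ‖f N‖ ≤ 1 / 2 - 1 / (2 * ((N : ℝ) + 1)) := by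
    intro N
    induction N with
    | zero => simp [hf0]
    | succ N ih =>
      have htri : ‖f (N + 1)‖ ≤ ‖f N‖
          + ‖f (N + 1) - f N‖ := by
        have := norm_add_le (f N) (f (N + 1) - f N)
        simpa using this
      have hd := hdiff N
      have hkey : 1 / (2 * ((N : ℝ) + 1) * ((N : ℝ) + 2))
          = 1 / (2 * ((N : ℝ) + 1)) - 1 / (2 * ((N : ℝ) + 2)) := by
        have h1 : ((N:ℝ) + 1) ≠ 0 := by positivity
        have h2 : ((N:ℝ) + 2) ≠ 0 := by positivity
        field_simp
        ring
      have hgoal : (1:ℝ) / (2 * (((N + 1 : ℕ) : ℝ) + 1)) = 1 / (2 * ((N : ℝ) + 2)) := by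
        push_cast; ring_nf
      rw [hgoal]
      linarith
  -- summability
  have hsum : Summable (fun N : ℕ => f (N + 1) - f N) := by
    have hbase : Summable (fun n : ℕ => (1 : ℝ) / ((n : ℝ) + 1) ^ 2) := by
      have h := Real.summable_one_div_nat_pow.mpr (show 1 < 2 by norm_num)
      have := (summable_nat_add_iff 1).mpr h
      refine this.congr fun n => ?_
      push_cast
      ring
    apply Summable.of_norm_bounded hbase
    intro N
    have h1 := hdiff N
    have h2 : 1 / (2 * ((N : ℝ) + 1) * ((N : ℝ) + 2)) ≤ 1 / ((N : ℝ) + 1) ^ 2 := by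
      apply div_le_div_of_nonneg_left (by norm_num) (by positivity)
      nlinarith [Nat.cast_nonneg (α := ℝ) N]
    exact le_trans h1 h2
  obtain ⟨S, hS⟩ := hsum
  have hpartial : Tendsto (fun N : ℕ => ∑ k ∈ Finset.range N, (f (k + 1) - f k))
      atTop (𝓝 S) := hS.tendsto_sum_nat
  have hfS : Tendsto f atTop (𝓝 S) := by
    refine hpartial.congr fun N => ?_
    rw [Finset.sum_range_sub, hf0, sub_zero]
  refine ⟨S, hfS, ?_, ?_⟩
  · intro n hn
    have h1 := hfb n
    have h2 : (0 : ℝ) < 1 / (2 * ((n : ℝ) + 1)) := by positivity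
    calc ‖A (n + 1) / B (n + 1)‖ = ‖f n‖ := rfl
      _ ≤ 1 / 2 - 1 / (2 * ((n : ℝ) + 1)) := h1
      _ < 1 / 2 := by linarith
  · have hnorm : Tendsto (fun N => ‖f N‖) atTop (𝓝 ‖S‖) := hfS.norm
    apply le_of_tendsto' hnorm
    intro N
    have := hfb N
    have : (0:ℝ) ≤ 1 / (2 * ((N : ℝ) + 1)) := by positivity
    linarith [hfb N]
end

section
/- Let (a_n) and (b_n) be complex numbers with |b_n| ≥ |a_n| + 1 for all n ≥ 1. Then the continued fraction K_{n=1}^∞ a_n/b_n converges to a finite value, and each approximant f_n satisfies |f_n| < 1. (Śleszyński–Pringsheim theorem.) -/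
open Filter Topology

/-- Śleszyński–Pringsheim theorem.
Indexing: `A (N+1)` is the `N`-th canonical numerator (so `A 0 = A_{-1} = 1`). -/
theorem sleszynski_pringsheim (a b : ℕ → ℂ)
    (hab : ∀ n : ℕ, 1 ≤ n → ‖a n‖ + 1 ≤ ‖b n‖)
    (A B : ℕ → ℂ)
    (hA0 : A 0 = 1) (hA1 : A 1 = 0) (hB0 : B 0 = 0) (hB1 : B 1 = 1)
    (hArec : ∀ N : ℕ, 1 ≤ N → A (N + 1) = b N * A N + a N * A (N - 1))
    (hBrec : ∀ N : ℕ, 1 ≤ N → B (N + 1) = b N * B N + a N * B (N - 1)) :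
    (∃ f : ℂ, Tendsto (fun N : ℕ => A (N + 1) / B (N + 1)) atTop (𝓝 f)) ∧
      ∀ n : ℕ, 1 ≤ n → ‖A (n + 1) / B (n + 1)‖ < 1 := by
  -- p n = |a 1| * ... * |a n|,  S n = p 1 + ... + p n
  obtain ⟨p, hpdef⟩ : ∃ p : ℕ → ℝ, p = fun n => ∏ k ∈ Finset.Icc 1 n, ‖a k‖ := ⟨_, rfl⟩
  obtain ⟨S, hSdef⟩ : ∃ S : ℕ → ℝ, S = fun n => ∑ k ∈ Finset.Icc 1 n, p k := ⟨_, rfl⟩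
  have hpnonneg : ∀ n, 0 ≤ p n := by
    intro n; rw [hpdef]; exact Finset.prod_nonneg fun k _ => norm_nonneg _
  have hpsucc : ∀ n : ℕ, p (n + 1) = p n * ‖a (n + 1)‖ := by
    intro n
    simp only [hpdef]
    rw [Finset.prod_Icc_succ_top (by omega)]
  have hSsucc : ∀ n : ℕ, S (n + 1) = S n + p (n + 1) := by
    intro n
    simp only [hSdef]
    rw [Finset.sum_Icc_succ_top (by omega)]
  have hS0 : S 0 = 0 := by simp [hSdef]
  have hSnonneg : ∀ n, 0 ≤ S n := by
    intro n; rw [hSdef]; exact Finset.sum_nonneg fun k _ => hpnonneg k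
  have hSmono : ∀ n, S n ≤ S (n + 1) := by
    intro n; rw [hSsucc]; linarith [hpnonneg (n + 1)]
  -- key inequality : ‖B n‖ + p n ≤ ‖B (n+1)‖  for n ≥ 1
  have key : ∀ n : ℕ, 1 ≤ n → ‖B n‖ + p n ≤ ‖B (n + 1)‖ := by
    intro n hn
    induction n with
    | zero => omega
    | succ m ih =>
      rcases Nat.lt_or_ge m 1 with hm | hm
      · -- m = 0
        interval_cases m
        have hB2 : B 2 = b 1 := by
          rw [hBrec 1 le_rfl]; simp [hB0, hB1]
        have hp1 : p 1 = ‖a 1‖ := by simp [hpdef]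
        rw [hB2, hB1, hp1, norm_one]
        have := hab 1 le_rfl
        linarith
      · have ih' := ih hm
        have hrec : B (m + 2) = b (m + 1) * B (m + 1) + a (m + 1) * B m := by
          have h := hBrec (m + 1) (by omega)
          simpa using h
        have htri : ‖b (m + 1)‖ * ‖B (m + 1)‖ - ‖a (m + 1)‖ * ‖B m‖ ≤ ‖B (m + 2)‖ := by
          rw [hrec]
          have h1 : ‖b (m + 1) * B (m + 1)‖ ≤ ‖b (m + 1) * B (m + 1) + a (m + 1) * B m‖ + ‖a (m + 1) * B m‖ := by
            calc ‖b (m + 1) * B (m + 1)‖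
                = ‖(b (m + 1) * B (m + 1) + a (m + 1) * B m) - a (m + 1) * B m‖ := by ring_nf
              _ ≤ _ := norm_sub_le _ _
          rw [← norm_mul, ← norm_mul]
          linarith
        have hb := hab (m + 1) (by omega)
        have hBnn : (0:ℝ) ≤ ‖B (m + 1)‖ := norm_nonneg _
        have hann : (0:ℝ) ≤ ‖a (m + 1)‖ := norm_nonneg _
        have hps : p (m + 1) = p m * ‖a (m + 1)‖ := hpsucc m
        nlinarith [hpnonneg m]
  -- lower bound on ‖B (n+1)‖
  have hBlow : ∀ n : ℕ, 1 + S n ≤ ‖B (n + 1)‖ := by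
    intro n
    induction n with
    | zero => simp [hB1, hS0]
    | succ m ih =>
      have := key (m + 1) (by omega)
      rw [hSsucc]
      linarith
  have hBpos : ∀ n : ℕ, 0 < ‖B (n + 1)‖ := by
    intro n; have := hBlow n; have := hSnonneg n; linarith
  have hBne : ∀ n : ℕ, B (n + 1) ≠ 0 := by
    intro n h
    have := hBpos n
    rw [h] at this; simp at this
  -- determinant formula
  have det : ∀ n : ℕ, ‖A (n + 2) * B (n + 1) - A (n + 1) * B (n + 2)‖ = p (n + 1) := by
    intro n
    induction n with
    | zero =>
      have hA2 : A 2 = a 1 := by rw [hArec 1 le_rfl]; simp [hA0, hA1]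
      have hp1 : p 1 = ‖a 1‖ := by simp [hpdef]
      rw [hA2, hA1, hB1, hp1]
      simp
    | succ m ih =>
      have hstep : A (m + 3) * B (m + 2) - A (m + 2) * B (m + 3)
          = -(a (m + 2)) * (A (m + 2) * B (m + 1) - A (m + 1) * B (m + 2)) := by
        have hA := hArec (m + 2) (by omega)
        have hB := hBrec (m + 2) (by omega)
        simp only [show m + 2 - 1 = m + 1 from rfl] at hA hB
        rw [show m + 3 = m + 2 + 1 from rfl, hA, hB]
        ring
      rw [hstep, norm_mul, norm_neg, ih, hpsucc (m + 1)]
      ring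
  -- difference of consecutive approximants
  obtain ⟨f, hfdef⟩ : ∃ f : ℕ → ℂ, f = fun N => A (N + 1) / B (N + 1) := ⟨_, rfl⟩
  obtain ⟨g, hgdef⟩ : ∃ g : ℕ → ℂ, g = fun N => f (N + 1) - f N := ⟨_, rfl⟩
  obtain ⟨u, hudef⟩ : ∃ u : ℕ → ℝ, u = fun N => 1 / (1 + S N) - 1 / (1 + S (N + 1)) := ⟨_, rfl⟩
  have hSpos : ∀ n, (0:ℝ) < 1 + S n := fun n => by linarith [hSnonneg n]
  have hu_nonneg : ∀ N, 0 ≤ u N := by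
    intro N
    simp only [hudef]
    have h1 := hSpos N
    have h2 := hSpos (N + 1)
    have := hSmono N
    have : 1 / (1 + S (N + 1)) ≤ 1 / (1 + S N) := by
      apply one_div_le_one_div_of_le h1
      linarith
    linarith
  have hgu : ∀ N, ‖g N‖ ≤ u N := by
    intro N
    have hgN : g N = (A (N + 2) * B (N + 1) - A (N + 1) * B (N + 2)) / (B (N + 1) * B (N + 2)) := by
      simp only [hgdef, hfdef]
      rw [div_sub_div _ _ (hBne (N + 1)) (hBne N)]
      rw [show N + 1 + 1 = N + 2 from rfl]
      ring_nf
    rw [hgN, norm_div, norm_mul, det N]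
    have hx := hBlow N
    have hy := hBlow (N + 1)
    have hc := hSpos N
    have hd := hSpos (N + 1)
    have hnum : p (N + 1) = (1 + S (N + 1)) - (1 + S N) := by
      rw [hSsucc]; ring
    have h1 : p (N + 1) / (‖B (N + 1)‖ * ‖B (N + 2)‖) ≤ p (N + 1) / ((1 + S N) * (1 + S (N + 1))) := by
      gcongr
      exact hpnonneg _
    have h2 : p (N + 1) / ((1 + S N) * (1 + S (N + 1))) = u N := by
      simp only [hudef]
      rw [hnum, div_sub_div _ _ (ne_of_gt hc) (ne_of_gt hd)]
      ring_nf
    linarith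
  -- partial sums of u
  have husum : ∀ n : ℕ, ∑ k ∈ Finset.range n, u k = 1 - 1 / (1 + S n) := by
    intro n
    have := Finset.sum_range_sub' (fun k => 1 / (1 + S k)) n
    simp only [hudef]
    rw [this, hS0]
    norm_num
  have hu_summable : Summable u := by
    apply summable_of_sum_range_le (c := 1) hu_nonneg
    intro n
    rw [husum n]
    have := hSpos n
    have : 0 < 1 / (1 + S n) := by positivity
    linarith
  have hg_summable : Summable g := Summable.of_norm_bounded hu_summable hgu
  have hf0 : f 0 = 0 := by simp [hfdef, hA1, hB1]
  have hfsum : ∀ n : ℕ, ∑ k ∈ Finset.range n, g k = f n := by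
    intro n
    simp only [hgdef]
    rw [Finset.sum_range_sub f n, hf0, sub_zero]
  constructor
  · refine ⟨∑' k, g k, ?_⟩
    rw [← hfdef]
    have := hg_summable.hasSum.tendsto_sum_nat
    apply this.congr
    intro n
    exact hfsum n
  · intro n hn
    have h1 : ‖f n‖ ≤ ∑ k ∈ Finset.range n, ‖g k‖ := by
      rw [← hfsum n]
      exact norm_sum_le _ _
    have h2 : ∑ k ∈ Finset.range n, ‖g k‖ ≤ ∑ k ∈ Finset.range n, u k :=
      Finset.sum_le_sum fun k _ => hgu k
    rw [husum n] at h2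
    have h3 : 0 < 1 / (1 + S n) := by
      have := hSpos n
      positivity
    have hfn : f n = A (n + 1) / B (n + 1) := by rw [hfdef]
    rw [← hfn]
    calc ‖f n‖ ≤ 1 - 1 / (1 + S n) := le_trans h1 h2
      _ < 1 := by linarith
end

section
/- Under the hypotheses of the main theorem (sequences c_n > 0, 0 < β_n < 1 with |a_{2n}| ≥ (c_n+1)/(1−β_n) and |a_{2n+1}| ≤ min{c_n, c_{n+1}, β_nβ_{n+1}(c_{n+1}+1)/(4(1−β_{n+1})), β_nβ_{n+1}(c_n+1)/(4(1−β_n))}), the even part of K_{n=1}^∞ a_n/1 converges to a finite value; in particular all the denominators 1+a₂ and a_{2n+2}+1+a_{2n+1} of the even part are nonzero. -/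
open Filter Topology

/-- Scaling factors `ρ_n = 2/(β_n |a_{2n}|)` (with `ρ_0 = 1`). -/
noncomputable def epcRho (a : ℕ → ℂ) (β : ℕ → ℝ) : ℕ → ℝ :=
  fun n => if n = 0 then 1 else 2 / (β n * ‖a (2 * n)‖)

/-- `P k = ∏_{i=0}^{k} ρ_i`. -/
noncomputable def epcP (a : ℕ → ℂ) (β : ℕ → ℝ) (k : ℕ) : ℝ :=
  ∏ i ∈ Finset.range (k + 1), epcRho a β i

/-- Scaled denominators `u_k = P_k |B_{2k}|`. -/
noncomputable def epcU (a : ℕ → ℂ) (β : ℕ → ℝ) (B : ℕ → ℂ) (k : ℕ) : ℝ :=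
  epcP a β k * ‖B (2 * k + 1)‖

/-- Scaled partial numerators of the even part. -/
noncomputable def epcQ (a : ℕ → ℂ) (β : ℕ → ℝ) (k : ℕ) : ℝ :=
  epcRho a β (k + 2) * epcRho a β (k + 1) * ‖a (2 * k + 2) * a (2 * k + 3)‖

/-- `G k = ∏_{i<k} q_i`. -/
noncomputable def epcG (a : ℕ → ℂ) (β : ℕ → ℝ) (k : ℕ) : ℝ :=
  ∏ i ∈ Finset.range k, epcQ a β i

/-- Under the hypotheses of the main theorem, the even part of K a_n/1 converges;
in particular all its denominators are nonzero.
Indexing: `A (N+1)` is the `N`-th canonical numerator (so `A 0 = A_{-1} = 1`). -/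
theorem even_part_converges (a : ℕ → ℂ) (c β : ℕ → ℝ)
    (ha : ∀ n : ℕ, 1 ≤ n → a n ≠ 0)
    (hc : ∀ n : ℕ, 1 ≤ n → 0 < c n)
    (hβ : ∀ n : ℕ, 1 ≤ n → 0 < β n ∧ β n < 1)
    (heven : ∀ n : ℕ, 1 ≤ n → (c n + 1) / (1 - β n) ≤ ‖a (2 * n)‖)
    (hodd : ∀ n : ℕ, 1 ≤ n →
      ‖a (2 * n + 1)‖ ≤
        min (min (c n) (c (n + 1)))
          (min (β n * β (n + 1) * (c (n + 1) + 1) / (4 * (1 - β (n + 1))))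
               (β n * β (n + 1) * (c n + 1) / (4 * (1 - β n)))))
    (A B : ℕ → ℂ)
    (hA0 : A 0 = 1) (hA1 : A 1 = 0) (hB0 : B 0 = 0) (hB1 : B 1 = 1)
    (hArec : ∀ N : ℕ, 1 ≤ N → A (N + 1) = A N + a N * A (N - 1))
    (hBrec : ∀ N : ℕ, 1 ≤ N → B (N + 1) = B N + a N * B (N - 1)) :
    (1 + a 2 ≠ 0) ∧
      (∀ n : ℕ, 1 ≤ n → a (2 * n + 2) + 1 + a (2 * n + 1) ≠ 0) ∧
      ∃ L : ℂ, Tendsto (fun k : ℕ => A (2 * k + 1) / B (2 * k + 1)) atTop (𝓝 L) := by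
  set ρ := epcRho a β with hρdef
  set P := epcP a β with hPdef
  set u := epcU a β B with hudef
  set q := epcQ a β with hqdef
  set G := epcG a β with hGdef
  -- basic positivity
  have habs : ∀ m : ℕ, 1 ≤ m → 0 < ‖a m‖ := fun m hm =>
    norm_pos_iff.mpr (ha m hm)
  have hE : ∀ n : ℕ, 1 ≤ n → 0 < β n * ‖a (2 * n)‖ := by
    intro n hn
    exact mul_pos (hβ n hn).1 (habs _ (by omega))
  have hρpos : ∀ n : ℕ, 0 < ρ n := by
    intro n
    rcases Nat.eq_zero_or_pos n with h | h
    · simp [hρdef, epcRho, h]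
    · have h2 := hE n h
      simp only [hρdef, epcRho, if_neg (Nat.pos_iff_ne_zero.mp h)]
      exact div_pos two_pos h2
  have hPpos : ∀ k : ℕ, 0 < P k := by
    intro k
    exact Finset.prod_pos fun i _ => hρpos i
  have hP0 : P 0 = 1 := by
    simp [hPdef, epcP, epcRho]
  have hPsucc : ∀ k : ℕ, P (k + 1) = P k * ρ (k + 1) := by
    intro k
    simp only [hPdef, epcP, Finset.prod_range_succ, ← hρdef]
  have hunn : ∀ k : ℕ, 0 ≤ u k := by
    intro k
    exact mul_nonneg (hPpos k).le (norm_nonneg _)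
  -- triangle-type inequality
  have habs_sub : ∀ x y : ℂ, ‖x‖ - ‖y‖ ≤ ‖x - y‖ := by
    intro x y
    have h := norm_add_le (x - y) y
    simp only [sub_add_cancel] at h
    linarith
  have habs_add' : ∀ x y : ℂ, ‖x - y‖ ≤ ‖x‖ + ‖y‖ := by
    intro x y
    rw [sub_eq_add_neg]
    refine (norm_add_le _ _).trans ?_
    simp
  -- the key lower bound on the denominators of the even part
  have hKb : ∀ n : ℕ, 1 ≤ n →
      β (n + 1) * ‖a (2 * n + 2)‖ ≤
        ‖a (2 * n + 2) + 1 + a (2 * n + 1)‖ := by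
    intro n hn
    have h1 : ‖a (2 * n + 2)‖ - 1 - ‖a (2 * n + 1)‖ ≤
        ‖a (2 * n + 2) + 1 + a (2 * n + 1)‖ := by
      have h := habs_add' (a (2 * n + 2) + 1 + a (2 * n + 1)) (1 + a (2 * n + 1))
      have h2 : ‖1 + a (2 * n + 1)‖ ≤ 1 + ‖a (2 * n + 1)‖ := by
        have := norm_add_le 1 (a (2 * n + 1))
        simpa using this
      have h3 : (a (2 * n + 2) + 1 + a (2 * n + 1)) - (1 + a (2 * n + 1)) = a (2 * n + 2) := by
        ring
      rw [h3] at h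
      linarith
    have hco : ‖a (2 * n + 1)‖ ≤ c (n + 1) :=
      le_trans (hodd n hn) (le_trans (min_le_left _ _) (min_le_right _ _))
    have hev := heven (n + 1) (by omega)
    rw [show 2 * (n + 1) = 2 * n + 2 by ring] at hev
    have hb := hβ (n + 1) (by omega)
    have h4 : c (n + 1) + 1 ≤ (1 - β (n + 1)) * ‖a (2 * n + 2)‖ := by
      rw [div_le_iff₀ (by linarith [hb.2])] at hev
      linarith [hev]
    nlinarith [h1, hco, h4]
  have hKb1 : β 1 * ‖a 2‖ ≤ ‖1 + a 2‖ := by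
    have h1 : ‖a 2‖ - 1 ≤ ‖1 + a 2‖ := by
      have h := habs_add' (1 + a 2) 1
      have h3 : (1 + a 2) - 1 = a 2 := by ring
      rw [h3] at h
      simp only [norm_one] at h
      linarith
    have hev := heven 1 (by omega)
    rw [show 2 * 1 = 2 by ring] at hev
    have hb := hβ 1 (by omega)
    have hc1 := hc 1 (by omega)
    have h4 : c 1 + 1 ≤ (1 - β 1) * ‖a 2‖ := by
      rw [div_le_iff₀ (by linarith [hb.2])] at hev
      linarith [hev]
    nlinarith [h1, h4]
  -- bounds for q
  have hq_eq : ∀ k : ℕ, q k =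
      4 * ‖a (2 * k + 3)‖ /
        (β (k + 1) * β (k + 2) * ‖a (2 * k + 4)‖) := by
    intro k
    have h1 : 0 < ‖a (2 * k + 2)‖ := habs _ (by omega)
    have h2 : 0 < ‖a (2 * k + 4)‖ := habs _ (by omega)
    have hb1 := (hβ (k + 1) (by omega)).1
    have hb2 := (hβ (k + 2) (by omega)).1
    simp only [hqdef, epcQ, epcRho, if_neg (by omega : ¬ k + 2 = 0),
      if_neg (by omega : ¬ k + 1 = 0), norm_mul]
    rw [show 2 * (k + 2) = 2 * k + 4 by ring, show 2 * (k + 1) = 2 * k + 2 by ring]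
    field_simp
    ring
  have hqnn : ∀ k : ℕ, 0 ≤ q k := by
    intro k
    rw [hq_eq k]
    have hb1 := (hβ (k + 1) (by omega)).1
    have hb2 := (hβ (k + 2) (by omega)).1
    have h2 : 0 < ‖a (2 * k + 4)‖ := habs _ (by omega)
    exact div_nonneg (by positivity) (mul_nonneg (mul_nonneg hb1.le hb2.le) h2.le)
  have hqle : ∀ k : ℕ, q k ≤ 1 := by
    intro k
    rw [hq_eq k]
    have hb1 := (hβ (k + 1) (by omega)).1
    have hb2 := hβ (k + 2) (by omega)
    have h2 : 0 < ‖a (2 * k + 4)‖ := habs _ (by omega)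
    rw [div_le_one (mul_pos (mul_pos hb1 hb2.1) h2)]
    have ho := le_trans (hodd (k + 1) (by omega))
      (le_trans (min_le_right _ _) (min_le_left _ _))
    rw [show 2 * (k + 1) + 1 = 2 * k + 3 by ring] at ho
    have hev := heven (k + 2) (by omega)
    rw [show 2 * (k + 2) = 2 * k + 4 by ring] at hev
    have hden : (0:ℝ) < 1 - β (k + 2) := by linarith [hb2.2]
    rw [div_le_iff₀ hden] at hev
    rw [show k + 1 + 1 = k + 2 by ring] at ho
    rw [le_div_iff₀ (by linarith [hb2.2] : (0:ℝ) < 4 * (1 - β (k + 2)))] at ho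
    have h5 : β (k + 1) * β (k + 2) * (c (k + 2) + 1) ≤
        β (k + 1) * β (k + 2) * (‖a (2 * k + 4)‖ * (1 - β (k + 2))) :=
      mul_le_mul_of_nonneg_left hev (mul_nonneg hb1.le hb2.1.le)
    have hden2 : (0:ℝ) < 1 - β (k + 2) := by linarith [hb2.2]
    nlinarith [ho, h5, hden2]
  -- the even-part three-term recurrence for B
  have hrecB : ∀ k : ℕ, B (2 * k + 5) =
      (a (2 * k + 4) + 1 + a (2 * k + 3)) * B (2 * k + 3)
        - a (2 * k + 2) * a (2 * k + 3) * B (2 * k + 1) := by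
    intro k
    have h4 := hBrec (2 * k + 4) (by omega)
    have h3 := hBrec (2 * k + 3) (by omega)
    have h2 := hBrec (2 * k + 2) (by omega)
    rw [show 2 * k + 4 - 1 = 2 * k + 3 by omega] at h4
    rw [show 2 * k + 3 - 1 = 2 * k + 2 by omega] at h3
    rw [show 2 * k + 2 - 1 = 2 * k + 1 by omega] at h2
    rw [show 2 * k + 4 + 1 = 2 * k + 5 by omega] at h4
    rw [show 2 * k + 3 + 1 = 2 * k + 4 by omega] at h3
    rw [show 2 * k + 2 + 1 = 2 * k + 3 by omega] at h2
    have hB22 : B (2 * k + 2) = B (2 * k + 3) - a (2 * k + 2) * B (2 * k + 1) := by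
      rw [h2]; ring
    rw [h4, h3, hB22]; ring
  -- values of u at 0 and 1
  have hB3 : B 3 = 1 + a 2 := by
    have h2 := hBrec 2 (by omega)
    have h1 := hBrec 1 (by omega)
    norm_num at h2 h1
    rw [h2, h1, hB0, hB1]; ring
  have hu0 : u 0 = 1 := by
    simp [hudef, epcU, ← hPdef, hP0, hB1]
  have hu1 : 2 ≤ u 1 := by
    have hE1 := hE 1 (by omega)
    rw [show 2 * 1 = 2 by ring] at hE1
    have hρ1 : ρ 1 = 2 / (β 1 * ‖a 2‖) := by
      simp [hρdef, epcRho]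
    have hu1eq : u 1 = ρ 1 * ‖B 3‖ := by
      simp only [hudef, epcU, ← hPdef]
      rw [show 2 * 1 + 1 = 3 by norm_num, hPsucc 0, hP0]
      ring
    rw [hu1eq, hB3, hρ1]
    rw [div_mul_eq_mul_div, le_div_iff₀ hE1]
    nlinarith [hKb1]
  -- G basics
  have hG0 : G 0 = 1 := by simp [hGdef, epcG]
  have hGsucc : ∀ k : ℕ, G (k + 1) = G k * q k := by
    intro k
    simp only [hGdef, epcG, Finset.prod_range_succ, ← hqdef]
  have hGnn : ∀ k : ℕ, 0 ≤ G k := by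
    intro k
    exact Finset.prod_nonneg fun i _ => hqnn i
  -- index-normalized forms of u
  have huk : ∀ k : ℕ, u (k + 1) = P (k + 1) * ‖B (2 * k + 3)‖ := by
    intro k
    simp only [hudef, epcU, ← hPdef]
    rw [show 2 * (k + 1) + 1 = 2 * k + 3 by ring]
  have huk2 : ∀ k : ℕ, u (k + 2) = P (k + 2) * ‖B (2 * k + 5)‖ := by
    intro k
    simp only [hudef, epcU, ← hPdef]
    rw [show 2 * (k + 2) + 1 = 2 * k + 5 by ring]
  -- main induction: u (k+1) - u k ≥ G k
  have hstep : ∀ k : ℕ, G k ≤ u (k + 1) - u k := by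
    intro k
    induction k with
    | zero => rw [hG0, hu0]; linarith [hu1]
    | succ k ih =>
      have hrec := hrecB k
      have hineq : ‖a (2 * k + 4) + 1 + a (2 * k + 3)‖ * ‖B (2 * k + 3)‖
          - ‖a (2 * k + 2) * a (2 * k + 3)‖ * ‖B (2 * k + 1)‖
          ≤ ‖B (2 * k + 5)‖ := by
        rw [hrec]
        have h := habs_sub ((a (2 * k + 4) + 1 + a (2 * k + 3)) * B (2 * k + 3))
          (a (2 * k + 2) * a (2 * k + 3) * B (2 * k + 1))
        rw [norm_mul (a (2 * k + 4) + 1 + a (2 * k + 3)) (B (2 * k + 3)),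
          norm_mul (a (2 * k + 2) * a (2 * k + 3)) (B (2 * k + 1))] at h
        exact h
      have hP2 : 0 < P (k + 2) := hPpos (k + 2)
      have hbt : 2 ≤ ρ (k + 2) * ‖a (2 * k + 4) + 1 + a (2 * k + 3)‖ := by
        have hb := hKb (k + 1) (by omega)
        rw [show 2 * (k + 1) + 2 = 2 * k + 4 by ring,
          show 2 * (k + 1) + 1 = 2 * k + 3 by ring, show k + 1 + 1 = k + 2 by ring] at hb
        have hE2 := hE (k + 2) (by omega)
        rw [show 2 * (k + 2) = 2 * k + 4 by ring] at hE2
        have hρ2 : ρ (k + 2) = 2 / (β (k + 2) * ‖a (2 * k + 4)‖) := by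
          simp only [hρdef, epcRho, if_neg (by omega : ¬ k + 2 = 0)]
          rw [show 2 * (k + 2) = 2 * k + 4 by ring]
        rw [hρ2, div_mul_eq_mul_div, le_div_iff₀ hE2]
        nlinarith [hb]
      have hmul := mul_le_mul_of_nonneg_left hineq hP2.le
      have hq_u : P (k + 2) * (‖a (2 * k + 2) * a (2 * k + 3)‖ *
          ‖B (2 * k + 1)‖) = q k * u k := by
        simp only [hqdef, epcQ, hudef, epcU, ← hρdef, ← hPdef]
        rw [hPsucc (k + 1), hPsucc k]
        ring
      have hb_u : P (k + 2) * (‖a (2 * k + 4) + 1 + a (2 * k + 3)‖ *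
          ‖B (2 * k + 3)‖) =
          (ρ (k + 2) * ‖a (2 * k + 4) + 1 + a (2 * k + 3)‖) * u (k + 1) := by
        rw [huk k, hPsucc (k + 1)]
        ring
      have hu2ge : 2 * u (k + 1) - q k * u k ≤ u (k + 2) := by
        rw [huk2 k]
        have h1 : P (k + 2) * (‖a (2 * k + 4) + 1 + a (2 * k + 3)‖ *
            ‖B (2 * k + 3)‖)
            - P (k + 2) * (‖a (2 * k + 2) * a (2 * k + 3)‖ *
            ‖B (2 * k + 1)‖)
            ≤ P (k + 2) * ‖B (2 * k + 5)‖ := by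
          nlinarith [hmul]
        rw [hq_u, hb_u] at h1
        have h2 : 2 * u (k + 1) ≤ (ρ (k + 2) *
            ‖a (2 * k + 4) + 1 + a (2 * k + 3)‖) * u (k + 1) :=
          mul_le_mul_of_nonneg_right hbt (hunn (k + 1))
        linarith
      rw [hGsucc k]
      have h3 : q k * (u (k + 1) - u k) ≤ u (k + 1) - q k * u k := by
        have hle := hqle k
        have hnn := hqnn k
        nlinarith [hunn (k + 1)]
      have h4 : G k * q k ≤ q k * (u (k + 1) - u k) := by
        rw [mul_comm]
        exact mul_le_mul_of_nonneg_left ih (hqnn k)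
      linarith
  -- u is at least 1 and increasing
  have humono : ∀ k : ℕ, u k ≤ u (k + 1) := by
    intro k
    have h1 := hstep k
    have h2 := hGnn k
    linarith
  have hu_ge1 : ∀ k : ℕ, 1 ≤ u k := by
    intro k
    induction k with
    | zero => rw [hu0]
    | succ k ih => linarith [humono k]
  have hupos : ∀ k : ℕ, 0 < u k := fun k => lt_of_lt_of_le one_pos (hu_ge1 k)
  -- the even-part denominators are nonzero
  have hBne : ∀ k : ℕ, B (2 * k + 1) ≠ 0 := by
    intro k h
    have h1 := hupos k
    have h2 : u k = 0 := by
      simp [hudef, epcU, h]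
    linarith
  -- determinant formula
  have det : ∀ N : ℕ, A (N + 1) * B N - A N * B (N + 1) =
      -(-1) ^ N * ∏ i ∈ Finset.Icc 1 N, a i := by
    intro N
    induction N with
    | zero =>
      rw [Finset.Icc_eq_empty (by omega)]
      simp [hA0, hA1, hB0, hB1]
    | succ N ih =>
      have hA' := hArec (N + 1) (by omega)
      have hB' := hBrec (N + 1) (by omega)
      rw [show N + 1 - 1 = N by omega] at hA' hB'
      rw [Finset.prod_Icc_succ_top (by omega : 1 ≤ N + 1)]
      rw [hA', hB']
      linear_combination (-(a (N + 1))) * ih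
  have hnum : ∀ k : ℕ, A (2 * k + 3) * B (2 * k + 1) - A (2 * k + 1) * B (2 * k + 3) =
      ∏ i ∈ Finset.Icc 1 (2 * k + 1), a i := by
    intro k
    have hA' := hArec (2 * k + 2) (by omega)
    have hB' := hBrec (2 * k + 2) (by omega)
    rw [show 2 * k + 2 - 1 = 2 * k + 1 by omega] at hA' hB'
    rw [show 2 * k + 2 + 1 = 2 * k + 3 by omega] at hA' hB'
    have hd := det (2 * k + 1)
    rw [show 2 * k + 1 + 1 = 2 * k + 2 by omega] at hd
    have hpow : ((-1 : ℂ)) ^ (2 * k + 1) = -1 := Odd.neg_one_pow ⟨k, by ring⟩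
    rw [hpow] at hd
    rw [hA', hB']
    linear_combination hd
  -- the product identity
  have hEprod : ∀ k : ℕ, (∏ i ∈ Finset.Icc 1 (2 * k + 1), ‖a i‖) *
      (P (k + 1) * P k) = ‖a 1‖ * ρ 1 * G k := by
    intro k
    induction k with
    | zero =>
      rw [hG0]
      rw [show 2 * 0 + 1 = 1 by norm_num]
      rw [Finset.Icc_self, Finset.prod_singleton, hPsucc 0, hP0]
      ring
    | succ k ih =>
      rw [show 2 * (k + 1) + 1 = (2 * k + 2) + 1 by ring,
        Finset.prod_Icc_succ_top (by omega : 1 ≤ 2 * k + 2 + 1),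
        show (2 * k + 2 : ℕ) = (2 * k + 1) + 1 by ring,
        Finset.prod_Icc_succ_top (by omega : 1 ≤ 2 * k + 1 + 1)]
      rw [hGsucc k, hPsucc (k + 1)]
      have hq' : q k = ρ (k + 2) * ρ (k + 1) *
          (‖a (2 * k + 2)‖ * ‖a (2 * k + 3)‖) := by
        simp only [hqdef, epcQ, norm_mul, ← hρdef]
      rw [show k + 1 + 1 = k + 2 by ring, hPsucc k]
      rw [show (2 * k + 1 + 1 : ℕ) = 2 * k + 2 by ring,
        show (2 * k + 2 + 1 : ℕ) = 2 * k + 3 by ring]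
      rw [hq']
      rw [hPsucc k] at ih
      linear_combination (ρ (k + 2) * ρ (k + 1) *
        (‖a (2 * k + 2)‖ * ‖a (2 * k + 3)‖)) * ih
  -- the distance estimate
  set C := ‖a 1‖ * ρ 1 with hCdef
  have hCnn : 0 ≤ C := mul_nonneg (norm_nonneg _) (hρpos 1).le
  have hdist : ∀ k : ℕ, dist (A (2 * k + 3) / B (2 * k + 3)) (A (2 * k + 1) / B (2 * k + 1))
      ≤ C * (1 / u k - 1 / u (k + 1)) := by
    intro k
    have hb0 : B (2 * k + 1) ≠ 0 := hBne k
    have hb1 : B (2 * k + 3) ≠ 0 := by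
      have h := hBne (k + 1)
      rw [show 2 * (k + 1) + 1 = 2 * k + 3 by ring] at h
      exact h
    have hv0 : 0 < ‖B (2 * k + 1)‖ := norm_pos_iff.mpr hb0
    have hv1 : 0 < ‖B (2 * k + 3)‖ := norm_pos_iff.mpr hb1
    rw [Complex.dist_eq, div_sub_div _ _ hb1 hb0, norm_div, norm_mul]
    have hnum' : A (2 * k + 3) * B (2 * k + 1) - B (2 * k + 3) * A (2 * k + 1) =
        ∏ i ∈ Finset.Icc 1 (2 * k + 1), a i := by
      rw [← hnum k]; ring
    rw [hnum', norm_prod]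
    have hW := hEprod k
    have hX : (0:ℝ) < P (k + 1) * P k := mul_pos (hPpos (k + 1)) (hPpos k)
    have hWeq : (∏ i ∈ Finset.Icc 1 (2 * k + 1), ‖a i‖) =
        C * G k / (P (k + 1) * P k) := by
      rw [eq_div_iff hX.ne']
      exact hW
    have huu : u (k + 1) * u k =
        (P (k + 1) * P k) * (‖B (2 * k + 3)‖ * ‖B (2 * k + 1)‖) := by
      rw [huk k]
      simp only [hudef, epcU, ← hPdef]
      ring
    have h1 : (∏ i ∈ Finset.Icc 1 (2 * k + 1), ‖a i‖) /
        (‖B (2 * k + 3)‖ * ‖B (2 * k + 1)‖)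
        = C * G k / (u (k + 1) * u k) := by
      rw [hWeq, div_div, huu]
    rw [h1]
    have hupr : 0 < u (k + 1) * u k := mul_pos (hupos (k + 1)) (hupos k)
    have h2 : C * G k / (u (k + 1) * u k) ≤ C * (u (k + 1) - u k) / (u (k + 1) * u k) := by
      gcongr
      exact hstep k
    have h3 : C * (u (k + 1) - u k) / (u (k + 1) * u k) = C * (1 / u k - 1 / u (k + 1)) := by
      rw [div_sub_div _ _ (hupos k).ne' (hupos (k + 1)).ne', one_mul, mul_one,
        mul_div_assoc, mul_comm (u (k + 1)) (u k)]
    exact h2.trans_eq h3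
  -- summability and convergence
  have htel : Summable (fun k : ℕ => C * (1 / u k - 1 / u (k + 1))) := by
    apply Summable.mul_left
    apply summable_of_sum_range_le (c := 1 / u 0)
    · intro k
      have h := humono k
      have h1 := hupos k
      have h2 := hupos (k + 1)
      have h3 : 1 / u (k + 1) ≤ 1 / u k := one_div_le_one_div_of_le h1 h
      linarith
    · intro n
      rw [Finset.sum_range_sub' (fun k => 1 / u k)]
      have h4 : 0 ≤ 1 / u n := le_of_lt (one_div_pos.mpr (hupos n))
      linarith
  have hcauchy : CauchySeq (fun k : ℕ => A (2 * k + 1) / B (2 * k + 1)) := by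
    apply cauchySeq_of_summable_dist
    apply Summable.of_nonneg_of_le (fun k => dist_nonneg) _ htel
    intro k
    have h := hdist k
    rw [dist_comm] at h
    simp only [Nat.succ_eq_add_one]
    rw [show 2 * (k + 1) + 1 = 2 * k + 3 by ring]
    exact h
  obtain ⟨L, hL⟩ := cauchySeq_tendsto_of_complete hcauchy
  refine ⟨?_, ?_, L, hL⟩
  · intro h
    rw [h] at hKb1
    simp only [norm_zero] at hKb1
    have hE1 := hE 1 (by omega)
    rw [show 2 * 1 = 2 by ring] at hE1
    linarith
  · intro n hn h
    have hk := hKb n hn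
    rw [h, norm_zero] at hk
    have hEn := hE (n + 1) (by omega)
    rw [show 2 * (n + 1) = 2 * n + 2 by ring] at hEn
    linarith
end

section
/- Under the hypotheses of the main theorem, the odd part of K_{n=1}^∞ a_n/1 converges to a finite value; in particular |a₃ + 1 + a₂| > 0 and all subsequent denominators a_{2n+1}+1+a_{2n} of the odd part are nonzero. -/
open Filter Topology

/-- `D n = |a_{2n+1} + 1 + a_{2n}|`, the modulus of the `n`-th denominator of the odd part. -/
noncomputable def cfD (a : ℕ → ℂ) (n : ℕ) : ℝ := ‖a (2*n+1) + 1 + a (2*n)‖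

/-- normalizing product -/
noncomputable def cfPd (a : ℕ → ℂ) (n : ℕ) : ℝ := ∏ j ∈ Finset.Icc 1 n, (cfD a j / 2)

/-- product of the moduli of the first `2n` partial numerators -/
noncomputable def cfpa (a : ℕ → ℂ) (n : ℕ) : ℝ := ∏ i ∈ Finset.Icc 1 (2*n), ‖a i‖

/-- modulus of the `n`-th odd canonical denominator -/
noncomputable def cfq (B : ℕ → ℂ) (n : ℕ) : ℝ := ‖B (2*n+2)‖

/-- normalized odd canonical denominator -/
noncomputable def cfu (a B : ℕ → ℂ) (n : ℕ) : ℝ := cfq B n / cfPd a n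

/-- the constant in the telescoping estimate -/
noncomputable def cfC (a : ℕ → ℂ) : ℝ := 2 * cfpa a 1 / cfD a 1

set_option maxHeartbeats 1000000 in
/-- Under the hypotheses of the main theorem, the odd part of K a_n/1 converges;
in particular all its denominators are nonzero.
Indexing: `A (N+1)` is the `N`-th canonical numerator (so `A 0 = A_{-1} = 1`). -/
theorem odd_part_converges (a : ℕ → ℂ) (c β : ℕ → ℝ)
    (ha : ∀ n : ℕ, 1 ≤ n → a n ≠ 0)
    (hc : ∀ n : ℕ, 1 ≤ n → 0 < c n)
    (hβ : ∀ n : ℕ, 1 ≤ n → 0 < β n ∧ β n < 1)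
    (heven : ∀ n : ℕ, 1 ≤ n → (c n + 1) / (1 - β n) ≤ ‖a (2 * n)‖)
    (hodd : ∀ n : ℕ, 1 ≤ n →
      ‖a (2 * n + 1)‖ ≤
        min (min (c n) (c (n + 1)))
          (min (β n * β (n + 1) * (c (n + 1) + 1) / (4 * (1 - β (n + 1))))
               (β n * β (n + 1) * (c n + 1) / (4 * (1 - β n)))))
    (A B : ℕ → ℂ)
    (hA0 : A 0 = 1) (hA1 : A 1 = 0) (hB0 : B 0 = 0) (hB1 : B 1 = 1)
    (hArec : ∀ N : ℕ, 1 ≤ N → A (N + 1) = A N + a N * A (N - 1))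
    (hBrec : ∀ N : ℕ, 1 ≤ N → B (N + 1) = B N + a N * B (N - 1)) :
    (0 < ‖a 3 + 1 + a 2‖) ∧
      (∀ n : ℕ, 1 ≤ n → a (2 * n + 1) + 1 + a (2 * n) ≠ 0) ∧
      ∃ L : ℂ, Tendsto (fun k : ℕ => A (2 * k + 2) / B (2 * k + 2)) atTop (𝓝 L) := by
  have hβpos : ∀ n, 1 ≤ n → 0 < β n := fun n hn => (hβ n hn).1
  have hβlt : ∀ n, 1 ≤ n → β n < 1 := fun n hn => (hβ n hn).2
  have hapos : ∀ i, 1 ≤ i → 0 < ‖a i‖ := fun i hi => norm_pos_iff.mpr (ha i hi)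
  -- heven in expanded form
  have heven' : ∀ n, 1 ≤ n →
      c n + 1 ≤ ‖a (2*n)‖ - β n * ‖a (2*n)‖ := by
    intro n hn
    have h1 : 0 < 1 - β n := by linarith [hβlt n hn]
    have h2 := (div_le_iff₀ h1).mp (heven n hn)
    nlinarith
  -- lower bound on the denominators
  have hD : ∀ n, 1 ≤ n → β n * ‖a (2*n)‖ ≤ cfD a n := by
    intro n hn
    have h1 : ‖a (2*n)‖ ≤ cfD a n + (‖a (2*n+1)‖ + 1) := by
      have step1 : ‖a (2*n)‖ ≤ cfD a n + ‖a (2*n+1) + 1‖ := by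
        calc ‖a (2*n)‖
            = ‖(a (2*n+1) + 1 + a (2*n)) + (-(a (2*n+1) + 1))‖ := by
              congr 1; ring
          _ ≤ ‖a (2*n+1) + 1 + a (2*n)‖ + ‖-(a (2*n+1) + 1)‖ :=
              norm_add_le _ _
          _ = cfD a n + ‖a (2*n+1) + 1‖ := by rw [norm_neg]; rfl
      have step2 : ‖a (2*n+1) + 1‖ ≤ ‖a (2*n+1)‖ + 1 := by
        have := norm_add_le (a (2*n+1)) 1
        simpa using this
      linarith
    have h2 : ‖a (2*n+1)‖ ≤ c n :=
      le_trans (hodd n hn) (le_trans (min_le_left _ _) (min_le_left _ _))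
    have h3 := heven' n hn
    linarith
  have hDpos : ∀ n, 1 ≤ n → 0 < cfD a n := by
    intro n hn
    have h0 := hD n hn
    have h1 : 0 < β n * ‖a (2*n)‖ :=
      mul_pos (hβpos n hn) (hapos (2*n) (by omega))
    linarith
  have hPdpos : ∀ n, 0 < cfPd a n := by
    intro n
    apply Finset.prod_pos
    intro j hj
    have hj1 : 1 ≤ j := (Finset.mem_Icc.mp hj).1
    have := hDpos j hj1
    linarith
  have hpapos : ∀ n, 0 < cfpa a n := by
    intro n; apply Finset.prod_pos; intro i hi
    exact hapos i (Finset.mem_Icc.mp hi).1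
  -- 4 |a_{2n+1}| ≤ βₙ β_{n+1} |a_{2n}|
  have h4X : ∀ n, 1 ≤ n →
      4 * ‖a (2*n+1)‖ ≤ β n * β (n+1) * ‖a (2*n)‖ := by
    intro n hn
    have e1 : ‖a (2*n+1)‖ ≤ β n * β (n+1) * (c n + 1) / (4 * (1 - β n)) :=
      le_trans (hodd n hn) (le_trans (min_le_right _ _) (min_le_right _ _))
    have h1 : 0 < 1 - β n := by linarith [hβlt n hn]
    have h2 := (le_div_iff₀ (by linarith : (0:ℝ) < 4 * (1 - β n))).mp e1
    have h3 := heven' n hn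
    have hb1 : 0 < β n := hβpos n hn
    have hb2 : 0 < β (n+1) := hβpos (n+1) (by omega)
    nlinarith [mul_le_mul_of_nonneg_left h3 (le_of_lt (mul_pos hb1 hb2))]
  -- key product bound: 4 |a_{2n+1}| |a_{2n+2}| ≤ Dₙ D_{n+1}
  have hbb : ∀ n, 1 ≤ n →
      4 * (‖a (2*n+1)‖ * ‖a (2*n+2)‖) ≤ cfD a n * cfD a (n+1) := by
    intro n hn
    have h1 := h4X n hn
    have hDn := hD n hn
    have hDn1 := hD (n+1) (by omega)
    rw [show 2*(n+1) = 2*n+2 from by ring] at hDn1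
    have hA' : (0:ℝ) ≤ ‖a (2*n)‖ := norm_nonneg _
    have hBv : (0:ℝ) ≤ ‖a (2*n+2)‖ := norm_nonneg _
    have hDnn : (0:ℝ) ≤ cfD a n := le_of_lt (hDpos n hn)
    have hb2 : 0 < β (n+1) := hβpos (n+1) (by omega)
    nlinarith [mul_le_mul_of_nonneg_right h1 hBv,
      mul_le_mul_of_nonneg_right hDn (mul_nonneg (le_of_lt hb2) hBv),
      mul_le_mul_of_nonneg_left hDn1 hDnn]
  -- small canonical denominators
  have hB2 : B 2 = 1 := by
    have h := hBrec 1 le_rfl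
    norm_num [hB0, hB1] at h
    exact h
  have hB4 : B 4 = a 3 + 1 + a 2 := by
    have h2 := hBrec 2 (by omega)
    have h3 := hBrec 3 (by omega)
    norm_num at h2 h3
    rw [h3, h2, hB1, hB2]; ring
  -- three-term recurrence for odd canonical denominators
  have hQrec : ∀ n : ℕ, B (2*n+6) =
      (a (2*n+5) + 1 + a (2*n+4)) * B (2*n+4) - a (2*n+3) * a (2*n+4) * B (2*n+2) := by
    intro n
    have h1 := hBrec (2*n+5) (by omega)
    have h2 := hBrec (2*n+4) (by omega)
    have h3 := hBrec (2*n+3) (by omega)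
    rw [show 2*n+5-1 = 2*n+4 from by omega, show 2*n+5+1 = 2*n+6 from by omega] at h1
    rw [show 2*n+4-1 = 2*n+3 from by omega, show 2*n+4+1 = 2*n+5 from by omega] at h2
    rw [show 2*n+3-1 = 2*n+2 from by omega, show 2*n+3+1 = 2*n+4 from by omega] at h3
    rw [h1, h2, h3]; ring
  -- determinant formula
  have hE : ∀ N : ℕ, A (N+1) * B N - A N * B (N+1) =
      (-1:ℂ)^(N+1) * ∏ i ∈ Finset.Icc 1 N, a i := by
    intro N
    induction N with
    | zero =>
      rw [show Finset.Icc 1 0 = (∅ : Finset ℕ) from rfl]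
      simp [hA0, hA1, hB0, hB1]
    | succ n ih =>
      have h1 := hArec (n+1) (by omega)
      have h2 := hBrec (n+1) (by omega)
      rw [show n+1-1 = n from by omega] at h1 h2
      rw [Finset.prod_Icc_succ_top (by omega : 1 ≤ n+1), h1, h2]
      linear_combination (-(a (n+1))) * ih
  -- product recursions
  have hPd_succ : ∀ n : ℕ, cfPd a (n+1) = cfPd a n * (cfD a (n+1) / 2) := by
    intro n
    exact Finset.prod_Icc_succ_top (by omega : 1 ≤ n+1) _
  have hpa_succ : ∀ n : ℕ, cfpa a (n+1) =
      cfpa a n * (‖a (2*n+1)‖ * ‖a (2*n+2)‖) := by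
    intro n
    calc cfpa a (n+1)
        = (∏ i ∈ Finset.Icc 1 (2*n+1), ‖a i‖) * ‖a (2*n+2)‖ := by
          unfold cfpa
          rw [show 2*(n+1) = (2*n+1)+1 from by ring]
          exact Finset.prod_Icc_succ_top (by omega) _
      _ = (cfpa a n * ‖a (2*n+1)‖) * ‖a (2*n+2)‖ := by
          congr 1
          exact Finset.prod_Icc_succ_top (by omega) _
      _ = cfpa a n * (‖a (2*n+1)‖ * ‖a (2*n+2)‖) := by ring
  -- small values
  have hPd0 : cfPd a 0 = 1 := by
    unfold cfPd
    rw [show Finset.Icc 1 0 = (∅ : Finset ℕ) from rfl]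
    simp
  have hD1pos : 0 < cfD a 1 := hDpos 1 le_rfl
  have hPd1 : cfPd a 1 = cfD a 1 / 2 := by
    have h := hPd_succ 0; rw [hPd0, one_mul] at h; exact h
  have hq0' : cfq B 0 = 1 := by
    unfold cfq; norm_num [hB2]
  have hq1' : cfq B 1 = cfD a 1 := by
    unfold cfq cfD; norm_num [hB4]
  have hCpos : 0 < cfC a := by
    unfold cfC
    exact div_pos (by linarith [hpapos 1]) hD1pos
  have hu0 : cfu a B 0 = 1 := by unfold cfu; rw [hq0', hPd0]; norm_num
  have hu1 : cfu a B 1 = 2 := by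
    unfold cfu; rw [hq1', hPd1]
    have h1 : cfD a 1 ≠ 0 := ne_of_gt hD1pos
    field_simp
  -- the key induction
  have hKey : ∀ n : ℕ, cfu a B n + cfpa a (n+1) / (cfC a * cfPd a (n+1) * cfPd a n)
      ≤ cfu a B (n+1) := by
    intro n
    induction n with
    | zero =>
      have hT : cfpa a 1 / (cfC a * cfPd a 1 * cfPd a 0) = 1 := by
        rw [hPd0, hPd1]
        unfold cfC
        have h1 : cfD a 1 ≠ 0 := ne_of_gt hD1pos
        have h2 : cfpa a 1 ≠ 0 := ne_of_gt (hpapos 1)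
        field_simp
      rw [hu0, hu1, hT]; norm_num
    | succ n ih =>
      have hp0 := hPdpos n
      have hp1 := hPdpos (n+1)
      have hp2 := hPdpos (n+2)
      have hD1' := hDpos (n+1) (by omega)
      have hD2' := hDpos (n+2) (by omega)
      have hD1ne : cfD a (n+1) ≠ 0 := ne_of_gt hD1'
      have hD2ne : cfD a (n+2) ≠ 0 := ne_of_gt hD2'
      have hpne : cfPd a n ≠ 0 := ne_of_gt hp0
      have hCne : cfC a ≠ 0 := ne_of_gt hCpos
      -- recurrence bound on moduli
      have hqrec : cfD a (n+2) * cfq B (n+1)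
          - (‖a (2*n+3)‖ * ‖a (2*n+4)‖) * cfq B n ≤ cfq B (n+2) := by
        have h := hQrec n
        have h1 : ‖(a (2*n+5) + 1 + a (2*n+4)) * B (2*n+4)‖ ≤
            ‖B (2*n+6)‖ + ‖a (2*n+3) * a (2*n+4) * B (2*n+2)‖ := by
          calc ‖(a (2*n+5) + 1 + a (2*n+4)) * B (2*n+4)‖
              = ‖B (2*n+6) + a (2*n+3) * a (2*n+4) * B (2*n+2)‖ := by
                congr 1; rw [h]; ring
            _ ≤ _ := norm_add_le _ _
        rw [norm_mul] at h1
        rw [norm_mul, norm_mul] at h1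
        unfold cfq cfD
        rw [show 2*(n+2)+2 = 2*n+6 from by ring, show 2*(n+2)+1 = 2*n+5 from by ring,
            show 2*(n+1)+2 = 2*n+4 from by ring, show 2*(n+2) = 2*n+4 from by ring]
        linarith
      have hbbn : 4 * (‖a (2*n+3)‖ * ‖a (2*n+4)‖)
          ≤ cfD a (n+1) * cfD a (n+2) := by
        have h := hbb (n+1) (by omega)
        rwa [show 2*(n+1)+1 = 2*n+3 from by ring, show 2*(n+1)+2 = 2*n+4 from by ring] at h
      set m : ℝ := ‖a (2*n+3)‖ * ‖a (2*n+4)‖ with hm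
      have hm0 : 0 ≤ m := mul_nonneg (norm_nonneg _) (norm_nonneg _)
      set t : ℝ := 4 * m / (cfD a (n+1) * cfD a (n+2)) with ht
      have ht0 : 0 ≤ t := div_nonneg (by linarith) (le_of_lt (mul_pos hD1' hD2'))
      have ht1 : t ≤ 1 := by
        rw [ht, div_le_one (mul_pos hD1' hD2')]
        linarith
      have ePd2 : cfPd a (n+2) = cfPd a (n+1) * (cfD a (n+2) / 2) := hPd_succ (n+1)
      have ePd1 : cfPd a (n+1) = cfPd a n * (cfD a (n+1) / 2) := hPd_succ n
      have epa : cfpa a (n+2) = cfpa a (n+1) * m := by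
        have h := hpa_succ (n+1)
        rwa [show 2*(n+1)+1 = 2*n+3 from by ring, show 2*(n+1)+2 = 2*n+4 from by ring] at h
      -- normalized recurrence
      have hu2 : 2 * cfu a B (n+1) - t * cfu a B n ≤ cfu a B (n+2) := by
        have h1 : (cfD a (n+2) * cfq B (n+1) - m * cfq B n) / cfPd a (n+2)
            ≤ cfu a B (n+2) := by
          unfold cfu
          exact (div_le_div_iff_of_pos_right hp2).mpr hqrec
        have h2 : (cfD a (n+2) * cfq B (n+1) - m * cfq B n) / cfPd a (n+2)
            = 2 * cfu a B (n+1) - t * cfu a B n := by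
          unfold cfu
          rw [ePd2, ePd1, ht]
          field_simp
          ring
        rw [h2] at h1
        exact h1
      -- the new telescoping term equals t times the old one
      have hTgt : cfpa a (n+2) / (cfC a * cfPd a (n+2) * cfPd a (n+1))
          = t * (cfpa a (n+1) / (cfC a * cfPd a (n+1) * cfPd a n)) := by
        rw [epa, ePd2, ePd1, ht]
        field_simp
        ring
      have hun0 : 0 ≤ cfu a B n := by
        unfold cfu
        exact div_nonneg (norm_nonneg _) (le_of_lt hp0)
      have hP'0 : 0 ≤ cfpa a (n+1) / (cfC a * cfPd a (n+1) * cfPd a n) :=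
        le_of_lt (div_pos (hpapos (n+1)) (mul_pos (mul_pos hCpos hp1) hp0))
      rw [hTgt]
      nlinarith [mul_nonneg (by linarith : (0:ℝ) ≤ 1 - t) hun0,
        mul_nonneg (by linarith : (0:ℝ) ≤ 1 - t) hP'0, ih, hu2]
  -- consequences of the key induction
  have humono : ∀ n, cfu a B n ≤ cfu a B (n+1) := by
    intro n
    have h := hKey n
    have h0 : 0 ≤ cfpa a (n+1) / (cfC a * cfPd a (n+1) * cfPd a n) :=
      le_of_lt (div_pos (hpapos (n+1)) (mul_pos (mul_pos hCpos (hPdpos (n+1))) (hPdpos n)))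
    linarith
  have hu_ge : ∀ n, 1 ≤ cfu a B n := by
    intro n; induction n with
    | zero => rw [hu0]
    | succ k ih => linarith [humono k]
  have huposn : ∀ n, 0 < cfu a B n := fun n => lt_of_lt_of_le zero_lt_one (hu_ge n)
  have hq_eq : ∀ n : ℕ, cfq B n = cfu a B n * cfPd a n := by
    intro n
    have h : cfu a B n * cfPd a n = cfq B n := div_mul_cancel₀ _ (ne_of_gt (hPdpos n))
    exact h.symm
  have hqpos : ∀ n, 0 < cfq B n := by
    intro n
    rw [hq_eq n]
    exact mul_pos (huposn n) (hPdpos n)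
  have hBne : ∀ n : ℕ, B (2*n+2) ≠ 0 := by
    intro n h
    have h2 := hqpos n
    unfold cfq at h2
    rw [h] at h2
    simp at h2
  -- distance between consecutive odd approximants
  have hdist : ∀ n : ℕ, dist (A (2*(n+1)+2) / B (2*(n+1)+2)) (A (2*n+2) / B (2*n+2))
      = cfpa a (n+1) / (cfq B (n+1) * cfq B n) := by
    intro n
    have hb1 : B (2*n+4) ≠ 0 := by
      have := hBne (n+1)
      rwa [show 2*(n+1)+2 = 2*n+4 from by ring] at this
    have hb0 : B (2*n+2) ≠ 0 := hBne n
    rw [show 2*(n+1)+2 = 2*n+4 from by ring]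
    rw [Complex.dist_eq, div_sub_div _ _ hb1 hb0]
    have hnum : A (2*n+4) * B (2*n+2) - B (2*n+4) * A (2*n+2)
        = (-1:ℂ)^(2*n+3) * ∏ i ∈ Finset.Icc 1 (2*n+2), a i := by
      have h1 := hArec (2*n+3) (by omega)
      have h2 := hBrec (2*n+3) (by omega)
      rw [show 2*n+3-1 = 2*n+2 from by omega, show 2*n+3+1 = 2*n+4 from by omega] at h1 h2
      have hE' : A (2*n+3) * B (2*n+2) - A (2*n+2) * B (2*n+3)
          = (-1:ℂ)^(2*n+3) * ∏ i ∈ Finset.Icc 1 (2*n+2), a i := by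
        have h := hE (2*n+2)
        rwa [show 2*n+2+1 = 2*n+3 from by omega] at h
      rw [h1, h2]
      linear_combination hE'
    rw [hnum, norm_div, norm_mul, norm_mul, norm_pow]
    have habs1 : ‖(-1:ℂ)‖ = 1 := by simp
    rw [habs1, one_pow, one_mul]
    rw [norm_prod]
    unfold cfpa cfq
    rw [show 2*(n+1)+2 = 2*n+4 from by ring, show 2*(n+1) = 2*n+2 from by ring]
  -- the telescoping bound
  have hbound : ∀ n : ℕ, dist (A (2*n+2) / B (2*n+2)) (A (2*(n+1)+2) / B (2*(n+1)+2))
      ≤ cfC a * (cfu a B n)⁻¹ - cfC a * (cfu a B (n+1))⁻¹ := by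
    intro n
    rw [dist_comm, hdist n]
    have hx := huposn n
    have hy := huposn (n+1)
    have hxne : cfu a B n ≠ 0 := ne_of_gt hx
    have hyne : cfu a B (n+1) ≠ 0 := ne_of_gt hy
    have hkey := hKey n
    have h3 : 0 < cfC a * cfPd a (n+1) * cfPd a n :=
      mul_pos (mul_pos hCpos (hPdpos (n+1))) (hPdpos n)
    have h1 : cfpa a (n+1) ≤ cfC a * (cfu a B (n+1) - cfu a B n) * (cfPd a (n+1) * cfPd a n) := by
      have h2 : cfpa a (n+1) / (cfC a * cfPd a (n+1) * cfPd a n)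
          ≤ cfu a B (n+1) - cfu a B n := by linarith
      calc cfpa a (n+1)
          = (cfpa a (n+1) / (cfC a * cfPd a (n+1) * cfPd a n))
              * (cfC a * cfPd a (n+1) * cfPd a n) :=
            (div_mul_cancel₀ _ (ne_of_gt h3)).symm
        _ ≤ (cfu a B (n+1) - cfu a B n) * (cfC a * cfPd a (n+1) * cfPd a n) :=
            mul_le_mul_of_nonneg_right h2 (le_of_lt h3)
        _ = cfC a * (cfu a B (n+1) - cfu a B n) * (cfPd a (n+1) * cfPd a n) := by ring
    have habs : ∀ Cv x y : ℝ, x ≠ 0 → y ≠ 0 →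
        Cv * x⁻¹ - Cv * y⁻¹ = Cv * (y - x) / (x * y) := by
      intro Cv x y hx0 hy0
      field_simp
    have hCineq : cfC a * (cfu a B n)⁻¹ - cfC a * (cfu a B (n+1))⁻¹
        = cfC a * (cfu a B (n+1) - cfu a B n) / (cfu a B n * cfu a B (n+1)) :=
      habs _ _ _ hxne hyne
    rw [hCineq, div_le_div_iff₀ (mul_pos (hqpos (n+1)) (hqpos n)) (mul_pos hx hy),
        hq_eq (n+1), hq_eq n]
    nlinarith [mul_le_mul_of_nonneg_right h1 (le_of_lt (mul_pos hx hy))]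
  -- summability and convergence
  have hsum : Summable (fun n : ℕ =>
      dist (A (2*n+2) / B (2*n+2)) (A (2*(n+1)+2) / B (2*(n+1)+2))) := by
    apply summable_of_sum_range_le (c := cfC a * (cfu a B 0)⁻¹) (fun n => dist_nonneg)
    intro N
    calc ∑ i ∈ Finset.range N, dist (A (2*i+2) / B (2*i+2)) (A (2*(i+1)+2) / B (2*(i+1)+2))
        ≤ ∑ i ∈ Finset.range N, (cfC a * (cfu a B i)⁻¹ - cfC a * (cfu a B (i+1))⁻¹) :=
          Finset.sum_le_sum (fun i _ => hbound i)
      _ = cfC a * (cfu a B 0)⁻¹ - cfC a * (cfu a B N)⁻¹ :=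
          Finset.sum_range_sub' (fun i => cfC a * (cfu a B i)⁻¹) N
      _ ≤ cfC a * (cfu a B 0)⁻¹ := by
          have h0 : 0 ≤ cfC a * (cfu a B N)⁻¹ :=
            mul_nonneg (le_of_lt hCpos) (inv_nonneg.mpr (le_of_lt (huposn N)))
          linarith
  have hcauchy : CauchySeq (fun k : ℕ => A (2*k+2) / B (2*k+2)) :=
    cauchySeq_of_summable_dist hsum
  obtain ⟨L, hL⟩ := cauchySeq_tendsto_of_complete hcauchy
  refine ⟨?_, ?_, L, hL⟩
  · have h := hDpos 1 le_rfl
    unfold cfD at h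
    norm_num at h
    exact norm_pos_iff.mpr h
  · intro n hn hzero
    have h := hDpos n hn
    unfold cfD at h
    rw [hzero] at h
    simp at h
end
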